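/- arXiv:1010.5348 — 6 statements merged into one kernel-verified Lean document; each statement's English description precedes it below -/
import Mathlib

section
/- Let R be a balanced block upper triangular nonnegative matrix in increasing order (conditions (1)–(3) of the increasing-order definition), with blocks Q_{kl}, leading block indices i_1 < ... < i_{J+1} and leading characters λ_j = μ_{i_j}. Define matrices W_k by W_{i_j} = I for leading blocks, and W_k = ∑_{m=i_j}^{k-1} W_m Q_{mk} (λ_j I − Q_k)^{-1} for non-leading blocks with i_j < k < i_{j+1}. Then for any row vector π with all coordinates strictly positive (of the dimension of the leading block of the cluster containing k), the vector π W_k has all coordinates strictly positive. -/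
open Matrix Finset

section Auxiliary

open Filter
open scoped ENNReal NNReal


section Decay

attribute [local instance] Matrix.linftyOpNormedRing Matrix.linftyOpNormedAlgebra

variable {S : Type*} [Fintype S] [DecidableEq S]

lemma entry_norm_le (B : Matrix S S ℂ) (i j : S) : ‖B i j‖ ≤ ‖B‖ := by
  have h1 : ‖B i j‖₊ ≤ ∑ j' : S, ‖B i j'‖₊ :=
    Finset.single_le_sum (f := fun j' => ‖B i j'‖₊) (fun _ _ => zero_le) (mem_univ j)
  have h2 : (∑ j' : S, ‖B i j'‖₊) ≤ ‖B‖₊ := by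
    rw [Matrix.linfty_opNNNorm_def]
    exact Finset.le_sup (f := fun i => ∑ j' : S, ‖B i j'‖₊) (mem_univ i)
  exact_mod_cast h1.trans h2

lemma pow_entry_nonneg (Q : Matrix S S ℝ) (hQ : ∀ i j, 0 ≤ Q i j) :
    ∀ m (i j : S), 0 ≤ (Q ^ m) i j := by
  intro m
  induction m with
  | zero => intro i j; rw [pow_zero, Matrix.one_apply]; split <;> norm_num
  | succ m ih =>
    intro i j
    rw [pow_succ, Matrix.mul_apply]
    exact Finset.sum_nonneg fun l _ => mul_nonneg (ih i l) (hQ l j)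

lemma pow_decay (Q : Matrix S S ℝ) (hQ : ∀ i j, 0 ≤ Q i j) (μ lam : ℝ) (hμ : 0 ≤ μ)
    (hml : μ < lam)
    (hspec : ∀ z ∈ spectrum ℂ (Q.map (Complex.ofReal ·)), ‖z‖ ≤ μ)
    (i j : S) :
    Tendsto (fun m : ℕ => (Q ^ m) i j / lam ^ m) atTop (nhds 0) := by
  haveI : CompleteSpace (Matrix S S ℂ) := FiniteDimensional.complete ℂ _
  set A : Matrix S S ℂ := Q.map (Complex.ofReal ·) with hA
  set c : ℝ := (μ + lam) / 2 with hc
  have hc0 : 0 < c := by rw [hc]; linarith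
  have hμc : μ < c := by simp [hc]; linarith
  have hclam : c < lam := by simp [hc]; linarith
  have hsr : spectralRadius ℂ A < ENNReal.ofReal c := by
    have h1 : spectralRadius ℂ A ≤ ENNReal.ofReal μ := by
      apply iSup₂_le
      intro z hz
      have := hspec z hz
      rw [← enorm_eq_nnnorm, ← ofReal_norm]
      exact ENNReal.ofReal_le_ofReal this
    exact h1.trans_lt (ENNReal.ofReal_lt_ofReal_iff hc0 |>.mpr hμc)
  have gel := spectrum.pow_nnnorm_pow_one_div_tendsto_nhds_spectralRadius A
  have hev : ∀ᶠ m : ℕ in atTop, (‖A ^ m‖₊ : ℝ≥0∞) ^ (1 / (m : ℝ)) < ENNReal.ofReal c :=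
    gel.eventually_lt_const hsr
  have hlam0' : 0 < lam := lt_of_le_of_lt hμ hml
  have hev2 : ∀ᶠ m : ℕ in atTop, (Q ^ m) i j / lam ^ m ≤ (c / lam) ^ m := by
    filter_upwards [hev, eventually_ge_atTop 1] with m hm hm1
    have hlam0 : 0 < lam := lt_of_le_of_lt hμ hml
    have hAm : A ^ m = (Q ^ m).map (Complex.ofReal ·) := by
      have h := map_pow (RingHom.mapMatrix (m := S) Complex.ofRealHom) Q m
      exact h.symm
    have hnorm : ‖A ^ m‖ ≤ c ^ m := by
      have hm0 : (m : ℝ) ≠ 0 := Nat.cast_ne_zero.mpr (by omega)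
      have h2 : (‖A ^ m‖₊ : ℝ≥0∞) ≤ (ENNReal.ofReal c) ^ m := by
        calc (‖A ^ m‖₊ : ℝ≥0∞) = ((‖A ^ m‖₊ : ℝ≥0∞) ^ (1 / (m : ℝ))) ^ (m : ℝ) := by
              rw [← ENNReal.rpow_mul, one_div_mul_cancel hm0, ENNReal.rpow_one]
          _ ≤ (ENNReal.ofReal c) ^ (m : ℝ) := ENNReal.rpow_le_rpow hm.le (by positivity)
          _ = (ENNReal.ofReal c) ^ m := ENNReal.rpow_natCast _ m
      rw [← ENNReal.ofReal_pow hc0.le, ← enorm_eq_nnnorm, ← ofReal_norm] at h2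
      exact (ENNReal.ofReal_le_ofReal_iff (by positivity)).mp h2
    have hent : (Q ^ m) i j ≤ c ^ m := by
      have := entry_norm_le (A ^ m) i j
      rw [hAm] at this
      simp only [Matrix.map_apply, Complex.norm_real, Real.norm_eq_abs] at this
      calc (Q ^ m) i j ≤ |(Q ^ m) i j| := le_abs_self _
        _ ≤ ‖A ^ m‖ := by rw [hAm]; exact this
        _ ≤ c ^ m := hnorm
    rw [div_pow]
    exact (div_le_div_iff_of_pos_right (pow_pos hlam0 m)).mpr hent
  have hge : ∀ m : ℕ, (0:ℝ) ≤ (Q ^ m) i j / lam ^ m := fun m =>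
    div_nonneg (pow_entry_nonneg Q hQ m i j) (pow_pos hlam0' m).le
  have hgeo : Tendsto (fun m : ℕ => (c / lam) ^ m) atTop (nhds 0) :=
    tendsto_pow_atTop_nhds_zero_of_lt_one (div_nonneg hc0.le hlam0'.le)
      ((div_lt_one hlam0').mpr hclam)
  exact tendsto_of_tendsto_of_tendsto_of_le_of_le' tendsto_const_nhds hgeo
    (Filter.Eventually.of_forall hge) hev2

end Decay

lemma key_pos {S : Type*} [Fintype S] [DecidableEq S] (Q : Matrix S S ℝ)
    (hQ : ∀ i j, 0 ≤ Q i j) (μ lam : ℝ) (hμ : 0 ≤ μ) (hml : μ < lam)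
    (hspec : ∀ z ∈ spectrum ℂ (Q.map (Complex.ofReal ·)), ‖z‖ ≤ μ)
    (hirr : ∀ x y : S, ∃ m : ℕ, 0 < m ∧ 0 < (Q ^ m) x y)
    (v u : S → ℝ) (hu : ∀ i, 0 ≤ u i) (j₀ : S) (hj₀ : 0 < u j₀)
    (heq : ∀ i, lam * v i = (v ᵥ* Q) i + u i) : ∀ i, 0 < v i := by
  have hlam : 0 < lam := lt_of_le_of_lt hμ hml
  have hP : ∀ (m : ℕ) (i : S), (v ᵥ* Q ^ m) i ≤ lam ^ m * v i := by
    intro m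
    induction m with
    | zero => intro i; simp [Matrix.vecMul_one]
    | succ m ih =>
      intro i
      have h1 : (v ᵥ* Q ^ (m + 1)) i = ∑ l, (v ᵥ* Q ^ m) l * Q l i := by
        rw [pow_succ, ← Matrix.vecMul_vecMul, Matrix.vecMul, dotProduct]
      rw [h1]
      have h2 : ∑ l, (v ᵥ* Q ^ m) l * Q l i ≤ ∑ l, (lam ^ m * v l) * Q l i :=
        Finset.sum_le_sum fun l _ => mul_le_mul_of_nonneg_right (ih l) (hQ l i)
      have h3 : ∑ l, (lam ^ m * v l) * Q l i = lam ^ m * (v ᵥ* Q) i := by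
        rw [Matrix.vecMul, dotProduct, Finset.mul_sum]
        exact Finset.sum_congr rfl fun l _ => by ring
      have h4 : lam ^ m * (v ᵥ* Q) i ≤ lam ^ (m + 1) * v i := by
        have := heq i
        have hui := hu i
        have hpm : (0:ℝ) ≤ lam ^ m := (pow_pos hlam m).le
        calc lam ^ m * (v ᵥ* Q) i = lam ^ m * (lam * v i - u i) := by rw [this]; ring
          _ ≤ lam ^ m * (lam * v i) := by nlinarith
          _ = lam ^ (m + 1) * v i := by ring
      linarith
  have hv0 : ∀ i, 0 ≤ v i := by
    intro i
    have h1 : Tendsto (fun m : ℕ => (v ᵥ* Q ^ m) i / lam ^ m) atTop (nhds 0) := by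
      have hfe : (fun m : ℕ => (v ᵥ* Q ^ m) i / lam ^ m)
          = fun m : ℕ => ∑ l, v l * ((Q ^ m) l i / lam ^ m) := by
        funext m
        rw [Matrix.vecMul, dotProduct, Finset.sum_div]
        exact Finset.sum_congr rfl fun l _ => by ring
      rw [hfe]
      have : Tendsto (fun m : ℕ => ∑ l, v l * ((Q ^ m) l i / lam ^ m)) atTop
          (nhds (∑ l : S, v l * 0)) :=
        tendsto_finset_sum _ fun l _ => (pow_decay Q hQ μ lam hμ hml hspec l i).const_mul _
      simpa using this
    have h2 : ∀ m : ℕ, (v ᵥ* Q ^ m) i / lam ^ m ≤ v i := fun m =>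
      (div_le_iff₀ (pow_pos hlam m)).mpr (by linarith [hP m i])
    exact le_of_tendsto' h1 h2
  have hvj₀ : 0 < v j₀ := by
    have h := heq j₀
    have hge : 0 ≤ (v ᵥ* Q) j₀ := by
      rw [Matrix.vecMul, dotProduct]
      exact Finset.sum_nonneg fun l _ => mul_nonneg (hv0 l) (hQ l j₀)
    nlinarith
  intro i
  obtain ⟨m, hm, hQm⟩ := hirr j₀ i
  have h1 : v j₀ * (Q ^ m) j₀ i ≤ (v ᵥ* Q ^ m) i := by
    rw [Matrix.vecMul, dotProduct]
    exact Finset.single_le_sum (f := fun l => v l * (Q ^ m) l i)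
      (fun l _ => mul_nonneg (hv0 l) (pow_entry_nonneg Q hQ m l i)) (mem_univ j₀)
  have h2 := hP m i
  nlinarith [pow_pos hlam m, mul_pos hvj₀ hQm]

end Auxiliary


/-- For a balanced nonnegative block upper triangular replacement matrix in increasing
order, with the matrices `W_k` defined recursively (`W_{i_j} = I` on leading blocks and
`W_k = ∑_{m=i_j}^{k-1} W_m Q_{mk} (λ_j I − Q_k)⁻¹` on non-leading blocks, encoded here
by the equation `W_k (λ_j I − Q_k) = ∑ W_m Q_{mk}`), right multiplication by `W_k` of
any row vector with all coordinates strictly positive (on the leading block of the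
cluster of `k`) gives a vector with all coordinates strictly positive (on block `k`).

Colors are `Fin D`, the block of a color is given by the monotone surjection `b`,
`μc k` is the character of the `k`-th diagonal block, `ι j` is the index of the leading
block of the `j`-th cluster, `cl k` is the cluster containing block `k`, and `E k` is
the diagonal `0-1` matrix selecting block `k`, so that `E m * R * E k` is the block
`Q_{mk}` embedded in a `D × D` matrix. -/
theorem vecMul_W_pos
    (D K J : ℕ) (R : Matrix (Fin D) (Fin D) ℝ)
    (b : Fin D → Fin (K + 1)) (hb : Monotone b) (hbsurj : Function.Surjective b)
    (hRpos : ∀ i j, 0 ≤ R i j) (hRrow : ∀ i, ∑ j, R i j = 1)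
    (hRblock : ∀ i j, b j < b i → R i j = 0)
    (μc : Fin (K + 1) → ℝ)
    -- each diagonal block is either zero (character 0) or irreducible with
    -- Perron-Frobenius eigenvalue `μc k`
    (hchar : ∀ k : Fin (K + 1),
      ((∀ i j, b i = k → b j = k → R i j = 0) ∧ μc k = 0) ∨
      ((∀ x y : {i // b i = k}, ∃ n : ℕ, 0 < n ∧
          0 < (((fun p q : {i // b i = k} => R p.1 q.1) :
            Matrix {i // b i = k} {i // b i = k} ℝ) ^ n) x y) ∧
        (μc k : ℂ) ∈ spectrum ℂ
          ((Matrix.of fun p q : {i // b i = k} => R p.1 q.1).map (Complex.ofReal ·)) ∧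
        ∀ z ∈ spectrum ℂ
          ((Matrix.of fun p q : {i // b i = k} => R p.1 q.1).map (Complex.ofReal ·)),
          ‖z‖ ≤ μc k))
    -- leading blocks and clusters: indices of running maxima of the characters
    (ι : Fin (J + 1) → Fin (K + 1)) (hι : StrictMono ι)
    (cl : Fin (K + 1) → Fin (J + 1))
    (hcl1 : ∀ k, ι (cl k) ≤ k) (hcl2 : ∀ k j, ι j ≤ k → j ≤ cl k)
    (hmono : Monotone fun j => μc (ι j))
    (hrun : ∀ k, ι (cl k) ≠ k → μc k < μc (ι (cl k)))
    -- increasing order, condition (1): non-leading zero diagonal blocks are scalar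
    (hinc1 : ∀ k, ι (cl k) ≠ k → (∀ i j, b i = k → b j = k → R i j = 0) →
      (univ.filter fun i => b i = k).card = 1)
    -- increasing order, condition (2)
    (hinc2 : ∀ k, ι (cl k) ≠ k →
      ∃ i j, ι (cl k) ≤ b i ∧ b i < k ∧ b j = k ∧ R i j ≠ 0)
    -- increasing order, condition (3)
    (hinc3 : ∀ j : Fin (J + 1), μc (ι j) = 0 →
      0 < ((univ.filter fun j' : Fin (J + 1) =>
        j' < j ∧ μc (ι j') = μc (ι j)).card) →
      ∀ i', b i' = ι j → ∃ m : Fin (K + 1), (m : ℕ) + 1 = (ι j : ℕ) ∧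
        ∃ i, b i = m ∧ 0 < R i i')
    -- the block-selecting matrices
    (E : Fin (K + 1) → Matrix (Fin D) (Fin D) ℝ)
    (hE : ∀ k i i', E k i i' = if i = i' ∧ b i = k then 1 else 0)
    -- the matrices `W_k`
    (W : Fin (K + 1) → Matrix (Fin D) (Fin D) ℝ)
    (hWlead : ∀ j : Fin (J + 1), W (ι j) = E (ι j))
    (hWsupp : ∀ k i i', ¬(b i = ι (cl k) ∧ b i' = k) → W k i i' = 0)
    (hWrec : ∀ k, ι (cl k) ≠ k →
      W k * (μc (ι (cl k)) • (1 : Matrix (Fin D) (Fin D) ℝ) - E k * R * E k) =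
        ∑ m ∈ univ.filter (fun m => ι (cl k) ≤ m ∧ m < k), W m * (E m * R * E k)) :
    ∀ k : Fin (K + 1), ∀ π : Fin D → ℝ,
      (∀ i, b i = ι (cl k) → 0 < π i) →
      ∀ i', b i' = k → 0 < Matrix.vecMul π (W k) i' := by
  have hμnn : ∀ k : Fin (K + 1), 0 ≤ μc k := by
    intro k
    rcases hchar k with ⟨_, h0⟩ | ⟨_, hmem, hbd⟩
    · rw [h0]
    · have h1 := hbd _ hmem
      have h2 : |μc k| ≤ μc k := by simpa using h1
      exact (abs_nonneg _).trans h2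
  have hEntry : ∀ m k : Fin (K + 1), ∀ i i' : Fin D,
      (E m * R * E k) i i' = if b i = m ∧ b i' = k then R i i' else 0 := by
    intro m k i i'
    have h1 : (E m * R) i i' = if b i = m then R i i' else 0 := by
      rw [Matrix.mul_apply,
        Finset.sum_eq_single i (fun l _ hl => by simp [hE, hl, Ne.symm hl]) (by simp)]
      by_cases h : b i = m <;> simp [hE, h]
    rw [Matrix.mul_apply,
      Finset.sum_eq_single i' (fun l _ hl => by simp [hE, hl]) (by simp)]
    by_cases h : b i' = k
    · by_cases h' : b i = m <;> simp [hE, h, h', h1]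
    · by_cases h' : b i = m <;> simp [hE, h, h', h1]
  suffices H : ∀ N : ℕ, ∀ k : Fin (K + 1), (k : ℕ) < N → ∀ π : Fin D → ℝ,
      (∀ i, b i = ι (cl k) → 0 < π i) →
      ∀ i', b i' = k → 0 < Matrix.vecMul π (W k) i' by
    intro k π hπ i' hi'
    exact H (K + 2) k (by omega) π hπ i' hi'
  intro N
  induction N with
  | zero => intro k hk; omega
  | succ N ih =>
    intro k hk π hπ i' hi'
    by_cases hlead : ι (cl k) = k
    · have hW : W k = E k := by rw [← hlead]; exact hWlead (cl k)
      have hval : Matrix.vecMul π (W k) i' = π i' := by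
        rw [hW, Matrix.vecMul, dotProduct,
          Finset.sum_eq_single i' (fun l _ hl => by simp [hE, hl]) (by simp)]
        simp [hE, hi']
      rw [hval]
      exact hπ i' (hi'.trans hlead.symm)
    · -- non-leading case
      have hlt := hrun k hlead
      have hlam0 : 0 < μc (ι (cl k)) := lt_of_le_of_lt (hμnn k) hlt
      have hclm : ∀ m : Fin (K + 1), ι (cl k) ≤ m → m < k → cl m = cl k := by
        intro m h1 h2
        exact le_antisymm (hcl2 k (cl m) (le_trans (hcl1 m) h2.le)) (hcl2 m (cl k) h1)
      have hIH : ∀ m : Fin (K + 1), ι (cl k) ≤ m → m < k →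
          ∀ i, b i = m → 0 < Matrix.vecMul π (W m) i := by
        intro m h1 h2 i hi
        have hmN : (m : ℕ) < N := by
          have h3 : (m : ℕ) < (k : ℕ) := h2
          omega
        refine ih m hmN π (fun i'' hi'' => hπ i'' ?_) i hi
        rw [hi'', hclm m h1 h2]
      have hIHnn : ∀ m : Fin (K + 1), ι (cl k) ≤ m → m < k →
          ∀ i, 0 ≤ Matrix.vecMul π (W m) i := by
        intro m h1 h2 i
        by_cases hbi : b i = m
        · exact (hIH m h1 h2 i hbi).le
        · rw [Matrix.vecMul, dotProduct]
          refine le_of_eq (Finset.sum_eq_zero fun l _ => ?_).symm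
          rw [hWsupp m l i (fun hcon => hbi hcon.2), mul_zero]
      set v : Fin D → ℝ := Matrix.vecMul π (W k) with hv
      set F := univ.filter (fun m => ι (cl k) ≤ m ∧ m < k) with hF
      set u : Fin D → ℝ :=
        fun i'' => ∑ m ∈ F, Matrix.vecMul (Matrix.vecMul π (W m)) (E m * R * E k) i'' with hu
      have hterm_nn : ∀ m ∈ F, ∀ i'' : Fin D,
          0 ≤ Matrix.vecMul (Matrix.vecMul π (W m)) (E m * R * E k) i'' := by
        intro m hm i''
        obtain ⟨-, hm1, hm2⟩ := Finset.mem_filter.mp hm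
        rw [Matrix.vecMul, dotProduct]
        refine Finset.sum_nonneg fun l _ => mul_nonneg (hIHnn m hm1 hm2 l) ?_
        rw [hEntry]
        split
        · exact hRpos l i''
        · exact le_refl 0
      have hupos : ∀ i'', 0 ≤ u i'' :=
        fun i'' => Finset.sum_nonneg fun m hm => hterm_nn m hm i''
      -- the key equation
      have hkey : ∀ i'' : Fin D,
          μc (ι (cl k)) * v i'' - Matrix.vecMul v (E k * R * E k) i'' = u i'' := by
        intro i''
        have hM := hWrec k hlead
        have h1 : Matrix.vecMul π (W k *
            (μc (ι (cl k)) • (1 : Matrix (Fin D) (Fin D) ℝ) - E k * R * E k)) i''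
            = μc (ι (cl k)) * v i'' - Matrix.vecMul v (E k * R * E k) i'' := by
          rw [← Matrix.vecMul_vecMul, Matrix.vecMul_sub, ← hv]
          have h2 : Matrix.vecMul v (μc (ι (cl k)) • (1 : Matrix (Fin D) (Fin D) ℝ)) i''
              = μc (ι (cl k)) * v i'' := by
            rw [Matrix.vecMul, dotProduct,
              Finset.sum_eq_single i''
                (fun l _ hl => by simp [Matrix.one_apply, hl]) (by simp)]
            simp [Matrix.one_apply]; ring
          simp only [Pi.sub_apply]
          rw [h2]
        have h3 : Matrix.vecMul π (∑ m ∈ F, W m * (E m * R * E k)) i'' = u i'' := by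
          rw [hu, Matrix.vecMul, dotProduct]
          have h4 : ∀ l, (∑ m ∈ F, W m * (E m * R * E k)) l i''
              = ∑ m ∈ F, (W m * (E m * R * E k)) l i'' := fun l => by
            rw [Matrix.sum_apply]
          simp_rw [h4, Finset.mul_sum]
          rw [Finset.sum_comm]
          refine Finset.sum_congr rfl fun m hm => ?_
          rw [Matrix.vecMul_vecMul, Matrix.vecMul, dotProduct]
        rw [← h1, ← h3, hM, hF]
      -- support of v
      have hvsupp : ∀ i'' : Fin D, b i'' ≠ k → v i'' = 0 := by
        intro i'' hbi
        rw [hv, Matrix.vecMul, dotProduct]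
        refine Finset.sum_eq_zero fun l _ => ?_
        rw [hWsupp k l i'' (fun hcon => hbi hcon.2), mul_zero]
      -- u positive at some coordinate of block k
      obtain ⟨ia, jc, h2a, h2b, h2c, h2d⟩ := hinc2 k hlead
      have hiaF : b ia ∈ F := Finset.mem_filter.mpr ⟨Finset.mem_univ _, h2a, h2b⟩
      have hujc : 0 < u jc := by
        refine Finset.sum_pos' (fun m hm => hterm_nn m hm jc) ⟨b ia, hiaF, ?_⟩
        rw [Matrix.vecMul, dotProduct]
        refine Finset.sum_pos' (fun l _ => ?_) ⟨ia, Finset.mem_univ _, ?_⟩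
        · refine mul_nonneg (hIHnn (b ia) h2a h2b l) ?_
          rw [hEntry]; split
          · exact hRpos l jc
          · exact le_refl 0
        · have hpm : 0 < Matrix.vecMul π (W (b ia)) ia := hIH (b ia) h2a h2b ia rfl
          have hent : (E (b ia) * R * E k) ia jc = R ia jc := by
            rw [hEntry]; simp [h2c]
          rw [hent]
          exact mul_pos hpm (lt_of_le_of_ne (hRpos ia jc) (Ne.symm h2d))
      -- case split on the diagonal block
      rcases hchar k with ⟨hz, hμ0⟩ | ⟨hirr, hmem, hbd⟩
      · -- zero diagonal block
        have hzero : Matrix.vecMul v (E k * R * E k) i' = 0 := by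
          rw [Matrix.vecMul, dotProduct]
          refine Finset.sum_eq_zero fun l _ => ?_
          rw [hEntry]
          split
          · next h => rw [hz l i' h.1 h.2, mul_zero]
          · rw [mul_zero]
        have heqi' := hkey i'
        rw [hzero, sub_zero] at heqi'
        have hcard := hinc1 k hlead hz
        obtain ⟨x, hx⟩ := Finset.card_eq_one.mp hcard
        have hi'x : i' = x := by
          have hmem' : i' ∈ univ.filter fun i => b i = k :=
            Finset.mem_filter.mpr ⟨Finset.mem_univ _, hi'⟩
          rw [hx, Finset.mem_singleton] at hmem'
          exact hmem'
        have hjcx : jc = x := by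
          have hmem' : jc ∈ univ.filter fun i => b i = k :=
            Finset.mem_filter.mpr ⟨Finset.mem_univ _, h2c⟩
          rw [hx, Finset.mem_singleton] at hmem'
          exact hmem'
        have hui' : 0 < u i' := by rw [hi'x, ← hjcx]; exact hujc
        rw [← heqi'] at hui'
        by_contra hcon
        push_neg at hcon
        nlinarith [mul_nonneg hlam0.le (neg_nonneg.mpr hcon)]
      · -- irreducible diagonal block
        set Qk : Matrix {i // b i = k} {i // b i = k} ℝ :=
          Matrix.of fun p q : {i // b i = k} => R p.1 q.1 with hQk
        have hrestr : ∀ p : {i // b i = k},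
            Matrix.vecMul v (E k * R * E k) p.1
              = Matrix.vecMul (fun q : {i // b i = k} => v q.1) Qk p := by
          intro p
          rw [Matrix.vecMul, dotProduct, Matrix.vecMul, dotProduct]
          have h5 : ∀ l : Fin D, v l * (E k * R * E k) l p.1
              = if b l = k then v l * R l p.1 else 0 := by
            intro l
            rw [hEntry]
            by_cases hbl : b l = k <;> simp [hbl, p.2]
          simp_rw [h5]
          rw [← Finset.sum_filter]
          simpa [Qk] using Finset.sum_subtype (univ.filter fun i => b i = k) (by simp)
            (fun l => v l * R l p.1)
        have heqS : ∀ p : {i // b i = k},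
            μc (ι (cl k)) * v p.1
              = (Matrix.vecMul (fun q : {i // b i = k} => v q.1) Qk) p + u p.1 := by
          intro p
          have h6 := hkey p.1
          rw [hrestr p] at h6
          linarith
        have hirr' : ∀ x y : {i // b i = k}, ∃ m : ℕ, 0 < m ∧ 0 < (Qk ^ m) x y := by
          intro x y
          obtain ⟨n, hn, hpos⟩ := hirr x y
          refine ⟨1, one_pos, ?_⟩
          have hR : 0 < R x.1 y.1 := by
            rcases (hRpos x.1 y.1).eq_or_lt with h | h
            · exfalso
              have : (0:ℝ) < 0 ^ n := by
                have hp : ((fun p q : {i // b i = k} => R p.1 q.1) ^ n) x y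
                    = (R x.1 y.1) ^ n := by
                  simp [Pi.pow_apply]
                rw [hp, ← h] at hpos
                exact hpos
              simp [zero_pow hn.ne'] at this
            · exact h
          simpa [Qk] using hR
        have hpos := key_pos Qk (fun p q => hRpos p.1 q.1) (μc k) (μc (ι (cl k)))
          (hμnn k) hlt hbd hirr' (fun q : {i // b i = k} => v q.1)
          (fun q : {i // b i = k} => u q.1) (fun q => hupos q.1) ⟨jc, h2c⟩ hujc heqS
        exact hpos ⟨i', hi'⟩
end

section
/- In the setting of a balanced block upper triangular nonnegative replacement matrix R in increasing order satisfying assumption (A) (whenever λ_j > 0 and κ_j > 0 one has ∑_{m=i_{j-1}}^{i_j−1} Q_{m i_j} ≠ 0), the constants w_j defined by w_j = 1 if λ_j = 0 or κ_j = 0, and otherwise w_j = (1/κ_j) π^{(i_{j-1})} (∑_{m=i_{j-1}}^{i_j−1} W_m Q_{m i_j}) ζ^{(i_j)}, are strictly positive for all j = 1, …, J+1. -/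
open Matrix Finset

open Matrix Finset Filter Topology
open scoped ENNReal NNReal

attribute [local instance] Matrix.linftyOpNormedRing Matrix.linftyOpNormedAlgebra

/-- entries of a power of a nonnegative matrix are nonnegative -/
lemma aux_pow_nonneg {α : Type*} [Fintype α] [DecidableEq α]
    (Q : Matrix α α ℝ) (hQ : ∀ p q, 0 ≤ Q p q) (n : ℕ) :
    ∀ p q, 0 ≤ (Q ^ n) p q := by
  induction n with
  | zero => intro p q; simp [Matrix.one_apply]; positivity
  | succ n ih =>
    intro p q
    rw [pow_succ, Matrix.mul_apply]
    exact Finset.sum_nonneg fun r _ => mul_nonneg (ih p r) (hQ r q)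

/-- entry bound by the linfty operator norm -/
lemma aux_entry_le_norm {α : Type*} [Fintype α] [DecidableEq α]
    (M : Matrix α α ℂ) (p q : α) : ‖M p q‖ ≤ ‖M‖ := by
  rw [Matrix.linfty_opNorm_def]
  calc ‖M p q‖ ≤ ∑ r, ‖M p r‖ :=
        Finset.single_le_sum (fun r _ => norm_nonneg _) (Finset.mem_univ q)
    _ ≤ _ := by
        have h2 : ((∑ j, ‖M p j‖₊ : ℝ≥0) : ℝ) ≤ ((Finset.univ.sup fun i => ∑ j, ‖M i j‖₊ : ℝ≥0) : ℝ) := by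
          exact_mod_cast Finset.le_sup (f := fun i => ∑ j, ‖M i j‖₊) (Finset.mem_univ p)
        simpa [NNReal.coe_sum, coe_nnnorm] using h2

lemma aux_map_pow {α : Type*} [Fintype α] [DecidableEq α] (Q : Matrix α α ℝ) (n : ℕ) :
    (Q.map (Complex.ofReal ·)) ^ n = (Q ^ n).map (Complex.ofReal ·) := by
  induction n with
  | zero =>
    ext p q
    simp [Matrix.map_apply, Matrix.one_apply, apply_ite Complex.ofReal]
  | succ n ih =>
    ext p q
    rw [pow_succ, pow_succ, ih]
    simp only [Matrix.map_apply, Matrix.mul_apply]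
    push_cast
    ring

/-- Entries of `(μ⁻¹ • Q)^n` tend to `0` when the spectral radius is `< μ`. -/
lemma aux_pow_tendsto {α : Type*} [Fintype α] [DecidableEq α] [Nonempty α]
    (Q : Matrix α α ℝ) (hQ : ∀ p q, 0 ≤ Q p q) (ρ μ : ℝ)
    (hρ : ∀ z ∈ spectrum ℂ (Q.map (Complex.ofReal ·)), ‖z‖ ≤ ρ)
    (hρμ : ρ < μ) (hμ : 0 < μ) :
    ∀ p q, Tendsto (fun n : ℕ => ((μ⁻¹ • Q) ^ n) p q) atTop (𝓝 0) := by
  classical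
  set Qc : Matrix α α ℂ := Q.map (Complex.ofReal ·) with hQc
  set ν : ℝ := (max ρ 0 + μ) / 2 with hν
  have hν0 : 0 < ν := by positivity
  have hνμ : ν < μ := by
    have : max ρ 0 < μ := max_lt hρμ hμ
    rw [hν]; linarith
  have hρν : max ρ 0 < ν := by
    have : max ρ 0 < μ := max_lt hρμ hμ
    rw [hν]; linarith
  -- spectral radius bound
  have hsr : spectralRadius ℂ Qc ≤ ENNReal.ofReal (max ρ 0) := by
    rw [spectralRadius]
    refine iSup₂_le fun z hz => ?_
    have habs : ‖z‖ ≤ ρ := hρ z hz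
    have : ‖z‖ ≤ max ρ 0 := le_trans (by exact habs) (le_max_left _ _)
    rw [← ENNReal.ofReal_coe_nnreal, coe_nnnorm]
    exact ENNReal.ofReal_le_ofReal this
  have hsr' : spectralRadius ℂ Qc < ENNReal.ofReal ν :=
    lt_of_le_of_lt hsr (ENNReal.ofReal_lt_ofReal_iff hν0 |>.mpr hρν)
  have hgel := spectrum.pow_nnnorm_pow_one_div_tendsto_nhds_spectralRadius Qc
  have hev : ∀ᶠ n : ℕ in atTop, (‖Qc ^ n‖₊ : ℝ≥0∞) ^ (1 / (n : ℝ)) < ENNReal.ofReal ν :=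
    hgel.eventually_lt_const hsr'
  -- eventually ‖Qc^n‖ ≤ ν^n
  have hev2 : ∀ᶠ n : ℕ in atTop, ‖Qc ^ n‖ ≤ ν ^ n := by
    filter_upwards [hev, eventually_ge_atTop 1] with n hn hn1
    have hne : (n : ℝ) ≠ 0 := by positivity
    have h1 : ((‖Qc ^ n‖₊ : ℝ≥0∞) ^ (1 / (n : ℝ))) ^ (n : ℝ) ≤ (ENNReal.ofReal ν) ^ (n : ℝ) :=
      ENNReal.rpow_le_rpow hn.le (by positivity)
    rw [← ENNReal.rpow_mul, one_div, inv_mul_cancel₀ hne, ENNReal.rpow_one,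
      ENNReal.rpow_natCast] at h1
    have h2 : (‖Qc ^ n‖₊ : ℝ≥0∞) ≤ ENNReal.ofReal (ν ^ n) := by
      rwa [ENNReal.ofReal_pow hν0.le]
    have h3 := ENNReal.toReal_mono (by simp) h2
    simpa [ENNReal.toReal_ofReal (by positivity : (0:ℝ) ≤ ν ^ n)] using h3
  intro p q
  -- squeeze
  have hb : ∀ᶠ n : ℕ in atTop, |((μ⁻¹ • Q) ^ n) p q| ≤ (ν / μ) ^ n := by
    filter_upwards [hev2] with n hn
    have hmap : Qc ^ n = (Q ^ n).map (Complex.ofReal ·) := aux_map_pow Q n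
    have hentry : |(Q ^ n) p q| ≤ ν ^ n := by
      have h2 : ‖(Qc ^ n) p q‖ ≤ ν ^ n := (aux_entry_le_norm (Qc ^ n) p q).trans hn
      have h3 : (Qc ^ n) p q = ((Q ^ n) p q : ℂ) := by rw [hmap]; rfl
      rw [h3, Complex.norm_real, Real.norm_eq_abs] at h2
      exact h2
    have hx : ((μ⁻¹ • Q) ^ n) p q = μ⁻¹ ^ n * (Q ^ n) p q := by
      rw [smul_pow]; simp [Matrix.smul_apply]
    rw [hx, abs_mul, abs_pow, abs_of_nonneg (inv_nonneg.mpr hμ.le), div_pow, inv_pow]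
    calc (μ ^ n)⁻¹ * |(Q ^ n) p q| ≤ (μ ^ n)⁻¹ * ν ^ n := by
          have : (0:ℝ) ≤ (μ ^ n)⁻¹ := by positivity
          exact mul_le_mul_of_nonneg_left hentry this
      _ = ν ^ n / μ ^ n := by ring
  have hgeo : Tendsto (fun n : ℕ => (ν / μ) ^ n) atTop (𝓝 0) := by
    apply tendsto_pow_atTop_nhds_zero_of_lt_one
    · positivity
    · rw [div_lt_one hμ]; exact hνμ
  have h0 : Tendsto (fun n : ℕ => -((ν / μ) ^ n)) atTop (𝓝 0) := by
    simpa using hgeo.neg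
  refine tendsto_of_tendsto_of_tendsto_of_le_of_le' h0 hgeo ?_ ?_
  · filter_upwards [hb] with n hn; linarith [abs_le.mp hn |>.1]
  · filter_upwards [hb] with n hn; exact (abs_le.mp hn).2

lemma aux_inv {α : Type*} [Fintype α] [DecidableEq α] [Nonempty α]
    (Q : Matrix α α ℝ) (hQ : ∀ p q, 0 ≤ Q p q) (ρ μ : ℝ)
    (hρ : ∀ z ∈ spectrum ℂ (Q.map (Complex.ofReal ·)), ‖z‖ ≤ ρ)
    (hρμ : ρ < μ) (hμ : 0 < μ) :
    IsUnit (μ • (1 : Matrix α α ℝ) - Q).det ∧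
      ∀ N : ℕ, ∀ p q,
        μ⁻¹ * ((∑ n ∈ Finset.range N, (μ⁻¹ • Q) ^ n) p q) ≤
          (μ • (1 : Matrix α α ℝ) - Q)⁻¹ p q := by
  classical
  set Qc : Matrix α α ℂ := Q.map (Complex.ofReal ·) with hQc
  set A : Matrix α α ℝ := μ • (1 : Matrix α α ℝ) - Q with hA
  -- the complex matrix μ•1 - Qc is a unit
  have hspec : (μ : ℂ) ∉ spectrum ℂ Qc := by
    intro hmem
    have := hρ _ hmem
    rw [Complex.norm_real, Real.norm_eq_abs, abs_of_pos hμ] at this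
    linarith
  have hunit : IsUnit ((μ : ℂ) • (1 : Matrix α α ℂ) - Qc) := by
    rw [spectrum.mem_iff, not_not] at hspec
    rwa [Algebra.algebraMap_eq_smul_one] at hspec
  have hmapA : A.map (Complex.ofReal ·) = (μ : ℂ) • (1 : Matrix α α ℂ) - Qc := by
    ext p q
    simp only [hA, Matrix.map_apply, Matrix.sub_apply, Matrix.smul_apply, Matrix.one_apply,
      hQc, smul_eq_mul, mul_ite, mul_one, mul_zero]
    push_cast
    split <;> simp
  have hdet : IsUnit A.det := by
    have h1 : IsUnit ((μ : ℂ) • (1 : Matrix α α ℂ) - Qc).det :=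
      (Matrix.isUnit_iff_isUnit_det _).mp hunit
    rw [← hmapA] at h1
    have h2 : (A.map (Complex.ofReal ·)).det = ((A.det : ℝ) : ℂ) := by
      have h := (Complex.ofRealHom : ℝ →+* ℂ).map_det A
      rw [RingHom.mapMatrix_apply] at h
      exact h.symm
    rw [h2, isUnit_iff_ne_zero] at h1
    rw [isUnit_iff_ne_zero]
    exact fun h => h1 (by rw [h]; simp)
  refine ⟨hdet, ?_⟩
  set X : Matrix α α ℝ := μ⁻¹ • Q with hX
  set T : Matrix α α ℝ := A⁻¹ with hT
  have hXnn : ∀ n p q, 0 ≤ (X ^ n) p q := by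
    intro n p q
    rw [hX, smul_pow]
    have := aux_pow_nonneg Q hQ n p q
    have h0 : (0:ℝ) ≤ μ⁻¹ ^ n := by positivity
    simpa [Matrix.smul_apply] using mul_nonneg h0 this
  have hAX : A = μ • ((1 : Matrix α α ℝ) - X) := by
    rw [hA, hX, smul_sub, smul_smul, mul_inv_cancel₀ hμ.ne', one_smul]
  -- geometric identity
  have hgeom : ∀ N : ℕ, T = μ⁻¹ • (∑ n ∈ Finset.range N, X ^ n) + T * X ^ N := by
    intro N
    have h1 : ((1 : Matrix α α ℝ) - X) * ∑ n ∈ Finset.range N, X ^ n = 1 - X ^ N := by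
      have := mul_geom_sum X N
      rw [← neg_sub X (1 : Matrix α α ℝ), neg_mul, this, neg_sub]
    have h3 : A * (μ⁻¹ • ∑ n ∈ Finset.range N, X ^ n) = 1 - X ^ N := by
      rw [hAX, smul_mul_assoc, mul_smul_comm, smul_smul, mul_inv_cancel₀ hμ.ne', one_smul, h1]
    have h4 : T * (A * (μ⁻¹ • ∑ n ∈ Finset.range N, X ^ n)) = T * (1 - X ^ N) := by rw [h3]
    rw [← mul_assoc, Matrix.nonsing_inv_mul A hdet, one_mul, mul_sub, mul_one] at h4
    rw [h4]; simp
  intro N p q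
  -- partial sums tend to T p q
  have htend : Tendsto (fun N : ℕ => μ⁻¹ * ((∑ n ∈ Finset.range N, X ^ n) p q)) atTop
      (𝓝 (T p q)) := by
    have herr : Tendsto (fun N : ℕ => (T * X ^ N) p q) atTop (𝓝 0) := by
      have : ∀ N : ℕ, (T * X ^ N) p q = ∑ r, T p r * (X ^ N) r q := by
        intro N; rw [Matrix.mul_apply]
      simp only [this]
      have : Tendsto (fun N : ℕ => ∑ r, T p r * (X ^ N) r q) atTop (𝓝 (∑ r : α, T p r * 0)) := by
        refine tendsto_finset_sum _ fun r _ => ?_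
        exact (aux_pow_tendsto Q hQ ρ μ hρ hρμ hμ r q).const_mul (T p r)
      simpa using this
    have heq : ∀ N : ℕ, μ⁻¹ * ((∑ n ∈ Finset.range N, X ^ n) p q) = T p q - (T * X ^ N) p q := by
      intro N
      have := hgeom N
      have h5 : T p q = μ⁻¹ * ((∑ n ∈ Finset.range N, X ^ n) p q) + (T * X ^ N) p q := by
        conv_lhs => rw [this]
        simp [Matrix.add_apply, Matrix.smul_apply]
      linarith
    simp only [heq]
    simpa using (tendsto_const_nhds (x := T p q)).sub herr
  -- monotone partial sums
  refine ge_of_tendsto htend ?_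
  filter_upwards [eventually_ge_atTop N] with M hM
  have hmono : (∑ n ∈ Finset.range N, X ^ n) p q ≤ (∑ n ∈ Finset.range M, X ^ n) p q := by
    have h6 : ∀ s : Finset ℕ, (∑ n ∈ s, X ^ n) p q = ∑ n ∈ s, (X ^ n) p q := by
      intro s
      simp [Matrix.sum_apply]
    rw [h6, h6]
    exact Finset.sum_le_sum_of_subset_of_nonneg (Finset.range_subset_range.mpr hM)
      (fun n _ _ => hXnn n p q)
  have h0 : (0:ℝ) ≤ μ⁻¹ := by positivity
  exact mul_le_mul_of_nonneg_left hmono h0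
/-- For a balanced nonnegative block upper triangular replacement matrix in increasing
order satisfying assumption (A), the constants
`w_j = 1` (if `λ_j = 0` or `κ_j = 0`) and otherwise
`w_j = κ_j⁻¹ · π^{(i_{j-1})} (∑_{m=i_{j-1}}^{i_j-1} W_m Q_{m i_j}) ζ^{(i_j)}`
are strictly positive for every `j`.  Here `π^{(i_{j-1})}` is the left and `ζ^{(i_j)}`
the right Perron–Frobenius eigenvector of the corresponding irreducible diagonal
blocks, both with positive entries, `π` normalized to sum `1` and `ζ` normalized by
`π^{(i_j)} ζ^{(i_j)} = 1`. -/
theorem w_pos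
    (D K J : ℕ) (R : Matrix (Fin D) (Fin D) ℝ)
    (b : Fin D → Fin (K + 1)) (hb : Monotone b) (hbsurj : Function.Surjective b)
    (hRpos : ∀ i j, 0 ≤ R i j) (hRrow : ∀ i, ∑ j, R i j = 1)
    (hRblock : ∀ i j, b j < b i → R i j = 0)
    (μc : Fin (K + 1) → ℝ)
    -- each diagonal block is either zero (character 0) or irreducible with
    -- Perron-Frobenius eigenvalue `μc k`
    (hchar : ∀ k : Fin (K + 1),
      ((∀ i j, b i = k → b j = k → R i j = 0) ∧ μc k = 0) ∨
      ((∀ x y : {i // b i = k}, ∃ n : ℕ, 0 < n ∧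
          0 < (((fun p q : {i // b i = k} => R p.1 q.1) :
            Matrix {i // b i = k} {i // b i = k} ℝ) ^ n) x y) ∧
        (μc k : ℂ) ∈ spectrum ℂ
          ((Matrix.of fun p q : {i // b i = k} => R p.1 q.1).map (Complex.ofReal ·)) ∧
        ∀ z ∈ spectrum ℂ
          ((Matrix.of fun p q : {i // b i = k} => R p.1 q.1).map (Complex.ofReal ·)),
          ‖z‖ ≤ μc k))
    -- leading blocks and clusters: indices of running maxima of the characters
    (ι : Fin (J + 1) → Fin (K + 1)) (hι : StrictMono ι)
    (cl : Fin (K + 1) → Fin (J + 1))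
    (hcl1 : ∀ k, ι (cl k) ≤ k) (hcl2 : ∀ k j, ι j ≤ k → j ≤ cl k)
    (hmono : Monotone fun j => μc (ι j))
    (hrun : ∀ k, ι (cl k) ≠ k → μc k < μc (ι (cl k)))
    -- increasing order, condition (1): non-leading zero diagonal blocks are scalar
    (hinc1 : ∀ k, ι (cl k) ≠ k → (∀ i j, b i = k → b j = k → R i j = 0) →
      (univ.filter fun i => b i = k).card = 1)
    -- increasing order, condition (2)
    (hinc2 : ∀ k, ι (cl k) ≠ k →
      ∃ i j, ι (cl k) ≤ b i ∧ b i < k ∧ b j = k ∧ R i j ≠ 0)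
    -- increasing order, condition (3)
    (hinc3 : ∀ j : Fin (J + 1), μc (ι j) = 0 →
      0 < ((univ.filter fun j' : Fin (J + 1) =>
        j' < j ∧ μc (ι j') = μc (ι j)).card) →
      ∀ i', b i' = ι j → ∃ m : Fin (K + 1), (m : ℕ) + 1 = (ι j : ℕ) ∧
        ∃ i, b i = m ∧ 0 < R i i')
    -- the block-selecting matrices
    (E : Fin (K + 1) → Matrix (Fin D) (Fin D) ℝ)
    (hE : ∀ k i i', E k i i' = if i = i' ∧ b i = k then 1 else 0)
    -- the matrices `W_k`
    (W : Fin (K + 1) → Matrix (Fin D) (Fin D) ℝ)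
    (hWlead : ∀ j : Fin (J + 1), W (ι j) = E (ι j))
    (hWsupp : ∀ k i i', ¬(b i = ι (cl k) ∧ b i' = k) → W k i i' = 0)
    (hWrec : ∀ k, ι (cl k) ≠ k →
      W k * (μc (ι (cl k)) • (1 : Matrix (Fin D) (Fin D) ℝ) - E k * R * E k) =
        ∑ m ∈ univ.filter (fun m => ι (cl k) ≤ m ∧ m < k), W m * (E m * R * E k))
    -- assumption (A)
    (hA : ∀ j : Fin (J + 1), 0 < μc (ι j) →
      0 < ((univ.filter fun j' : Fin (J + 1) =>
        j' < j ∧ μc (ι j') = μc (ι j)).card) →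
      ∃ jp : Fin (J + 1), (jp : ℕ) + 1 = (j : ℕ) ∧
        ∃ i i', ι jp ≤ b i ∧ b i < ι j ∧ b i' = ι j ∧ R i i' ≠ 0)
    -- left Perron-Frobenius eigenvectors of the leading blocks with positive character
    (pivec : Fin (J + 1) → Fin D → ℝ)
    (hpi : ∀ j : Fin (J + 1), 0 < μc (ι j) →
      (∀ i, b i ≠ ι j → pivec j i = 0) ∧
      (∀ i, b i = ι j → 0 < pivec j i) ∧
      (∑ i, pivec j i = 1) ∧
      (∀ i', b i' = ι j →
        ∑ i ∈ univ.filter (fun i => b i = ι j), pivec j i * R i i' =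
          μc (ι j) * pivec j i'))
    -- right Perron-Frobenius eigenvectors of the leading blocks with positive character
    (zvec : Fin (J + 1) → Fin D → ℝ)
    (hz : ∀ j : Fin (J + 1), 0 < μc (ι j) →
      (∀ i, b i ≠ ι j → zvec j i = 0) ∧
      (∀ i, b i = ι j → 0 < zvec j i) ∧
      (∑ i, pivec j i * zvec j i = 1) ∧
      (∀ i, b i = ι j →
        ∑ i' ∈ univ.filter (fun i' => b i' = ι j), R i i' * zvec j i' =
          μc (ι j) * zvec j i))
    -- the constants `w_j`
    (w : Fin (J + 1) → ℝ)
    (hw1 : ∀ j : Fin (J + 1),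
      (μc (ι j) = 0 ∨ (univ.filter fun j' : Fin (J + 1) =>
        j' < j ∧ μc (ι j') = μc (ι j)).card = 0) → w j = 1)
    (hw2 : ∀ j : Fin (J + 1), 0 < μc (ι j) →
      0 < ((univ.filter fun j' : Fin (J + 1) =>
        j' < j ∧ μc (ι j') = μc (ι j)).card) →
      ∀ jp : Fin (J + 1), (jp : ℕ) + 1 = (j : ℕ) →
      w j = (((univ.filter fun j' : Fin (J + 1) =>
          j' < j ∧ μc (ι j') = μc (ι j)).card : ℝ))⁻¹ *
        dotProduct
          (Matrix.vecMul (pivec jp)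
            (∑ m ∈ univ.filter (fun m => ι jp ≤ m ∧ m < ι j),
              W m * (E m * R * E (ι j))))
          (zvec j)) :
    ∀ j : Fin (J + 1), 0 < w j := by
  classical
  -- the characters are nonnegative
  have hmunn : ∀ k, 0 ≤ μc k := by
    intro k
    rcases hchar k with ⟨_, h0⟩ | ⟨_, hmem, hbd⟩
    · rw [h0]
    · have h := hbd _ hmem
      rw [Complex.norm_real, Real.norm_eq_abs] at h
      exact le_trans (abs_nonneg _) h
  -- entries of the block products
  have hERE : ∀ m k' : Fin (K + 1), ∀ p q,
      (E m * R * E k') p q = if b p = m ∧ b q = k' then R p q else 0 := by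
    intro m k' p q
    rw [Matrix.mul_apply, Finset.sum_eq_single q]
    · rw [Matrix.mul_apply, Finset.sum_eq_single p]
      · rw [hE, hE]
        by_cases h1 : b p = m <;> by_cases h2 : b q = k' <;> simp [h1, h2]
      · intro t _ ht
        rw [hE]
        rw [if_neg fun h => ht h.1.symm, zero_mul]
      · intro h; exact absurd (Finset.mem_univ p) h
    · intro t _ ht
      rw [hE, if_neg fun h => ht h.1, mul_zero]
    · intro h; exact absurd (Finset.mem_univ q) h
  intro j
  rcases eq_or_lt_of_le (hmunn (ι j)) with hμ0 | hμpos
  · rw [hw1 j (Or.inl hμ0.symm)]; exact one_pos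
  by_cases hκ : (univ.filter fun j' : Fin (J + 1) =>
      j' < j ∧ μc (ι j') = μc (ι j)).card = 0
  · rw [hw1 j (Or.inr hκ)]; exact one_pos
  have hκpos : 0 < (univ.filter fun j' : Fin (J + 1) =>
      j' < j ∧ μc (ι j') = μc (ι j)).card := Nat.pos_of_ne_zero hκ
  obtain ⟨j₁, hj₁⟩ := Finset.card_pos.mp hκpos
  obtain ⟨hj₁lt, hj₁eq⟩ := (Finset.mem_filter.mp hj₁).2
  have hj0 : 0 < (j : ℕ) := lt_of_le_of_lt (Nat.zero_le _) hj₁lt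
  set jp : Fin (J + 1) := ⟨(j : ℕ) - 1, by omega⟩ with hjpdef
  have hjp1 : (jp : ℕ) + 1 = (j : ℕ) := by simp only [hjpdef]; omega
  have hjplt : jp < j := by rw [Fin.lt_def]; simp only [hjpdef]; omega
  have hj₁jp : j₁ ≤ jp := by
    rw [Fin.le_def]; rw [Fin.lt_def] at hj₁lt; simp only [hjpdef]; omega
  have hμjp : μc (ι jp) = μc (ι j) := by
    refine le_antisymm (hmono hjplt.le) ?_
    calc μc (ι j) = μc (ι j₁) := hj₁eq.symm
      _ ≤ μc (ι jp) := hmono hj₁jp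
  have hμjppos : 0 < μc (ι jp) := by rw [hμjp]; exact hμpos
  -- the key claim: nonnegativity and column positivity of the W's in the cluster
  have key : ∀ n : ℕ, ∀ k : Fin (K + 1), (k : ℕ) = n → ι jp ≤ k → k < ι j →
      (∀ r i', 0 ≤ W k r i') ∧
        ∀ i', b i' = k → ∃ r, b r = ι jp ∧ 0 < W k r i' := by
    intro n
    induction n using Nat.strong_induction_on with
    | _ n ih =>
    intro k hk hk1 hk2
    by_cases hkl : k = ι jp
    · constructor
      · intro r i'
        rw [hkl, hWlead jp, hE]
        split
        · exact zero_le_one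
        · exact le_refl 0
      · intro i' hbi'
        refine ⟨i', by rw [← hkl]; exact hbi', ?_⟩
        rw [hkl, hWlead jp, hE, if_pos ⟨rfl, by rw [← hkl]; exact hbi'⟩]
        exact one_pos
    · -- k is not a leading block
      have hclk : cl k = jp := by
        have h1 : jp ≤ cl k := hcl2 k jp hk1
        have h2 : cl k < j := by
          by_contra h
          push_neg at h
          exact absurd (le_trans (hι.monotone h) (hcl1 k)) (not_le.mpr hk2)
        have h3 : cl k ≤ jp := by
          rw [Fin.le_def]; rw [Fin.lt_def] at h2; simp only [hjpdef]; omega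
        exact le_antisymm h3 h1
      have hne : ι (cl k) ≠ k := by rw [hclk]; exact fun h => hkl h.symm
      have hrec := hWrec k hne
      rw [hclk] at hrec
      -- the right-hand side S
      set S : Matrix (Fin D) (Fin D) ℝ :=
        ∑ m ∈ univ.filter (fun m => ι jp ≤ m ∧ m < k), W m * (E m * R * E k) with hS
      have hWm : ∀ m ∈ univ.filter (fun m : Fin (K + 1) => ι jp ≤ m ∧ m < k),
          (∀ r i', 0 ≤ W m r i') ∧
            ∀ i', b i' = m → ∃ r, b r = ι jp ∧ 0 < W m r i' := by
        intro m hm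
        obtain ⟨hm1, hm2⟩ := (Finset.mem_filter.mp hm).2
        refine ih (m : ℕ) ?_ m rfl hm1 (lt_trans hm2 hk2)
        rw [← hk]; exact hm2
      have hterm_nn : ∀ m ∈ univ.filter (fun m : Fin (K + 1) => ι jp ≤ m ∧ m < k),
          ∀ r i', 0 ≤ (W m * (E m * R * E k)) r i' := by
        intro m hm r i'
        rw [Matrix.mul_apply]
        refine Finset.sum_nonneg fun p _ => mul_nonneg ((hWm m hm).1 r p) ?_
        rw [hERE]
        split
        · exact hRpos p i'
        · exact le_refl 0
      have hSnn : ∀ r i', 0 ≤ S r i' := by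
        intro r i'
        rw [hS, Matrix.sum_apply]
        exact Finset.sum_nonneg fun m hm => hterm_nn m hm r i'
      -- a strictly positive entry of S
      obtain ⟨i, i₂, hbi1, hbi2, hbi₂, hRi⟩ := hinc2 k hne
      rw [hclk] at hbi1
      have hmmem : b i ∈ univ.filter (fun m : Fin (K + 1) => ι jp ≤ m ∧ m < k) :=
        Finset.mem_filter.mpr ⟨Finset.mem_univ _, hbi1, hbi2⟩
      obtain ⟨r₀, hr₀b, hr₀pos⟩ := (hWm (b i) hmmem).2 i rfl
      have hRipos : 0 < R i i₂ := lt_of_le_of_ne (hRpos i i₂) (Ne.symm hRi)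
      have hSpos : 0 < S r₀ i₂ := by
        rw [hS, Matrix.sum_apply]
        refine Finset.sum_pos' (fun m hm => hterm_nn m hm r₀ i₂) ⟨b i, hmmem, ?_⟩
        rw [Matrix.mul_apply]
        refine Finset.sum_pos' (fun p _ => mul_nonneg ((hWm (b i) hmmem).1 r₀ p) ?_)
          ⟨i, Finset.mem_univ i, ?_⟩
        · rw [hERE]
          split
          · exact hRpos p i₂
          · exact le_refl 0
        · rw [hERE, if_pos ⟨rfl, hbi₂⟩]
          exact mul_pos hr₀pos hRipos
      rcases hchar k with ⟨hzero, _⟩ | ⟨hirr, hmem, hbd⟩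
      · -- zero diagonal block
        have hEk0 : E k * R * E k = 0 := by
          ext p q
          rw [hERE, Matrix.zero_apply]
          split
          · next h => exact hzero p q h.1 h.2
          · rfl
        rw [hEk0, sub_zero, Matrix.mul_smul, mul_one] at hrec
        have hWk : W k = (μc (ι jp))⁻¹ • S := by
          rw [← hrec, smul_smul, inv_mul_cancel₀ hμjppos.ne', one_smul]
        constructor
        · intro r i'
          rw [hWk, Matrix.smul_apply, smul_eq_mul]
          exact mul_nonneg (inv_nonneg.mpr hμjppos.le) (hSnn r i')
        · intro i' hbi'
          have hcard := hinc1 k hne hzero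
          have hii₂ : i' = i₂ := by
            refine Finset.card_le_one.mp (le_of_eq hcard) i' ?_ i₂ ?_
            · exact Finset.mem_filter.mpr ⟨Finset.mem_univ _, hbi'⟩
            · exact Finset.mem_filter.mpr ⟨Finset.mem_univ _, hbi₂⟩
          refine ⟨r₀, hr₀b, ?_⟩
          rw [hii₂, hWk, Matrix.smul_apply, smul_eq_mul]
          exact mul_pos (inv_pos.mpr hμjppos) hSpos
      · -- irreducible diagonal block
        haveI : Nonempty {i // b i = k} := ⟨⟨i₂, hbi₂⟩⟩
        set Qb : Matrix {i // b i = k} {i // b i = k} ℝ :=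
          Matrix.of fun p q => R p.1 q.1 with hQb
        have hQbnn : ∀ p q, 0 ≤ Qb p q := fun p q => hRpos _ _
        have hρμ' : μc k < μc (ι jp) := by
          have h := hrun k hne; rwa [hclk] at h
        obtain ⟨hdet, hTge⟩ := aux_inv Qb hQbnn (μc k) (μc (ι jp)) hbd hρμ' hμjppos
        set A : Matrix {i // b i = k} {i // b i = k} ℝ :=
          μc (ι jp) • (1 : Matrix {i // b i = k} {i // b i = k} ℝ) - Qb with hAdef
        set T : Matrix {i // b i = k} {i // b i = k} ℝ := A⁻¹ with hTdef
        have hQbpos : ∀ p q, 0 < Qb p q := by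
          intro p q
          obtain ⟨n₀, hn₀, hQn⟩ := hirr p q
          have hpow : ((fun p q : {i // b i = k} => R p.1 q.1) ^ n₀) p q
              = (R p.1 q.1) ^ n₀ := rfl
          rw [hpow] at hQn
          rcases lt_or_eq_of_le (hRpos p.1 q.1) with h | h
          · exact h
          · rw [← h, zero_pow hn₀.ne'] at hQn
            exact absurd hQn (lt_irrefl 0)
        have hTpos : ∀ p q, 0 < T p q := by
          intro p q
          have hge := hTge 2 p q
          have hXnn : ∀ n : ℕ, ∀ p' q' : {i // b i = k},
              0 ≤ (((μc (ι jp))⁻¹ • Qb) ^ n) p' q' := by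
            intro n p' q'
            rw [smul_pow, Matrix.smul_apply, smul_eq_mul]
            exact mul_nonneg (by positivity) (aux_pow_nonneg Qb hQbnn n p' q')
          have hstep : (((μc (ι jp))⁻¹ • Qb) ^ 1) p q ≤
              (∑ n ∈ Finset.range 2, ((μc (ι jp))⁻¹ • Qb) ^ n) p q := by
            rw [Matrix.sum_apply]
            exact Finset.single_le_sum (f := fun n => ((((μc (ι jp))⁻¹ • Qb) ^ n)) p q)
              (fun n _ => hXnn n p q) (by norm_num)
          have hposn : 0 < ((((μc (ι jp))⁻¹ • Qb) ^ 1)) p q := by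
            rw [pow_one, Matrix.smul_apply, smul_eq_mul]
            exact mul_pos (by positivity) (hQbpos p q)
          calc (0:ℝ) < (μc (ι jp))⁻¹ * ((((μc (ι jp))⁻¹ • Qb) ^ 1)) p q :=
                mul_pos (by positivity) hposn
            _ ≤ (μc (ι jp))⁻¹ *
                ((∑ n ∈ Finset.range 2, ((μc (ι jp))⁻¹ • Qb) ^ n) p q) :=
                mul_le_mul_of_nonneg_left hstep (by positivity)
            _ ≤ T p q := hge
        -- the rows of W k in terms of S and T
        have hrow : ∀ r, b r = ι jp → ∀ q : {i // b i = k},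
            W k r q.1 = ∑ p : {i // b i = k}, S r p.1 * T p q := by
          intro r hr q
          -- the row vector of W k restricted to the block
          set x : {i // b i = k} → ℝ := fun p => W k r p.1 with hx
          set s : {i // b i = k} → ℝ := fun p => S r p.1 with hs
          have hxA : Matrix.vecMul x A = s := by
            funext q'
            show (∑ p : {i // b i = k}, x p * A p q') = s q'
            have hentry := congrFun (congrFun hrec r) q'.1
            rw [Matrix.mul_apply] at hentry
            have hsplit : ∀ i'' : Fin D,
                W k r i'' * (μc (ι jp) • (1 : Matrix (Fin D) (Fin D) ℝ) -
                  E k * R * E k) i'' q'.1 =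
                if b i'' = k then
                  W k r i'' * (μc (ι jp) • (1 : Matrix (Fin D) (Fin D) ℝ) -
                    E k * R * E k) i'' q'.1 else 0 := by
              intro i''
              split
              · rfl
              · next h =>
                rw [hWsupp k r i'' (fun hc => h hc.2), zero_mul]
            rw [Finset.sum_congr rfl fun i'' _ => hsplit i''] at hentry
            rw [← Finset.sum_filter, Finset.sum_subtype (p := fun i => b i = k)
              (univ.filter fun i => b i = k)
              (fun i => by simp) (fun i'' => W k r i'' *
                (μc (ι jp) • (1 : Matrix (Fin D) (Fin D) ℝ) - E k * R * E k) i'' q'.1)]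
              at hentry
            calc (∑ p : {i // b i = k}, x p * A p q')
                = ∑ p : {i // b i = k}, W k r p.1 *
                    (μc (ι jp) • (1 : Matrix (Fin D) (Fin D) ℝ) - E k * R * E k) p.1 q'.1 := by
                  refine Finset.sum_congr rfl fun p _ => ?_
                  have hApq : A p q' = (μc (ι jp) • (1 : Matrix (Fin D) (Fin D) ℝ) -
                      E k * R * E k) p.1 q'.1 := by
                    rw [hAdef, Matrix.sub_apply, Matrix.sub_apply, Matrix.smul_apply,
                      Matrix.smul_apply, Matrix.one_apply, Matrix.one_apply, hERE,
                      if_pos (show b p.1 = k ∧ b q'.1 = k from ⟨p.2, q'.2⟩)]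
                    have hiff : p.1 = q'.1 ↔ p = q' := Subtype.ext_iff.symm
                    by_cases hpq : p = q'
                    · rw [if_pos (hiff.mpr hpq), if_pos hpq]; rfl
                    · rw [if_neg (fun h => hpq (hiff.mp h)), if_neg hpq]; rfl
                  rw [hApq]
              _ = S r q'.1 := hentry
              _ = s q' := rfl
          have hAT : A * T = 1 := Matrix.mul_nonsing_inv A hdet
          have hxv : x = Matrix.vecMul s T := by
            rw [← hxA, Matrix.vecMul_vecMul, hAT, Matrix.vecMul_one]
          exact congrFun hxv q
        constructor
        · intro r i'
          by_cases hcond : b r = ι jp ∧ b i' = k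
          · have := hrow r hcond.1 ⟨i', hcond.2⟩
            rw [this]
            exact Finset.sum_nonneg fun p _ =>
              mul_nonneg (hSnn r p.1) (hTpos p _).le
          · rw [hWsupp k r i' (by rw [hclk]; exact hcond)]
        · intro i' hbi'
          refine ⟨r₀, hr₀b, ?_⟩
          rw [hrow r₀ hr₀b ⟨i', hbi'⟩]
          refine Finset.sum_pos' (fun p _ => mul_nonneg (hSnn r₀ p.1) (hTpos p _).le)
            ⟨⟨i₂, hbi₂⟩, Finset.mem_univ _, mul_pos hSpos (hTpos _ _)⟩
  -- assemble the final positivity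
  obtain ⟨jp', hjp'1, i, i', hii1, hii2, hii3, hRii⟩ := hA j hμpos hκpos
  have hjp'jp : jp' = jp := by
    apply Fin.ext; simp only [hjpdef]; omega
  rw [hjp'jp] at hii1
  obtain ⟨hpi1, hpi2, hpi3, hpi4⟩ := hpi jp hμjppos
  obtain ⟨hz1, hz2, hz3, hz4⟩ := hz j hμpos
  rw [hw2 j hμpos hκpos jp hjp1]
  set S' : Matrix (Fin D) (Fin D) ℝ :=
    ∑ m ∈ univ.filter (fun m => ι jp ≤ m ∧ m < ι j), W m * (E m * R * E (ι j)) with hS'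
  have hkeym : ∀ m ∈ univ.filter (fun m : Fin (K + 1) => ι jp ≤ m ∧ m < ι j),
      (∀ r i'', 0 ≤ W m r i'') ∧
        ∀ i'', b i'' = m → ∃ r, b r = ι jp ∧ 0 < W m r i'' := by
    intro m hm
    obtain ⟨hm1, hm2⟩ := (Finset.mem_filter.mp hm).2
    exact key (m : ℕ) m rfl hm1 hm2
  have hterm_nn : ∀ m ∈ univ.filter (fun m : Fin (K + 1) => ι jp ≤ m ∧ m < ι j),
      ∀ r q, 0 ≤ (W m * (E m * R * E (ι j))) r q := by
    intro m hm r q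
    rw [Matrix.mul_apply]
    refine Finset.sum_nonneg fun p _ => mul_nonneg ((hkeym m hm).1 r p) ?_
    rw [hERE]
    split
    · exact hRpos p q
    · exact le_refl 0
  have hS'nn : ∀ r q, 0 ≤ S' r q := by
    intro r q
    rw [hS', Matrix.sum_apply]
    exact Finset.sum_nonneg fun m hm => hterm_nn m hm r q
  have hmmem : b i ∈ univ.filter (fun m : Fin (K + 1) => ι jp ≤ m ∧ m < ι j) :=
    Finset.mem_filter.mpr ⟨Finset.mem_univ _, hii1, hii2⟩
  obtain ⟨r, hrb, hrpos⟩ := (hkeym (b i) hmmem).2 i rfl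
  have hRiipos : 0 < R i i' := lt_of_le_of_ne (hRpos i i') (Ne.symm hRii)
  have hS'pos : 0 < S' r i' := by
    rw [hS', Matrix.sum_apply]
    refine Finset.sum_pos' (fun m hm => hterm_nn m hm r i') ⟨b i, hmmem, ?_⟩
    rw [Matrix.mul_apply]
    refine Finset.sum_pos' (fun p _ => mul_nonneg ((hkeym (b i) hmmem).1 r p) ?_)
      ⟨i, Finset.mem_univ i, ?_⟩
    · rw [hERE]
      split
      · exact hRpos p i'
      · exact le_refl 0
    · rw [hERE, if_pos ⟨rfl, hii3⟩]
      exact mul_pos hrpos hRiipos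
  -- positivity of the eigenvector entries
  have hpinn : ∀ r', 0 ≤ pivec jp r' := by
    intro r'
    by_cases h : b r' = ι jp
    · exact (hpi2 r' h).le
    · rw [hpi1 r' h]
  have hznn : ∀ q, 0 ≤ zvec j q := by
    intro q
    by_cases h : b q = ι j
    · exact (hz2 q h).le
    · rw [hz1 q h]
  have hvm : ∀ q, Matrix.vecMul (pivec jp) S' q = ∑ r', pivec jp r' * S' r' q := by
    intro q; rfl
  have hdot : 0 < dotProduct (Matrix.vecMul (pivec jp) S') (zvec j) := by
    rw [dotProduct]
    refine Finset.sum_pos' (fun q _ => ?_) ⟨i', Finset.mem_univ i', ?_⟩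
    · rw [hvm]
      exact mul_nonneg (Finset.sum_nonneg fun r' _ =>
        mul_nonneg (hpinn r') (hS'nn r' q)) (hznn q)
    · rw [hvm]
      refine mul_pos ?_ (hz2 i' hii3)
      refine Finset.sum_pos' (fun r' _ => mul_nonneg (hpinn r') (hS'nn r' i'))
        ⟨r, Finset.mem_univ r, mul_pos (hpi2 r hrb) (hS'pos)⟩
  refine mul_pos ?_ hdot
  rw [inv_pos]
  exact_mod_cast hκpos
end

section
/- In the urn model with balanced block upper triangular replacement matrix R, with ζ the right PF eigenvector of Q_k (or the scalar 1 if Q_k = 0) and μ_k the character of block k, the expectation satisfies E[C_N^{(k)} ζ] = Π_N(μ_k) ( C_0^{(k)} ζ + ∑_{m<k, Q_{mk}≠0} ∑_{n=0}^{N-1} E[C_n^{(m)} Q_{mk} ζ] / ((n+1) Π_{n+1}(μ_k)) ), where Π_N(z) = ∏_{n=0}^{N-1}(1 + z/(n+1)). -/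
open Matrix Finset MeasureTheory

open Classical in
/-- Urn model with balanced block upper triangular replacement matrix: the expectation
of `C_N^{(k)} ζ` equals
`Π_N(μ_k) (C_0^{(k)} ζ + ∑_{m<k, Q_{mk}≠0} ∑_{n<N} E[C_n^{(m)} Q_{mk} ζ] / ((n+1) Π_{n+1}(μ_k)))`
where `Π_N(z) = ∏_{n=0}^{N-1} (1 + z/(n+1))`. -/
theorem urn_expectation_formula
    (D K J : ℕ) (R : Matrix (Fin D) (Fin D) ℝ)
    (b : Fin D → Fin (K + 1)) (hb : Monotone b) (hbsurj : Function.Surjective b)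
    (hRpos : ∀ i j, 0 ≤ R i j) (hRrow : ∀ i, ∑ j, R i j = 1)
    (hRblock : ∀ i j, b j < b i → R i j = 0)
    (μc : Fin (K + 1) → ℝ)
    -- each diagonal block is either zero (character 0) or irreducible with
    -- Perron-Frobenius eigenvalue `μc k`
    (hchar : ∀ k : Fin (K + 1),
      ((∀ i j, b i = k → b j = k → R i j = 0) ∧ μc k = 0) ∨
      ((∀ x y : {i // b i = k}, ∃ n : ℕ, 0 < n ∧
          0 < (((fun p q : {i // b i = k} => R p.1 q.1) :
            Matrix {i // b i = k} {i // b i = k} ℝ) ^ n) x y) ∧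
        (μc k : ℂ) ∈ spectrum ℂ
          ((Matrix.of fun p q : {i // b i = k} => R p.1 q.1).map (Complex.ofReal ·)) ∧
        ∀ z ∈ spectrum ℂ
          ((Matrix.of fun p q : {i // b i = k} => R p.1 q.1).map (Complex.ofReal ·)),
          ‖z‖ ≤ μc k))
    -- urn dynamics
    {Ω : Type*} {m0 : MeasurableSpace Ω} (μpr : MeasureTheory.Measure Ω)
    [MeasureTheory.IsProbabilityMeasure μpr]
    (ℱ : MeasureTheory.Filtration ℕ m0)
    (χ : ℕ → Ω → Fin D)
    (hχmeas : ∀ N, Measurable[ℱ N] (χ N))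
    (C : ℕ → Ω → Fin D → ℝ) (C0 : Fin D → ℝ)
    (hC0pos : ∀ i, 0 < C0 i) (hC0sum : ∑ i, C0 i = 1)
    (hCinit : ∀ ω, C 0 ω = C0)
    (hCrec : ∀ N ω i, C (N + 1) ω i = C N ω i + R (χ (N + 1) ω) i)
    (hCmeas : ∀ N, Measurable[ℱ N] (C N))
    (hdraw : ∀ N (i : Fin D),
      μpr[(fun ω => if χ (N + 1) ω = i then (1 : ℝ) else 0)|ℱ N]
        =ᵐ[μpr] fun ω => C N ω i / ((N : ℝ) + 1))
    -- `ζ`: right PF eigenvector of `Q_k` (or the scalar 1 if `Q_k = 0`)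
    (k : Fin (K + 1)) (ζ : Fin D → ℝ)
    (hζ : ((∀ i j, b i = k → b j = k → R i j = 0) ∧ μc k = 0 ∧
            (∀ i, b i = k → ζ i = 1)) ∨
          ((∀ i, b i = k → 0 < ζ i) ∧
            (∀ i, b i = k →
              ∑ i' ∈ univ.filter (fun i' => b i' = k), R i i' * ζ i' = μc k * ζ i))) :
    ∀ N : ℕ,
      ∫ ω, (∑ i ∈ univ.filter (fun i => b i = k), C N ω i * ζ i) ∂μpr =
        (∏ n ∈ Finset.range N, (1 + μc k / ((n : ℝ) + 1))) *
          ((∑ i ∈ univ.filter (fun i => b i = k), C0 i * ζ i) +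
            ∑ m ∈ univ.filter
                (fun m => m < k ∧ ∃ i i', b i = m ∧ b i' = k ∧ R i i' ≠ 0),
              ∑ n ∈ Finset.range N,
                (∫ ω, (∑ i ∈ univ.filter (fun i => b i = m),
                    C n ω i *
                      ∑ i' ∈ univ.filter (fun i' => b i' = k), R i i' * ζ i') ∂μpr) /
                  (((n : ℝ) + 1) *
                    ∏ l ∈ Finset.range (n + 1), (1 + μc k / ((l : ℝ) + 1)))) := by
  classical
  -- notation
  set g : Fin D → ℝ := fun j => ∑ i' ∈ univ.filter (fun i' => b i' = k), R j i' * ζ i' with hgdef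
  set F : Finset (Fin (K+1)) :=
    univ.filter (fun m => m < k ∧ ∃ i i', b i = m ∧ b i' = k ∧ R i i' ≠ 0) with hFdef
  -- basic positivity facts
  have hμnonneg : 0 ≤ μc k := by
    obtain ⟨i, hi⟩ := hbsurj k
    rcases hζ with ⟨_, h0, _⟩ | ⟨hpos, heig⟩
    · exact le_of_eq h0.symm
    · have h1 := heig i hi
      have h2 : 0 ≤ ∑ i' ∈ univ.filter (fun i' => b i' = k), R i i' * ζ i' :=
        Finset.sum_nonneg fun j hj =>
          mul_nonneg (hRpos i j) (le_of_lt (hpos j (by simpa using hj)))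
      nlinarith [hpos i hi]
  have hfacpos : ∀ n : ℕ, (0:ℝ) < 1 + μc k / ((n:ℝ)+1) := by
    intro n; positivity
  have hPpos : ∀ n : ℕ, (0:ℝ) < ∏ l ∈ Finset.range n, (1 + μc k/((l:ℝ)+1)) :=
    fun n => Finset.prod_pos fun l _ => hfacpos l
  -- entries of R are at most 1
  have hR1 : ∀ i j, R i j ≤ 1 := by
    intro i j
    calc R i j ≤ ∑ j', R i j' :=
          Finset.single_le_sum (fun j' _ => hRpos i j') (Finset.mem_univ j)
      _ = 1 := hRrow i
  -- bounds on C
  have hCbound : ∀ N ω i, 0 ≤ C N ω i ∧ C N ω i ≤ C0 i + N := by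
    intro N
    induction N with
    | zero => intro ω i; simp [hCinit, (hC0pos i).le]
    | succ n ih =>
      intro ω i
      rw [hCrec]
      refine ⟨add_nonneg (ih ω i).1 (hRpos _ i), ?_⟩
      have h1 := (ih ω i).2
      have h2 := hR1 (χ (n+1) ω) i
      push_cast
      linarith
  -- measurability and integrability of coordinates of C
  have hCm : ∀ N j, Measurable (fun ω => C N ω j) := fun N j =>
    (measurable_pi_apply j).comp ((hCmeas N).mono (ℱ.le N) le_rfl)
  have hCint : ∀ N j, Integrable (fun ω => C N ω j) μpr := by
    intro N j
    refine ⟨(hCm N j).aestronglyMeasurable,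
      HasFiniteIntegral.of_bounded (C := C0 j + N) (ae_of_all _ fun ω => ?_)⟩
    have h := hCbound N ω j
    have h0 : (0:ℝ) ≤ C0 j + N := le_trans h.1 h.2
    rw [Real.norm_eq_abs, abs_le]
    constructor <;> linarith [h.1, h.2]
  -- integral of the draw indicator
  have hindmeas : ∀ N j, Measurable (fun ω => if χ (N+1) ω = j then (1:ℝ) else 0) := by
    intro N j
    have hχm : Measurable (χ (N+1)) := (hχmeas (N+1)).mono (ℱ.le (N+1)) le_rfl
    exact Measurable.ite (hχm (measurableSet_singleton j)) measurable_const measurable_const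
  have hindint : ∀ N j, Integrable (fun ω => if χ (N+1) ω = j then (1:ℝ) else 0) μpr := by
    intro N j
    refine ⟨(hindmeas N j).aestronglyMeasurable,
      HasFiniteIntegral.of_bounded (C := 1) (ae_of_all _ fun ω => ?_)⟩
    by_cases h : χ (N+1) ω = j <;> simp [h]
  have hind : ∀ (N : ℕ) (j : Fin D),
      ∫ ω, (if χ (N+1) ω = j then (1:ℝ) else 0) ∂μpr
        = (∫ ω, C N ω j ∂μpr) / ((N:ℝ)+1) := by
    intro N j
    have h1 : ∫ ω, (if χ (N+1) ω = j then (1:ℝ) else 0) ∂μpr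
        = ∫ ω, (μpr[(fun ω => if χ (N + 1) ω = j then (1 : ℝ) else 0)|ℱ N]) ω ∂μpr :=
      (integral_condExp (ℱ.le N)).symm
    rw [h1, integral_congr_ae (hdraw N j), integral_div]
  -- T : expected contribution integrals, linearity
  have hTlin : ∀ (m : Fin (K+1)) (n : ℕ),
      (∫ ω, (∑ i ∈ univ.filter (fun i => b i = m), C n ω i * g i) ∂μpr)
        = ∑ i ∈ univ.filter (fun i => b i = m), (∫ ω, C n ω i ∂μpr) * g i := by
    intro m n
    rw [integral_finset_sum _ (fun i _ => (hCint n i).mul_const (g i))]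
    exact Finset.sum_congr rfl fun i _ => integral_mul_const _ _
  have hSlin : ∀ n : ℕ,
      (∫ ω, (∑ i ∈ univ.filter (fun i => b i = k), C n ω i * ζ i) ∂μpr)
        = ∑ i ∈ univ.filter (fun i => b i = k), (∫ ω, C n ω i ∂μpr) * ζ i := by
    intro n
    rw [integral_finset_sum _ (fun i _ => (hCint n i).mul_const (ζ i))]
    exact Finset.sum_congr rfl fun i _ => integral_mul_const _ _
  -- g on block k
  have hgk : ∀ j, b j = k → g j = μc k * ζ j := by
    intro j hj
    rcases hζ with ⟨h0, hμ0, _⟩ | ⟨_, heig⟩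
    · rw [hμ0, zero_mul, hgdef]
      exact Finset.sum_eq_zero fun i' hi' => by
        rw [h0 j i' hj (by simpa using hi'), zero_mul]
    · exact heig j hj
  -- g vanishes on blocks above k
  have hgtop : ∀ j, k < b j → g j = 0 := by
    intro j hj
    rw [hgdef]
    exact Finset.sum_eq_zero fun i' hi' => by
      rw [hRblock j i' (by rw [(by simpa using hi' : b i' = k)]; exact hj), zero_mul]
  -- g vanishes on blocks m < k not in F
  have hgnotF : ∀ m, m < k → m ∉ F → ∀ j, b j = m → g j = 0 := by
    intro m hmk hmF j hj
    rw [hgdef]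
    refine Finset.sum_eq_zero fun i' hi' => ?_
    by_contra hne
    have hRne : R j i' ≠ 0 := fun h => hne (by rw [h, zero_mul])
    exact hmF (by
      rw [hFdef, Finset.mem_filter]
      exact ⟨Finset.mem_univ m, hmk, j, i', hj, by simpa using hi', hRne⟩)
  -- the one-step recursion
  have hstep : ∀ N : ℕ,
      (∫ ω, (∑ i ∈ univ.filter (fun i => b i = k), C (N+1) ω i * ζ i) ∂μpr)
        = (∫ ω, (∑ i ∈ univ.filter (fun i => b i = k), C N ω i * ζ i) ∂μpr)
            * (1 + μc k / ((N:ℝ)+1))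
          + (∑ m ∈ F, ∫ ω, (∑ i ∈ univ.filter (fun i => b i = m), C N ω i * g i) ∂μpr)
              / ((N:ℝ)+1) := by
    intro N
    -- split the integrand
    have hsplit : ∀ ω, (∑ i ∈ univ.filter (fun i => b i = k), C (N+1) ω i * ζ i)
        = (∑ i ∈ univ.filter (fun i => b i = k), C N ω i * ζ i)
          + ∑ j : Fin D, (if χ (N+1) ω = j then (1:ℝ) else 0) * g j := by
      intro ω
      have h2 : ∑ j : Fin D, (if χ (N+1) ω = j then (1:ℝ) else 0) * g j = g (χ (N+1) ω) := by
        simp [ite_mul]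
      rw [h2, hgdef]
      simp only [hCrec, add_mul, Finset.sum_add_distrib]
    have hint2 : Integrable
        (fun ω => ∑ j : Fin D, (if χ (N+1) ω = j then (1:ℝ) else 0) * g j) μpr :=
      integrable_finset_sum _ fun j _ => (hindint N j).mul_const (g j)
    have hint1 : Integrable
        (fun ω => ∑ i ∈ univ.filter (fun i => b i = k), C N ω i * ζ i) μpr :=
      integrable_finset_sum _ fun i _ => (hCint N i).mul_const (ζ i)
    calc (∫ ω, (∑ i ∈ univ.filter (fun i => b i = k), C (N+1) ω i * ζ i) ∂μpr)
        = ∫ ω, ((∑ i ∈ univ.filter (fun i => b i = k), C N ω i * ζ i)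
            + ∑ j : Fin D, (if χ (N+1) ω = j then (1:ℝ) else 0) * g j) ∂μpr := by
          exact integral_congr_ae (ae_of_all _ hsplit)
      _ = (∫ ω, (∑ i ∈ univ.filter (fun i => b i = k), C N ω i * ζ i) ∂μpr)
            + ∫ ω, (∑ j : Fin D, (if χ (N+1) ω = j then (1:ℝ) else 0) * g j) ∂μpr :=
          integral_add hint1 hint2
      _ = (∫ ω, (∑ i ∈ univ.filter (fun i => b i = k), C N ω i * ζ i) ∂μpr)
            + ∑ j : Fin D, ((∫ ω, C N ω j ∂μpr) / ((N:ℝ)+1)) * g j := by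
          rw [integral_finset_sum _ fun j _ => (hindint N j).mul_const (g j)]
          congr 1
          refine Finset.sum_congr rfl fun j _ => ?_
          rw [integral_mul_const, hind N j]
      _ = _ := by
          -- evaluate the sum over j blockwise
          have hfib : ∑ j : Fin D, ((∫ ω, C N ω j ∂μpr) / ((N:ℝ)+1)) * g j
              = ∑ m : Fin (K+1), ∑ j ∈ univ.filter (fun j => b j = m),
                  ((∫ ω, C N ω j ∂μpr) / ((N:ℝ)+1)) * g j :=
            (Finset.sum_fiberwise_of_maps_to (fun j _ => Finset.mem_univ (b j)) _).symm
          have hblocks : ∑ m : Fin (K+1), ∑ j ∈ univ.filter (fun j => b j = m),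
                  ((∫ ω, C N ω j ∂μpr) / ((N:ℝ)+1)) * g j
              = (μc k / ((N:ℝ)+1))
                  * (∫ ω, (∑ i ∈ univ.filter (fun i => b i = k), C N ω i * ζ i) ∂μpr)
                + (∑ m ∈ F, ∫ ω, (∑ i ∈ univ.filter (fun i => b i = m), C N ω i * g i) ∂μpr)
                    / ((N:ℝ)+1) := by
            rw [← Finset.sum_filter_add_sum_filter_not (univ : Finset (Fin (K+1)))
              (fun m => m < k ∧ ∃ i i', b i = m ∧ b i' = k ∧ R i i' ≠ 0)]
            have hF1 : ∑ m ∈ F, ∑ j ∈ univ.filter (fun j => b j = m),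
                ((∫ ω, C N ω j ∂μpr) / ((N:ℝ)+1)) * g j
              = (∑ m ∈ F, ∫ ω, (∑ i ∈ univ.filter (fun i => b i = m), C N ω i * g i) ∂μpr)
                  / ((N:ℝ)+1) := by
              rw [Finset.sum_div]
              refine Finset.sum_congr rfl fun m _ => ?_
              rw [hTlin m N, Finset.sum_div]
              refine Finset.sum_congr rfl fun j _ => ?_
              ring
            have hF2 : ∑ m ∈ univ.filter
                (fun m => ¬(m < k ∧ ∃ i i', b i = m ∧ b i' = k ∧ R i i' ≠ 0)),
                ∑ j ∈ univ.filter (fun j => b j = m),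
                  ((∫ ω, C N ω j ∂μpr) / ((N:ℝ)+1)) * g j
              = (μc k / ((N:ℝ)+1))
                  * (∫ ω, (∑ i ∈ univ.filter (fun i => b i = k), C N ω i * ζ i) ∂μpr) := by
              rw [Finset.sum_eq_single_of_mem k (by
                simp only [Finset.mem_filter, Finset.mem_univ, true_and]
                intro h; exact absurd h.1 (lt_irrefl k))]
              · rw [hSlin N, Finset.mul_sum]
                refine Finset.sum_congr rfl fun j hj => ?_
                have hbj : b j = k := by simpa using hj
                rw [hgk j hbj]
                ring
              · intro m hm hmk
                simp only [Finset.mem_filter, Finset.mem_univ, true_and] at hm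
                refine Finset.sum_eq_zero fun j hj => ?_
                have hbj : b j = m := by simpa using hj
                rcases lt_trichotomy m k with h | h | h
                · have hmF : m ∉ F := by
                    rw [hFdef]
                    simp only [Finset.mem_filter, Finset.mem_univ, true_and]
                    intro hc; exact hm ⟨h, hc.2⟩
                  rw [hgnotF m h hmF j hbj, mul_zero]
                · exact absurd h hmk
                · rw [hgtop j (by rw [hbj]; exact h), mul_zero]
            rw [hF1, hF2]
            ring
          rw [hfib, hblocks]
          ring
  -- main induction
  intro N
  induction N with
  | zero =>
    simp only [Finset.range_zero, Finset.prod_empty, Finset.sum_empty, one_mul,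
      Finset.sum_const_zero, add_zero]
    rw [integral_congr_ae (ae_of_all _ fun ω => by rw [show (∑ i ∈ univ.filter (fun i => b i = k), C 0 ω i * ζ i) = ∑ i ∈ univ.filter (fun i => b i = k), C0 i * ζ i from Finset.sum_congr rfl fun i _ => by rw [hCinit]])]
    simp
  | succ N ih =>
    rw [hstep N, ih]
    have hPsucc : (∏ n ∈ Finset.range (N+1), (1 + μc k / ((n:ℝ)+1)))
        = (∏ n ∈ Finset.range N, (1 + μc k / ((n:ℝ)+1))) * (1 + μc k / ((N:ℝ)+1)) :=
      Finset.prod_range_succ _ _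
    have hPN1ne : (∏ l ∈ Finset.range (N+1), (1 + μc k / ((l:ℝ)+1))) ≠ 0 :=
      ne_of_gt (hPpos (N+1))
    have hN1ne : ((N:ℝ)+1) ≠ 0 := by positivity
    -- rewrite the inner sums over range (N+1)
    have hsum : ∀ m : Fin (K+1),
        (∑ n ∈ Finset.range (N+1),
          (∫ ω, (∑ i ∈ univ.filter (fun i => b i = m),
              C n ω i * ∑ i' ∈ univ.filter (fun i' => b i' = k), R i i' * ζ i') ∂μpr) /
            (((n : ℝ) + 1) * ∏ l ∈ Finset.range (n + 1), (1 + μc k / ((l : ℝ) + 1))))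
        = (∑ n ∈ Finset.range N,
          (∫ ω, (∑ i ∈ univ.filter (fun i => b i = m),
              C n ω i * ∑ i' ∈ univ.filter (fun i' => b i' = k), R i i' * ζ i') ∂μpr) /
            (((n : ℝ) + 1) * ∏ l ∈ Finset.range (n + 1), (1 + μc k / ((l : ℝ) + 1))))
          + (∫ ω, (∑ i ∈ univ.filter (fun i => b i = m),
              C N ω i * ∑ i' ∈ univ.filter (fun i' => b i' = k), R i i' * ζ i') ∂μpr) /
            (((N : ℝ) + 1) * ∏ l ∈ Finset.range (N + 1), (1 + μc k / ((l : ℝ) + 1))) :=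
      fun m => Finset.sum_range_succ _ _
    simp only [hsum, hPsucc]
    rw [Finset.sum_add_distrib]
    have hgexp : ∀ (m : Fin (K+1)) (n : ℕ),
        (∫ ω, (∑ i ∈ univ.filter (fun i => b i = m), C n ω i * g i) ∂μpr)
        = ∫ ω, (∑ i ∈ univ.filter (fun i => b i = m),
            C n ω i * ∑ i' ∈ univ.filter (fun i' => b i' = k), R i i' * ζ i') ∂μpr := by
      intro m n; rw [hgdef]
    simp only [hgexp]
    rw [← Finset.sum_div]
    have hPne : (∏ n ∈ Finset.range N, (1 + μc k / ((n:ℝ)+1))) ≠ 0 := ne_of_gt (hPpos N)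
    have hcne : (1 + μc k / ((N:ℝ)+1)) ≠ 0 := ne_of_gt (hfacpos N)
    have h1 : ((∏ n ∈ Finset.range N, (1 + μc k / ((n:ℝ)+1))) * (1 + μc k / ((N:ℝ)+1))) ≠ 0 :=
      mul_ne_zero hPne hcne
    set P := ∏ n ∈ Finset.range N, (1 + μc k / ((n:ℝ)+1))
    set c := 1 + μc k / ((N:ℝ)+1)
    set S0 := ∑ i ∈ univ.filter (fun i => b i = k), C0 i * ζ i
    set A := ∑ m ∈ F, ∑ n ∈ Finset.range N,
      (∫ ω, (∑ i ∈ univ.filter (fun i => b i = m),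
          C n ω i * ∑ i' ∈ univ.filter (fun i' => b i' = k), R i i' * ζ i') ∂μpr) /
        (((n : ℝ) + 1) * ∏ l ∈ Finset.range (n + 1), (1 + μc k / ((l : ℝ) + 1)))
    set SB := ∑ m ∈ F, ∫ ω, (∑ i ∈ univ.filter (fun i => b i = m),
        C N ω i * ∑ i' ∈ univ.filter (fun i' => b i' = k), R i i' * ζ i') ∂μpr
    field_simp
    ring
end

section
/- In the urn model with balanced block upper triangular replacement matrix R, the process M_N = C_N^{(k)} ζ / Π_N(μ_k) − ∑_{m<k, Q_{mk}≠0} ∑_{n=0}^{N-1} C_n^{(m)} Q_{mk} ζ / ((n+1) Π_{n+1}(μ_k)) is a martingale with respect to the filtration F_N, and there is a constant c > 0 with E[(ΔM_N)²] ≤ c / ((N+1) Π_{N+1}(μ_k)²) · ∑_{m≤k, Q_{mk}≠0} E[C_N^{(m)} 𝟙], where Q_{kk} = Q_k and 𝟙 is the all-ones vector. -/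
set_option maxHeartbeats 1000000


open Matrix Finset MeasureTheory

open Classical in
/-- Urn model with balanced block upper triangular replacement matrix: the process
`M_N = C_N^{(k)} ζ / Π_N(μ_k) − ∑_{m<k, Q_{mk}≠0} ∑_{n<N} C_n^{(m)} Q_{mk} ζ /((n+1)Π_{n+1}(μ_k))`
is a martingale with respect to `F_N`, and there is a constant `c > 0` with
`E[(ΔM_N)²] ≤ c/((N+1) Π_{N+1}(μ_k)²) ∑_{m≤k, Q_{mk}≠0} E[C_N^{(m)} 𝟙]`
(where `Q_{kk} = Q_k`). -/
theorem urn_martingale_and_difference_bound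
    (D K J : ℕ) (R : Matrix (Fin D) (Fin D) ℝ)
    (b : Fin D → Fin (K + 1)) (hb : Monotone b) (hbsurj : Function.Surjective b)
    (hRpos : ∀ i j, 0 ≤ R i j) (hRrow : ∀ i, ∑ j, R i j = 1)
    (hRblock : ∀ i j, b j < b i → R i j = 0)
    (μc : Fin (K + 1) → ℝ)
    -- each diagonal block is either zero (character 0) or irreducible with
    -- Perron-Frobenius eigenvalue `μc k`
    (hchar : ∀ k : Fin (K + 1),
      ((∀ i j, b i = k → b j = k → R i j = 0) ∧ μc k = 0) ∨
      ((∀ x y : {i // b i = k}, ∃ n : ℕ, 0 < n ∧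
          0 < (((fun p q : {i // b i = k} => R p.1 q.1) :
            Matrix {i // b i = k} {i // b i = k} ℝ) ^ n) x y) ∧
        (μc k : ℂ) ∈ spectrum ℂ
          ((Matrix.of fun p q : {i // b i = k} => R p.1 q.1).map (Complex.ofReal ·)) ∧
        ∀ z ∈ spectrum ℂ
          ((Matrix.of fun p q : {i // b i = k} => R p.1 q.1).map (Complex.ofReal ·)),
          ‖z‖ ≤ μc k))
    -- urn dynamics
    {Ω : Type*} {m0 : MeasurableSpace Ω} (μpr : MeasureTheory.Measure Ω)
    [MeasureTheory.IsProbabilityMeasure μpr]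
    (ℱ : MeasureTheory.Filtration ℕ m0)
    (χ : ℕ → Ω → Fin D)
    (hχmeas : ∀ N, Measurable[ℱ N] (χ N))
    (C : ℕ → Ω → Fin D → ℝ) (C0 : Fin D → ℝ)
    (hC0pos : ∀ i, 0 < C0 i) (hC0sum : ∑ i, C0 i = 1)
    (hCinit : ∀ ω, C 0 ω = C0)
    (hCrec : ∀ N ω i, C (N + 1) ω i = C N ω i + R (χ (N + 1) ω) i)
    (hCmeas : ∀ N, Measurable[ℱ N] (C N))
    (hdraw : ∀ N (i : Fin D),
      μpr[(fun ω => if χ (N + 1) ω = i then (1 : ℝ) else 0)|ℱ N]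
        =ᵐ[μpr] fun ω => C N ω i / ((N : ℝ) + 1))
    -- `ζ`: right PF eigenvector of `Q_k` (or the scalar 1 if `Q_k = 0`)
    (k : Fin (K + 1)) (ζ : Fin D → ℝ)
    (hζ : ((∀ i j, b i = k → b j = k → R i j = 0) ∧ μc k = 0 ∧
            (∀ i, b i = k → ζ i = 1)) ∨
          ((∀ i, b i = k → 0 < ζ i) ∧
            (∀ i, b i = k →
              ∑ i' ∈ univ.filter (fun i' => b i' = k), R i i' * ζ i' = μc k * ζ i)))
    (M : ℕ → Ω → ℝ)
    (hMdef : ∀ N ω, M N ω =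
      (∑ i ∈ univ.filter (fun i => b i = k), C N ω i * ζ i) /
          (∏ n ∈ Finset.range N, (1 + μc k / ((n : ℝ) + 1))) -
        ∑ m ∈ univ.filter
            (fun m => m < k ∧ ∃ i i', b i = m ∧ b i' = k ∧ R i i' ≠ 0),
          ∑ n ∈ Finset.range N,
            (∑ i ∈ univ.filter (fun i => b i = m),
                C n ω i *
                  ∑ i' ∈ univ.filter (fun i' => b i' = k), R i i' * ζ i') /
              (((n : ℝ) + 1) *
                ∏ l ∈ Finset.range (n + 1), (1 + μc k / ((l : ℝ) + 1)))) :
    Martingale M ℱ μpr ∧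
      ∃ c : ℝ, 0 < c ∧ ∀ N : ℕ,
        ∫ ω, (M (N + 1) ω - M N ω) ^ 2 ∂μpr ≤
          c / (((N : ℝ) + 1) *
              (∏ n ∈ Finset.range (N + 1), (1 + μc k / ((n : ℝ) + 1))) ^ 2) *
            ∑ m ∈ univ.filter
                (fun m => m ≤ k ∧ ∃ i i', b i = m ∧ b i' = k ∧ R i i' ≠ 0),
              ∫ ω, (∑ i ∈ univ.filter (fun i => b i = m), C N ω i) ∂μpr := by
  -- abbreviations
  set P : ℕ → ℝ := fun N => ∏ n ∈ Finset.range N, (1 + μc k / ((n : ℝ) + 1)) with hPdef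
  set qz : Fin D → ℝ := fun j => ∑ i' ∈ univ.filter (fun i' => b i' = k), R j i' * ζ i' with hqzdef
  set S : ℕ → Ω → ℝ := fun N ω => ∑ i ∈ univ.filter (fun i => b i = k), C N ω i * ζ i with hSdef
  set act : Finset (Fin (K + 1)) :=
    univ.filter (fun m => m < k ∧ ∃ i i', b i = m ∧ b i' = k ∧ R i i' ≠ 0) with hactdef
  set T : Fin (K + 1) → ℕ → Ω → ℝ :=
    fun m n ω => ∑ i ∈ univ.filter (fun i => b i = m), C n ω i * qz i with hTdef
  have hM' : ∀ N ω, M N ω = S N ω / P N -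
      ∑ m ∈ act, ∑ n ∈ Finset.range N, T m n ω / (((n : ℝ) + 1) * P (n + 1)) := by
    intro N ω; rw [hMdef]
  -- basic positivity facts
  have hμ0 : 0 ≤ μc k := by
    rcases hchar k with ⟨-, h0⟩ | ⟨-, hmem, hbound⟩
    · rw [h0]
    · have := hbound _ hmem
      rw [Complex.norm_real, Real.norm_eq_abs] at this
      exact (abs_nonneg (μc k)).trans this
  have hfac : ∀ n : ℕ, (1 : ℝ) ≤ 1 + μc k / ((n : ℝ) + 1) := by
    intro n
    have : (0:ℝ) ≤ μc k / ((n : ℝ) + 1) := by positivity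
    linarith
  have hPpos : ∀ N, 0 < P N := by
    intro N
    exact Finset.prod_pos fun n _ => lt_of_lt_of_le one_pos (hfac n)
  have hPsucc : ∀ N, P (N + 1) = P N * (1 + μc k / ((N : ℝ) + 1)) :=
    fun N => Finset.prod_range_succ _ N
  -- eigen relation
  have hEig : ∀ i, b i = k → qz i = μc k * ζ i := by
    intro i hi
    rcases hζ with ⟨hz, hμz, hone⟩ | ⟨-, heig⟩
    · rw [hμz, zero_mul, hqzdef]
      exact Finset.sum_eq_zero fun i' hi' => by
        rw [hz i i' hi (by simpa using hi'), zero_mul]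
    · exact heig i hi
  -- nonnegativity and total mass
  have hCnn : ∀ N ω i, 0 ≤ C N ω i := by
    intro N
    induction N with
    | zero => intro ω i; rw [hCinit]; exact (hC0pos i).le
    | succ n ih => intro ω i; rw [hCrec]; exact add_nonneg (ih ω i) (hRpos _ i)
  have hCsum : ∀ N ω, ∑ i, C N ω i = (N : ℝ) + 1 := by
    intro N
    induction N with
    | zero => intro ω; simp [hCinit, hC0sum]
    | succ n ih =>
      intro ω
      simp only [hCrec, Finset.sum_add_distrib, ih ω, hRrow]
      push_cast; ring
  have hCbdd : ∀ N ω i, C N ω i ≤ (N : ℝ) + 1 := by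
    intro N ω i
    calc C N ω i ≤ ∑ j, C N ω j :=
          Finset.single_le_sum (fun j _ => hCnn N ω j) (Finset.mem_univ i)
      _ = (N : ℝ) + 1 := hCsum N ω
  -- qz vanishes outside relevant blocks
  have hqzzero : ∀ j, ¬ (b j ≤ k ∧ ∃ i i', b i = b j ∧ b i' = k ∧ R i i' ≠ 0) → qz j = 0 := by
    intro j hj
    rw [hqzdef]
    refine Finset.sum_eq_zero fun i' hi' => ?_
    have hbi' : b i' = k := by simpa using hi'
    by_cases hR : R j i' = 0
    · rw [hR, zero_mul]
    · exfalso
      apply hj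
      constructor
      · by_contra hlt
        exact hR (hRblock j i' (by rw [hbi']; exact lt_of_not_ge hlt))
      · exact ⟨j, i', rfl, hbi', hR⟩
  -- the key algebraic splitting
  have hsplit : ∀ N ω, ∑ j, C N ω j * qz j = μc k * S N ω + ∑ m ∈ act, T m N ω := by
    intro N ω
    rw [← Finset.sum_fiberwise univ b (fun j => C N ω j * qz j)]
    have hTk : T k N ω = μc k * S N ω := by
      rw [hTdef, hSdef, Finset.mul_sum]
      refine Finset.sum_congr rfl fun i hi => ?_
      rw [hEig i (by simpa using hi)]; ring
    have : ∑ m : Fin (K + 1), T m N ω = T k N ω + ∑ m ∈ univ.erase k, T m N ω := by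
      rw [← Finset.sum_erase_add _ _ (Finset.mem_univ k)]; ring
    rw [show (∑ m : Fin (K+1), ∑ j ∈ univ.filter (fun j => b j = m), C N ω j * qz j)
        = ∑ m : Fin (K + 1), T m N ω from rfl, this, hTk]
    congr 1
    rw [eq_comm]
    refine Finset.sum_subset ?_ ?_
    · intro m hm
      rw [hactdef] at hm
      simp only [Finset.mem_filter, Finset.mem_univ, true_and] at hm
      exact Finset.mem_erase.2 ⟨ne_of_lt hm.1, Finset.mem_univ m⟩
    · intro m hm hnm
      rw [hTdef]
      refine Finset.sum_eq_zero fun j hj => ?_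
      have hbj : b j = m := by simpa using hj
      have : qz j = 0 := by
        apply hqzzero
        rintro ⟨hle, hex⟩
        have hne : m ≠ k := (Finset.mem_erase.1 hm).1
        apply hnm
        rw [hactdef]
        simp only [Finset.mem_filter, Finset.mem_univ, true_and]
        refine ⟨lt_of_le_of_ne (hbj ▸ hle) hne, ?_⟩
        rw [hbj] at hex
        exact hex
      rw [this, mul_zero]
  -- measurability of coordinates
  have hCmeasF : ∀ {n N : ℕ}, n ≤ N → ∀ i, Measurable[ℱ N] fun ω => C n ω i := by
    intro n N hn i
    exact ((measurable_pi_apply i).comp (hCmeas n)).mono (ℱ.mono hn) le_rfl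
  have hCmeas0 : ∀ (n : ℕ) (i : Fin D), Measurable fun ω => C n ω i := by
    intro n i
    exact (hCmeasF le_rfl i).mono (ℱ.le n) le_rfl
  have hCint : ∀ (n : ℕ) (i : Fin D), Integrable (fun ω => C n ω i) μpr := by
    intro n i
    refine (integrable_const ((n : ℝ) + 1)).mono' (hCmeas0 n i).aestronglyMeasurable ?_
    refine ae_of_all _ fun ω => ?_
    rw [Real.norm_eq_abs, abs_of_nonneg (hCnn n ω i)]
    exact hCbdd n ω i
  have hSint : ∀ n, Integrable (S n) μpr := by
    intro n
    exact integrable_finset_sum _ fun i _ => (hCint n i).mul_const _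
  have hTint : ∀ m n, Integrable (T m n) μpr := by
    intro m n
    exact integrable_finset_sum _ fun i _ => (hCint n i).mul_const _
  have hMint : ∀ N, Integrable (M N) μpr := by
    intro N
    have : M N = fun ω => S N ω / P N -
        ∑ m ∈ act, ∑ n ∈ Finset.range N, T m n ω / (((n : ℝ) + 1) * P (n + 1)) := by
      funext ω; exact hM' N ω
    rw [this]
    exact ((hSint N).div_const _).sub <| integrable_finset_sum _ fun m _ =>
      integrable_finset_sum _ fun n _ => (hTint m n).div_const _
  have hMmeasF : ∀ N, Measurable[ℱ N] (M N) := by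
    intro N
    have : M N = fun ω => S N ω / P N -
        ∑ m ∈ act, ∑ n ∈ Finset.range N, T m n ω / (((n : ℝ) + 1) * P (n + 1)) := by
      funext ω; exact hM' N ω
    rw [this]
    refine Measurable.sub ?_ ?_
    · exact (Finset.measurable_sum _ fun i _ => (hCmeasF le_rfl i).mul_const _).div_const _
    · refine Finset.measurable_sum _ fun m _ => Finset.measurable_sum _ fun n hn => ?_
      have hn' : n ≤ N := le_of_lt (Finset.mem_range.1 hn)
      exact (Finset.measurable_sum _ fun i _ => (hCmeasF hn' i).mul_const _).div_const _
  have hMadp : StronglyAdapted ℱ M := fun N => (hMmeasF N).stronglyMeasurable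
  -- difference identity
  have hdiff : ∀ N ω, M (N + 1) ω - M N ω =
      (qz (χ (N + 1) ω) - (μc k * S N ω + ∑ m ∈ act, T m N ω) / ((N : ℝ) + 1)) / P (N + 1) := by
    intro N ω
    have hS1 : S (N + 1) ω = S N ω + qz (χ (N + 1) ω) := by
      rw [hSdef]
      simp only [hCrec, add_mul, Finset.sum_add_distrib]
      rfl
    rw [hM' (N + 1), hM' N, hS1]
    simp only [Finset.sum_range_succ]
    rw [Finset.sum_add_distrib]
    rw [hPsucc N]
    rw [show (∑ m ∈ act, T m N ω / (((N : ℝ) + 1) * (P N * (1 + μc k / ((N : ℝ) + 1)))))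
        = (∑ m ∈ act, T m N ω) / (((N : ℝ) + 1) * (P N * (1 + μc k / ((N : ℝ) + 1))))
        from (Finset.sum_div _ _ _).symm]
    have hPN : P N ≠ 0 := (hPpos N).ne'
    have hfN : (1 : ℝ) + μc k / ((N : ℝ) + 1) ≠ 0 := (lt_of_lt_of_le one_pos (hfac N)).ne'
    have hN1 : ((N : ℝ) + 1) ≠ 0 := by positivity
    field_simp
    ring
  -- indicator machinery
  have hindmeas : ∀ N (j : Fin D),
      Measurable fun ω => if χ (N + 1) ω = j then (1 : ℝ) else 0 := by
    intro N j
    have h1 : Measurable[ℱ (N + 1)] fun ω => if χ (N + 1) ω = j then (1 : ℝ) else 0 :=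
      Measurable.ite (hχmeas (N + 1) (MeasurableSet.singleton j)) measurable_const
        measurable_const
    exact h1.mono (ℱ.le (N + 1)) le_rfl
  have hindint : ∀ N (j : Fin D),
      Integrable (fun ω => if χ (N + 1) ω = j then (1 : ℝ) else 0) μpr := by
    intro N j
    refine (integrable_const (1 : ℝ)).mono' (hindmeas N j).aestronglyMeasurable ?_
    refine ae_of_all _ fun ω => ?_
    by_cases h : χ (N + 1) ω = j <;> simp [h]
  have hXrep : ∀ N, (fun ω => qz (χ (N + 1) ω)) =
      ∑ j : Fin D, qz j • fun ω => if χ (N + 1) ω = j then (1 : ℝ) else 0 := by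
    intro N
    funext ω
    simp only [Finset.sum_apply, Pi.smul_apply, smul_eq_mul, mul_ite, mul_one, mul_zero]
    rw [Finset.sum_ite_eq univ (χ (N + 1) ω) qz, if_pos (Finset.mem_univ _)]
  have hXcond : ∀ N, μpr[fun ω => qz (χ (N + 1) ω)|ℱ N] =ᵐ[μpr]
      fun ω => (μc k * S N ω + ∑ m ∈ act, T m N ω) / ((N : ℝ) + 1) := by
    intro N
    rw [hXrep N]
    have h1 : μpr[∑ j : Fin D, qz j • fun ω => if χ (N + 1) ω = j then (1 : ℝ) else 0|ℱ N]
        =ᵐ[μpr] ∑ j : Fin D, μpr[qz j • fun ω => if χ (N + 1) ω = j then (1 : ℝ) else 0|ℱ N] :=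
      condExp_finsetSum (fun j _ => (hindint N j).smul (qz j)) _
    refine h1.trans ?_
    have h2 : ∀ j : Fin D,
        μpr[qz j • fun ω => if χ (N + 1) ω = j then (1 : ℝ) else 0|ℱ N]
          =ᵐ[μpr] qz j • fun ω => C N ω j / ((N : ℝ) + 1) := by
      intro j
      refine (condExp_smul (qz j) _ _).trans ?_
      exact (hdraw N j).const_smul (qz j)
    have h3 : ∀ᵐ ω ∂μpr, ∀ j : Fin D,
        (μpr[qz j • fun ω => if χ (N + 1) ω = j then (1 : ℝ) else 0|ℱ N]) ω
          = qz j * (C N ω j / ((N : ℝ) + 1)) := ae_all_iff.2 fun j => h2 j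
    filter_upwards [h3] with ω hω
    simp only [Finset.sum_apply]
    rw [Finset.sum_congr rfl fun j _ => hω j]
    rw [← hsplit N ω]
    rw [Finset.sum_div]
    refine Finset.sum_congr rfl fun j _ => ?_
    ring
  -- the martingale property
  have hmart : Martingale M ℱ μpr := by
    refine martingale_nat hMadp hMint fun N => ?_
    have hGmeas : Measurable[ℱ N] fun ω =>
        M N ω - (μc k * S N ω + ∑ m ∈ act, T m N ω) / (((N : ℝ) + 1) * P (N + 1)) := by
      refine (hMmeasF N).sub ?_
      refine Measurable.div_const (Measurable.add ?_ ?_) _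
      · exact (Finset.measurable_sum _ fun i _ => (hCmeasF le_rfl i).mul_const _).const_mul _
      · exact Finset.measurable_sum _ fun m _ =>
          Finset.measurable_sum _ fun i _ => (hCmeasF le_rfl i).mul_const _
    have hGint : Integrable (fun ω =>
        M N ω - (μc k * S N ω + ∑ m ∈ act, T m N ω) / (((N : ℝ) + 1) * P (N + 1))) μpr := by
      refine (hMint N).sub ?_
      exact (((hSint N).const_mul _).add (integrable_finset_sum _ fun m _ => hTint m N)).div_const _
    have hXint : Integrable (fun ω => qz (χ (N + 1) ω)) μpr := by
      rw [hXrep N]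
      exact integrable_finset_sum' _ fun j _ => (hindint N j).smul (qz j)
    have hrepr : M (N + 1) = (fun ω =>
        M N ω - (μc k * S N ω + ∑ m ∈ act, T m N ω) / (((N : ℝ) + 1) * P (N + 1)))
        + (P (N + 1))⁻¹ • fun ω => qz (χ (N + 1) ω) := by
      funext ω
      have h := hdiff N ω
      simp only [Pi.add_apply, Pi.smul_apply, smul_eq_mul]
      have hP1 : P (N + 1) ≠ 0 := (hPpos (N + 1)).ne'
      have hN1 : ((N : ℝ) + 1) ≠ 0 := by positivity
      have h2 : M (N + 1) ω = M N ω +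
          (qz (χ (N + 1) ω) - (μc k * S N ω + ∑ m ∈ act, T m N ω) / ((N : ℝ) + 1)) /
            P (N + 1) := by linarith
      rw [h2]
      field_simp
      ring
    have hc1 : μpr[M (N + 1)|ℱ N] =ᵐ[μpr]
        μpr[(fun ω =>
          M N ω - (μc k * S N ω + ∑ m ∈ act, T m N ω) / (((N : ℝ) + 1) * P (N + 1)))|ℱ N]
        + μpr[(P (N + 1))⁻¹ • fun ω => qz (χ (N + 1) ω)|ℱ N] := by
      rw [hrepr]
      exact condExp_add hGint (hXint.smul _) _
    have hc2 : μpr[(fun ω =>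
        M N ω - (μc k * S N ω + ∑ m ∈ act, T m N ω) / (((N : ℝ) + 1) * P (N + 1)))|ℱ N]
        = fun ω =>
          M N ω - (μc k * S N ω + ∑ m ∈ act, T m N ω) / (((N : ℝ) + 1) * P (N + 1)) :=
      condExp_of_stronglyMeasurable (ℱ.le N) hGmeas.stronglyMeasurable hGint
    have hc3 : μpr[(P (N + 1))⁻¹ • fun ω => qz (χ (N + 1) ω)|ℱ N] =ᵐ[μpr]
        (P (N + 1))⁻¹ • fun ω => (μc k * S N ω + ∑ m ∈ act, T m N ω) / ((N : ℝ) + 1) := by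
      refine (condExp_smul _ _ _).trans ?_
      filter_upwards [hXcond N] with ω hω
      simp only [Pi.smul_apply, smul_eq_mul, hω]
    refine Filter.EventuallyEq.symm ?_
    refine hc1.trans ?_
    rw [hc2]
    refine (Filter.EventuallyEq.add Filter.EventuallyEq.rfl hc3).trans ?_
    refine ae_of_all _ fun ω => ?_
    simp only [Pi.add_apply, Pi.smul_apply, smul_eq_mul]
    have hP1 : P (N + 1) ≠ 0 := (hPpos (N + 1)).ne'
    have hN1 : ((N : ℝ) + 1) ≠ 0 := by positivity
    field_simp
    ring
  -- variance bound
  set Z : ℝ := ∑ j, |qz j| with hZdef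
  have hZnn : 0 ≤ Z := Finset.sum_nonneg fun j _ => abs_nonneg _
  have hZb : ∀ j, |qz j| ≤ Z := fun j =>
    Finset.single_le_sum (fun j _ => abs_nonneg (qz j)) (Finset.mem_univ j)
  set actle : Finset (Fin (K + 1)) :=
    univ.filter (fun m => m ≤ k ∧ ∃ i i', b i = m ∧ b i' = k ∧ R i i' ≠ 0) with hactledef
  have hqzzero' : ∀ j, b j ∉ actle → qz j = 0 := by
    intro j hj
    apply hqzzero
    intro hcon
    refine hj ?_
    rw [hactledef]
    simp only [Finset.mem_filter, Finset.mem_univ, true_and]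
    exact hcon
  refine ⟨hmart, 4 * Z ^ 2 + 1, by positivity, fun N => ?_⟩
  have hP1pos : 0 < P (N + 1) := hPpos (N + 1)
  have hN1pos : (0:ℝ) < (N:ℝ) + 1 := by positivity
  set X : Ω → ℝ := fun ω => qz (χ (N + 1) ω) with hXdef
  set DD : Ω → ℝ := fun ω => (μc k * S N ω + ∑ m ∈ act, T m N ω) / ((N : ℝ) + 1) with hDDdef
  set W : Ω → ℝ := fun ω => ∑ j ∈ univ.filter (fun j => b j ∈ actle), C N ω j with hWdef
  set E : Fin D → ℝ := fun j => ∫ ω, C N ω j ∂μpr with hEdef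
  have hEnn : ∀ j, 0 ≤ E j := fun j => integral_nonneg fun ω => hCnn N ω j
  have hXb : ∀ ω, |X ω| ≤ Z := fun ω => hZb _
  have hWnn : ∀ ω, 0 ≤ W ω :=
    fun ω => Finset.sum_nonneg fun j _ => hCnn N ω j
  have hWb : ∀ ω, W ω ≤ (N : ℝ) + 1 := by
    intro ω
    calc W ω ≤ ∑ j, C N ω j :=
          Finset.sum_le_sum_of_subset_of_nonneg (Finset.filter_subset _ _)
            (fun j _ _ => hCnn N ω j)
      _ = (N : ℝ) + 1 := hCsum N ω
  have hDDrep : ∀ ω, DD ω * ((N : ℝ) + 1) = ∑ j, C N ω j * qz j := by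
    intro ω
    rw [hDDdef, hsplit N ω]
    field_simp
  have hDDb : ∀ ω, |DD ω| * ((N : ℝ) + 1) ≤ Z * W ω := by
    intro ω
    have h0 : |DD ω| * ((N : ℝ) + 1) = |DD ω * ((N : ℝ) + 1)| := by
      rw [abs_mul, abs_of_pos hN1pos]
    rw [h0, hDDrep ω]
    have h1 : ∑ j ∈ univ.filter (fun j => b j ∈ actle), C N ω j * qz j
        = ∑ j, C N ω j * qz j := by
      refine Finset.sum_subset (Finset.filter_subset _ _) fun j _ hj => ?_
      rw [hqzzero' j (by simpa using hj), mul_zero]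
    rw [← h1]
    calc |∑ j ∈ univ.filter (fun j => b j ∈ actle), C N ω j * qz j|
        ≤ ∑ j ∈ univ.filter (fun j => b j ∈ actle), |C N ω j * qz j| :=
          Finset.abs_sum_le_sum_abs _ _
      _ ≤ ∑ j ∈ univ.filter (fun j => b j ∈ actle), C N ω j * Z := by
          refine Finset.sum_le_sum fun j _ => ?_
          rw [abs_mul, abs_of_nonneg (hCnn N ω j)]
          exact mul_le_mul_of_nonneg_left (hZb j) (hCnn N ω j)
      _ = Z * W ω := by rw [hWdef]; rw [← Finset.sum_mul]; ring
  have hDD2 : ∀ ω, DD ω ^ 2 ≤ Z ^ 2 * W ω / ((N : ℝ) + 1) := by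
    intro ω
    rw [le_div_iff₀ hN1pos]
    have h1 : (|DD ω| * ((N : ℝ) + 1)) ^ 2 ≤ (Z * W ω) ^ 2 :=
      pow_le_pow_left₀ (by positivity) (hDDb ω) 2
    have h2 : Z ^ 2 * W ω ^ 2 ≤ Z ^ 2 * (W ω * ((N : ℝ) + 1)) := by
      have : W ω ^ 2 ≤ W ω * ((N : ℝ) + 1) := by nlinarith [hWnn ω, hWb ω]
      nlinarith [sq_nonneg Z, this]
    have h3 : DD ω ^ 2 * ((N : ℝ) + 1) ^ 2 ≤ Z ^ 2 * W ω * ((N : ℝ) + 1) := by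
      nlinarith [h1, h2, sq_abs (DD ω)]
    nlinarith [h3, hN1pos]
  -- integral identities
  have hX2rep : ∀ ω, X ω ^ 2 = ∑ j : Fin D, qz j ^ 2 * (if χ (N + 1) ω = j then (1:ℝ) else 0) := by
    intro ω
    simp only [mul_ite, mul_one, mul_zero]
    rw [Finset.sum_ite_eq univ (χ (N + 1) ω) (fun j => qz j ^ 2), if_pos (Finset.mem_univ _)]
  have hindInt : ∀ j, ∫ ω, (if χ (N + 1) ω = j then (1:ℝ) else 0) ∂μpr
      = E j / ((N : ℝ) + 1) := by
    intro j
    rw [← integral_condExp (ℱ.le N) (f := fun ω => if χ (N + 1) ω = j then (1:ℝ) else 0), integral_congr_ae (hdraw N j),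
      integral_div]
  have hX2integral : ∫ ω, X ω ^ 2 ∂μpr = ∑ j, qz j ^ 2 * (E j / ((N : ℝ) + 1)) := by
    rw [integral_congr_ae (ae_of_all _ hX2rep), integral_finset_sum _
      (fun j _ => (hindint N j).const_mul _)]
    exact Finset.sum_congr rfl fun j _ => by rw [integral_const_mul, hindInt j]
  -- Σ
  have hSig : (∑ m ∈ actle, ∫ ω, (∑ i ∈ univ.filter (fun i => b i = m), C N ω i) ∂μpr)
      = ∑ j ∈ univ.filter (fun j => b j ∈ actle), E j := by
    rw [← Finset.sum_fiberwise_eq_sum_filter univ actle b E]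
    refine Finset.sum_congr rfl fun m _ => ?_
    rw [integral_finset_sum _ (fun i _ => hCint N i)]
  have hSignn : 0 ≤ ∑ j ∈ univ.filter (fun j => b j ∈ actle), E j :=
    Finset.sum_nonneg fun j _ => hEnn j
  have hX2bound : ∫ ω, X ω ^ 2 ∂μpr ≤
      Z ^ 2 / ((N : ℝ) + 1) * ∑ j ∈ univ.filter (fun j => b j ∈ actle), E j := by
    rw [hX2integral]
    have h1 : ∑ j ∈ univ.filter (fun j => b j ∈ actle), qz j ^ 2 * (E j / ((N : ℝ) + 1))
        = ∑ j, qz j ^ 2 * (E j / ((N : ℝ) + 1)) := by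
      refine Finset.sum_subset (Finset.filter_subset _ _) fun j _ hj => ?_
      rw [hqzzero' j (by simpa using hj)]
      ring
    rw [← h1, Finset.mul_sum]
    refine Finset.sum_le_sum fun j _ => ?_
    have : qz j ^ 2 ≤ Z ^ 2 := by
      rw [← sq_abs (qz j)]
      exact pow_le_pow_left₀ (abs_nonneg _) (hZb j) 2
    have hE := hEnn j
    rw [div_mul_eq_mul_div, mul_div_assoc]
    exact mul_le_mul_of_nonneg_right this (by positivity)
  -- integrability
  have hXmeas : Measurable X :=
    (measurable_of_countable qz).comp ((hχmeas (N + 1)).mono (ℱ.le (N + 1)) le_rfl)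
  have hX2int : Integrable (fun ω => X ω ^ 2) μpr := by
    refine (integrable_const (Z ^ 2)).mono' ((hXmeas.pow_const 2).aestronglyMeasurable) ?_
    refine ae_of_all _ fun ω => ?_
    rw [Real.norm_eq_abs, abs_of_nonneg (sq_nonneg _), ← sq_abs]
    exact pow_le_pow_left₀ (abs_nonneg _) (hXb ω) 2
  have hDDmeas : Measurable DD := by
    refine Measurable.div_const (Measurable.add ?_ ?_) _
    · exact (Finset.measurable_sum _ fun i _ => (hCmeas0 N i).mul_const _).const_mul _
    · exact Finset.measurable_sum _ fun m _ =>
        Finset.measurable_sum _ fun i _ => (hCmeas0 N i).mul_const _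
  have hDDbd : ∀ ω, |DD ω| ≤ Z := by
    intro ω
    have := hDDb ω
    have h2 : Z * W ω ≤ Z * ((N : ℝ) + 1) := mul_le_mul_of_nonneg_left (hWb ω) hZnn
    nlinarith [hN1pos]
  have hDD2int : Integrable (fun ω => DD ω ^ 2) μpr := by
    refine (integrable_const (Z ^ 2)).mono' ((hDDmeas.pow_const 2).aestronglyMeasurable) ?_
    refine ae_of_all _ fun ω => ?_
    rw [Real.norm_eq_abs, abs_of_nonneg (sq_nonneg _), ← sq_abs]
    exact pow_le_pow_left₀ (abs_nonneg _) (hDDbd ω) 2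
  have hWint : Integrable W μpr := integrable_finset_sum _ fun j _ => hCint N j
  have hDD2bound : ∫ ω, DD ω ^ 2 ∂μpr ≤
      Z ^ 2 / ((N : ℝ) + 1) * ∑ j ∈ univ.filter (fun j => b j ∈ actle), E j := by
    have h1 : ∫ ω, DD ω ^ 2 ∂μpr ≤ ∫ ω, Z ^ 2 * W ω / ((N : ℝ) + 1) ∂μpr := by
      refine integral_mono hDD2int ?_ hDD2
      exact ((hWint.const_mul _).div_const _)
    refine h1.trans_eq ?_
    rw [show (fun ω => Z ^ 2 * W ω / ((N : ℝ) + 1)) = fun ω => (Z ^ 2 / ((N : ℝ) + 1)) * W ω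
      from funext fun ω => by ring]
    rw [integral_const_mul]
    congr 1
    rw [hWdef, integral_finset_sum _ (fun j _ => hCint N j)]
  -- the difference squared
  have hΔmeas : Measurable fun ω => (M (N + 1) ω - M N ω) ^ 2 :=
    ((hMmeasF (N + 1)).mono (ℱ.le (N + 1)) le_rfl).sub
      ((hMmeasF N).mono (ℱ.le N) le_rfl) |>.pow_const 2
  have hΔbd : ∀ ω, (M (N + 1) ω - M N ω) ^ 2 ≤
      (2 * X ω ^ 2 + 2 * DD ω ^ 2) / P (N + 1) ^ 2 := by
    intro ω
    rw [hdiff N ω]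
    rw [div_pow, div_le_div_iff₀ (by positivity) (by positivity)]
    have : (X ω - DD ω) ^ 2 ≤ 2 * X ω ^ 2 + 2 * DD ω ^ 2 := by nlinarith [sq_nonneg (X ω + DD ω)]
    nlinarith [sq_nonneg (P (N + 1)), this, hP1pos]
  have hΔint : Integrable (fun ω => (M (N + 1) ω - M N ω) ^ 2) μpr := by
    refine (integrable_const ((2 * Z ^ 2 + 2 * Z ^ 2) / P (N + 1) ^ 2)).mono'
      hΔmeas.aestronglyMeasurable ?_
    refine ae_of_all _ fun ω => ?_
    rw [Real.norm_eq_abs, abs_of_nonneg (sq_nonneg _)]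
    refine (hΔbd ω).trans ?_
    have hx : X ω ^ 2 ≤ Z ^ 2 := by
      rw [← sq_abs (X ω)]; exact pow_le_pow_left₀ (abs_nonneg _) (hXb ω) 2
    have hd : DD ω ^ 2 ≤ Z ^ 2 := by
      rw [← sq_abs (DD ω)]; exact pow_le_pow_left₀ (abs_nonneg _) (hDDbd ω) 2
    have hp2 : (0:ℝ) < P (N + 1) ^ 2 := by positivity
    exact (div_le_div_iff_of_pos_right hp2).2 (by linarith)
  have hmain : ∫ ω, (M (N + 1) ω - M N ω) ^ 2 ∂μpr ≤
      4 * Z ^ 2 / (((N : ℝ) + 1) * P (N + 1) ^ 2) *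
        ∑ j ∈ univ.filter (fun j => b j ∈ actle), E j := by
    have h1 : ∫ ω, (M (N + 1) ω - M N ω) ^ 2 ∂μpr ≤
        ∫ ω, (2 * X ω ^ 2 + 2 * DD ω ^ 2) / P (N + 1) ^ 2 ∂μpr := by
      refine integral_mono hΔint ?_ hΔbd
      exact (((hX2int.const_mul _).add (hDD2int.const_mul _)).div_const _)
    refine h1.trans ?_
    rw [integral_div, integral_add (hX2int.const_mul _) (hDD2int.const_mul _),
      integral_const_mul, integral_const_mul]
    rw [div_le_iff₀ (by positivity)]
    have := hX2bound
    have := hDD2bound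
    have hSig2 : 4 * Z ^ 2 / (((N : ℝ) + 1) * P (N + 1) ^ 2) *
        (∑ j ∈ univ.filter (fun j => b j ∈ actle), E j) * P (N + 1) ^ 2
        = 4 * (Z ^ 2 / ((N : ℝ) + 1) * ∑ j ∈ univ.filter (fun j => b j ∈ actle), E j) := by
      field_simp
    rw [hSig2]
    linarith [hX2bound, hDD2bound]
  calc ∫ ω, (M (N + 1) ω - M N ω) ^ 2 ∂μpr
      ≤ 4 * Z ^ 2 / (((N : ℝ) + 1) * P (N + 1) ^ 2) *
        ∑ j ∈ univ.filter (fun j => b j ∈ actle), E j := hmain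
    _ ≤ (4 * Z ^ 2 + 1) / (((N : ℝ) + 1) * P (N + 1) ^ 2) *
        ∑ j ∈ univ.filter (fun j => b j ∈ actle), E j := by
        refine mul_le_mul_of_nonneg_right ((div_le_div_iff_of_pos_right (by positivity)).2 (by linarith)) hSignn
    _ = (4 * Z ^ 2 + 1) / (((N : ℝ) + 1) * P (N + 1) ^ 2) *
        ∑ m ∈ actle, ∫ ω, (∑ i ∈ univ.filter (fun i => b i = m), C N ω i) ∂μpr := by
        rw [hSig]
end

section
/- In the urn model with an irreducible balanced nonnegative replacement matrix Q_1 as the only block (μ_1 being its PF eigenvalue, 0 < μ_1), if ν is an eigenvalue of Q_1 other than μ_1 with Jordan chain ξ_1,…,ξ_t (ξ_0 = 0, Q_1 ξ_i = ξ_{i-1} + ν ξ_i), then C_N^{(1)} ξ_i / N^{μ_1} → 0 almost surely and in L² for each i = 1,…,t. -/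
open Matrix Finset MeasureTheory Filter

namespace UrnAux


/-- real inner product on ℂ -/
def crx (z w : ℂ) : ℝ := z.re * w.re + z.im * w.im

lemma normSq_add' (z w : ℂ) :
    Complex.normSq (z + w) = Complex.normSq z + 2 * crx z w + Complex.normSq w := by
  simp [Complex.normSq_apply, crx]; ring

lemma crx_mul_real (z w : ℂ) (c : ℝ) : crx z ((c : ℂ) * w) = c * crx z w := by
  simp [crx]; ring

lemma crx_add_right (z w₁ w₂ : ℂ) : crx z (w₁ + w₂) = crx z w₁ + crx z w₂ := by
  simp [crx]; ring

lemma crx_mul_self (z : ℂ) (ν : ℂ) : crx z (ν * z) = ν.re * Complex.normSq z := by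
  simp [crx, Complex.normSq_apply]; ring


lemma abs_crx_le (z w : ℂ) : |crx z w| ≤ ‖z‖ * ‖w‖ := by
  have h1 : (z.re * w.re + z.im * w.im) ^ 2 ≤ (z.re ^ 2 + z.im ^ 2) * (w.re ^ 2 + w.im ^ 2) := by
    nlinarith [sq_nonneg (z.re * w.im - z.im * w.re)]
  have h2 : (0:ℝ) ≤ ‖z‖ * ‖w‖ := by positivity
  rw [crx, abs_le]
  constructor <;>
    nlinarith [Complex.sq_norm z, Complex.sq_norm w, Complex.normSq_apply z,
      Complex.normSq_apply w, norm_nonneg z, norm_nonneg w]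

lemma crx_le (z w : ℂ) : crx z w ≤ ‖z‖ * ‖w‖ :=
  (le_abs_self _).trans (abs_crx_le z w)

lemma integrable_of_bdd {Ω : Type*} {m0 : MeasurableSpace Ω} {μ : Measure Ω}
    [IsFiniteMeasure μ] {g : Ω → ℝ} (hm : AEStronglyMeasurable g μ) (B : ℝ)
    (hb : ∀ ω, |g ω| ≤ B) : Integrable g μ :=
  (integrable_const B).mono' hm (ae_of_all _ (by simpa [Real.norm_eq_abs] using hb))

lemma integral_mul_condexp {Ω : Type*} {m0 : MeasurableSpace Ω} {μ : Measure Ω}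
    [IsProbabilityMeasure μ] {m : MeasurableSpace Ω} (hm : m ≤ m0) {g h : Ω → ℝ}
    (hg : StronglyMeasurable[m] g) (hgh : Integrable (fun ω => g ω * h ω) μ)
    (hh : Integrable h μ) :
    ∫ ω, g ω * h ω ∂μ = ∫ ω, g ω * (μ[h|m]) ω ∂μ := by
  have hpull := condExp_mul_of_stronglyMeasurable_left (μ := μ) hg (by exact hgh) hh
  calc ∫ ω, g ω * h ω ∂μ = ∫ ω, (μ[(fun ω => g ω * h ω)|m]) ω ∂μ :=
        (integral_condExp hm).symm
    _ = ∫ ω, g ω * (μ[h|m]) ω ∂μ := integral_congr_ae hpull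




lemma spec_unit_iff {D : ℕ} (A : Matrix (Fin D) (Fin D) ℂ) (z : ℂ)
    (hz : z ∈ spectrum ℂ A) : ∃ v, v ≠ 0 ∧ A.mulVec v = z • v := by
  rw [spectrum.mem_iff] at hz
  rw [Matrix.isUnit_iff_isUnit_det, isUnit_iff_ne_zero, not_not] at hz
  obtain ⟨v, hv0, hv⟩ := Matrix.exists_mulVec_eq_zero_iff.2 hz
  refine ⟨v, hv0, ?_⟩
  have : (algebraMap ℂ (Matrix (Fin D) (Fin D) ℂ)) z = z • (1 : Matrix (Fin D) (Fin D) ℂ) := by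
    simp [Algebra.algebraMap_eq_smul_one]
  rw [this, Matrix.sub_mulVec, Matrix.smul_mulVec, Matrix.one_mulVec, sub_eq_zero] at hv
  exact hv.symm

lemma spec_abs_le {D : ℕ} (A : Matrix (Fin D) (Fin D) ℂ)
    (h : ∀ i, ∑ j, ‖A i j‖ ≤ 1) {z : ℂ} (hz : z ∈ spectrum ℂ A) :
    ‖z‖ ≤ 1 := by
  obtain ⟨v, hv0, hv⟩ := spec_unit_iff A z hz
  obtain ⟨j, -, hj⟩ := Finset.exists_max_image Finset.univ (fun k => ‖v k‖)
    ⟨(Function.ne_iff.1 hv0).choose, Finset.mem_univ _⟩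
  have hvj : 0 < ‖v j‖ := by
    obtain ⟨k, hk⟩ := Function.ne_iff.1 hv0
    have := hj k (Finset.mem_univ k)
    have hk' : 0 < ‖v k‖ := by simpa [norm_pos_iff] using hk
    linarith
  have key : ‖z‖ * ‖v j‖ ≤ ‖v j‖ := by
    have h1 : ‖z‖ * ‖v j‖ = ‖(A.mulVec v) j‖ := by
      rw [hv]; simp [Pi.smul_apply, norm_mul]
    rw [h1]
    calc ‖(A.mulVec v) j‖ ≤ ∑ k, ‖A j k * v k‖ := by
          simp only [Matrix.mulVec, dotProduct]
          exact norm_sum_le _ _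
      _ ≤ ∑ k, ‖A j k‖ * ‖v j‖ := by
          refine Finset.sum_le_sum fun k _ => ?_
          rw [norm_mul]
          exact mul_le_mul_of_nonneg_left (hj k (Finset.mem_univ k)) (norm_nonneg _)
      _ = (∑ k, ‖A j k‖) * ‖v j‖ := by rw [Finset.sum_mul]
      _ ≤ 1 * ‖v j‖ := mul_le_mul_of_nonneg_right (h j) (norm_nonneg _)
      _ = ‖v j‖ := one_mul _
  exact le_of_mul_le_mul_right (by linarith) hvj

lemma one_mem_spec {D : ℕ} (hD : 0 < D) (A : Matrix (Fin D) (Fin D) ℂ)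
    (h : ∀ i, ∑ j, A i j = 1) : (1 : ℂ) ∈ spectrum ℂ A := by
  rw [spectrum.mem_iff, Matrix.isUnit_iff_isUnit_det, isUnit_iff_ne_zero, not_not,
    ← Matrix.exists_mulVec_eq_zero_iff]
  refine ⟨fun _ => 1, ?_, ?_⟩
  · have : Nonempty (Fin D) := ⟨⟨0, hD⟩⟩
    intro hc
    have := congrFun hc (Classical.arbitrary (Fin D))
    simp at this
  · funext i
    have : (algebraMap ℂ (Matrix (Fin D) (Fin D) ℂ)) 1 = (1 : Matrix (Fin D) (Fin D) ℂ) := by simp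
    rw [this, Matrix.sub_mulVec, Matrix.one_mulVec]
    simp [Matrix.mulVec, dotProduct, h i]




lemma growth {a : ℕ → ℝ} {r γ γ' c : ℝ} (hr : 0 ≤ r) (hγr : r < γ)
    (hγ : 2 * γ = 1 + γ') (hγ'0 : 0 ≤ γ') (hc : 0 ≤ c)
    (hbase : a 0 ≤ c)
    (hstep : ∀ N : ℕ, a (N + 1) ≤ a N * (1 + 2 * r / ((N : ℝ) + 1)) + c * ((N : ℝ) + 1) ^ γ') :
    ∀ N : ℕ, a N ≤ (c / (γ - r) + c) * ((N : ℝ) + 1) ^ (2 * γ) := by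
  obtain ⟨Cst, hCst⟩ : ∃ C : ℝ, C = c / (γ - r) + c := ⟨_, rfl⟩
  rw [← hCst]
  have hγr' : 0 < γ - r := by linarith
  have hdiv : 0 ≤ c / (γ - r) := div_nonneg hc hγr'.le
  have hCc : c ≤ Cst := by rw [hCst]; linarith
  have hC0 : 0 ≤ Cst := hc.trans hCc
  have h2γ : 1 ≤ 2 * γ := by linarith
  intro N
  induction N with
  | zero => simpa using hbase.trans (by simpa using hCc)
  | succ N ih =>
    have hcast : ((N + 1 : ℕ) : ℝ) + 1 = (N : ℝ) + 2 := by push_cast; ring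
    rw [hcast]
    have hN1 : (0:ℝ) < (N : ℝ) + 1 := by positivity
    have hbern : ((N : ℝ) + 1) ^ (2 * γ) * (1 + 2 * γ / ((N : ℝ) + 1)) ≤ ((N : ℝ) + 2) ^ (2 * γ) := by
      have hs0 : (0:ℝ) ≤ 1 / ((N : ℝ) + 1) := by positivity
      have h := one_add_mul_self_le_rpow_one_add (by linarith : (-1:ℝ) ≤ 1 / ((N : ℝ) + 1)) h2γ
      have hx : ((N : ℝ) + 2) = ((N : ℝ) + 1) * (1 + 1 / ((N : ℝ) + 1)) := by
        field_simp; ring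
      rw [hx, Real.mul_rpow hN1.le (by linarith)]
      have h1 : (1 + 2 * γ / ((N : ℝ) + 1)) = 1 + (2 * γ) * (1 / ((N : ℝ) + 1)) := by ring
      rw [h1]
      exact mul_le_mul_of_nonneg_left h (Real.rpow_nonneg hN1.le _)
    have hpow' : ((N : ℝ) + 1) ^ γ' = ((N : ℝ) + 1) ^ (2 * γ) / ((N : ℝ) + 1) := by
      rw [eq_div_iff hN1.ne', show (2 * γ) = γ' + 1 by linarith, Real.rpow_add hN1,
        Real.rpow_one]
    have hP : (0:ℝ) ≤ ((N : ℝ) + 1) ^ (2 * γ) := Real.rpow_nonneg hN1.le _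
    have hmul : (0:ℝ) ≤ 1 + 2 * r / ((N : ℝ) + 1) := by positivity
    have key : c ≤ 2 * (γ - r) * Cst := by
      rw [hCst]
      have h1 : (γ - r) * (c / (γ - r)) = c := by field_simp
      nlinarith [mul_nonneg hγr'.le hc]
    calc a (N + 1) ≤ a N * (1 + 2 * r / ((N : ℝ) + 1)) + c * ((N : ℝ) + 1) ^ γ' := hstep N
      _ ≤ Cst * ((N : ℝ) + 1) ^ (2 * γ) * (1 + 2 * r / ((N : ℝ) + 1)) + c * ((N : ℝ) + 1) ^ γ' := by
          have := mul_le_mul_of_nonneg_right ih hmul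
          linarith
      _ ≤ Cst * (((N : ℝ) + 1) ^ (2 * γ) * (1 + 2 * γ / ((N : ℝ) + 1))) := by
          rw [hpow']
          have expand : Cst * (((N : ℝ) + 1) ^ (2 * γ) * (1 + 2 * γ / ((N : ℝ) + 1)))
              - (Cst * ((N : ℝ) + 1) ^ (2 * γ) * (1 + 2 * r / ((N : ℝ) + 1))
                + c * (((N : ℝ) + 1) ^ (2 * γ) / ((N : ℝ) + 1)))
              = (((N : ℝ) + 1) ^ (2 * γ) / ((N : ℝ) + 1)) * (2 * (γ - r) * Cst - c) := by
            field_simp; ring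
          have h2 : 0 ≤ (((N : ℝ) + 1) ^ (2 * γ) / ((N : ℝ) + 1)) * (2 * (γ - r) * Cst - c) :=
            mul_nonneg (div_nonneg hP hN1.le) (by linarith)
          linarith
      _ ≤ Cst * ((N : ℝ) + 2) ^ (2 * γ) := mul_le_mul_of_nonneg_left hbern hC0



lemma R_bounds (s N : ℕ) :
    (Nat.sqrt^[s] N) ^ 2 ^ s ≤ N ∧ N < (Nat.sqrt^[s] N + 1) ^ 2 ^ s := by
  induction s generalizing N with
  | zero => simpa using Nat.lt_succ_self N
  | succ s ih =>
    rw [Function.iterate_succ_apply]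
    obtain ⟨h1, h2⟩ := ih (Nat.sqrt N)
    constructor
    · calc (Nat.sqrt^[s] (Nat.sqrt N)) ^ 2 ^ (s + 1)
          = ((Nat.sqrt^[s] (Nat.sqrt N)) ^ 2 ^ s) ^ 2 := by
            rw [← pow_mul, pow_succ]
        _ ≤ (Nat.sqrt N) ^ 2 := Nat.pow_le_pow_left h1 2
        _ ≤ N := Nat.sqrt_le' N
    · calc N < (Nat.sqrt N + 1) ^ 2 := by
            simpa [Nat.succ_eq_add_one] using Nat.lt_succ_sqrt' N
        _ ≤ ((Nat.sqrt^[s] (Nat.sqrt N) + 1) ^ 2 ^ s) ^ 2 := Nat.pow_le_pow_left h2 2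
        _ = (Nat.sqrt^[s] (Nat.sqrt N) + 1) ^ 2 ^ (s + 1) := by rw [← pow_mul, pow_succ]

lemma R_tendsto (s : ℕ) : Tendsto (fun N => Nat.sqrt^[s] N) atTop atTop := by
  refine tendsto_atTop_atTop.2 fun b => ⟨b ^ 2 ^ s, fun N hN => ?_⟩
  by_contra hb
  push_neg at hb
  have h2 := (R_bounds s N).2
  have : N < b ^ 2 ^ s :=
    lt_of_lt_of_le h2 (Nat.pow_le_pow_left (by omega) _)
  omega

lemma binom_aux : ∀ p : ℕ, 1 ≤ p → ∀ m : ℕ, (m + 1) ^ p ≤ m ^ p + p * (m + 1) ^ (p - 1) := by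
  intro p
  induction p with
  | zero => omega
  | succ p ih =>
    intro _ m
    rcases Nat.eq_zero_or_pos p with hp | hp
    · subst hp; simp
    · have h := ih hp m
      have hle : m ^ p ≤ (m + 1) ^ p := Nat.pow_le_pow_left (by omega) p
      calc (m + 1) ^ (p + 1) = (m + 1) ^ p * m + (m + 1) ^ p := by ring
        _ ≤ (m ^ p + p * (m + 1) ^ (p - 1)) * m + (m + 1) ^ p := by
            exact Nat.add_le_add_right (Nat.mul_le_mul_right m h) _
        _ = m ^ p * m + p * ((m + 1) ^ (p - 1) * m) + (m + 1) ^ p := by ring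
        _ ≤ m ^ (p + 1) + p * (m + 1) ^ p + (m + 1) ^ p := by
            have : (m + 1) ^ (p - 1) * m ≤ (m + 1) ^ p := by
              calc (m + 1) ^ (p - 1) * m ≤ (m + 1) ^ (p - 1) * (m + 1) :=
                    Nat.mul_le_mul_left _ (by omega)
                _ = (m + 1) ^ (p - 1 + 1) := by rw [pow_succ]
                _ = (m + 1) ^ p := by congr 1; omega
            have := Nat.mul_le_mul_left p this
            rw [pow_succ]
            omega
        _ = m ^ (p + 1) + (p + 1) * (m + 1) ^ (p + 1 - 1) := by
            simp [Nat.add_sub_cancel]; ring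

lemma gap_le (p m : ℕ) (hp : 1 ≤ p) (hm : 1 ≤ m) :
    (m + 1) ^ p ≤ m ^ p + p * 2 ^ (p - 1) * m ^ (p - 1) := by
  have h := binom_aux p hp m
  have h2 : (m + 1) ^ (p - 1) ≤ 2 ^ (p - 1) * m ^ (p - 1) := by
    rw [← mul_pow]
    exact Nat.pow_le_pow_left (by omega) _
  calc (m + 1) ^ p ≤ m ^ p + p * (m + 1) ^ (p - 1) := h
    _ ≤ m ^ p + p * (2 ^ (p - 1) * m ^ (p - 1)) := by
        exact Nat.add_le_add_left (Nat.mul_le_mul_left p h2) _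
    _ = m ^ p + p * 2 ^ (p - 1) * m ^ (p - 1) := by ring

lemma interp {u : ℕ → ℝ} (hu0 : ∀ n, 0 ≤ u n) {K : ℝ} (hK : 0 ≤ K)
    (hstep : ∀ n, u (n + 1) ≤ u n + K) (s : ℕ)
    (hsub : Tendsto (fun m : ℕ => u ((m + 1) ^ 2 ^ s) / (((m + 1) ^ 2 ^ s : ℕ) : ℝ))
      atTop (nhds 0)) :
    Tendsto (fun n : ℕ => u n / n) atTop (nhds 0) := by
  set p : ℕ := 2 ^ s with hpdef
  have hp : 1 ≤ p := Nat.one_le_two_pow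
  have hiter : ∀ a k : ℕ, u (a + k) ≤ u a + K * k := by
    intro a k
    induction k with
    | zero => simp
    | succ k ih =>
      have h := hstep (a + k)
      have heq : a + (k + 1) = (a + k) + 1 := by omega
      rw [heq]
      push_cast
      push_cast at ih
      linarith
  -- the dominating sequence
  set G : ℕ → ℝ := fun m => u ((m + 1) ^ p) / (((m + 1) ^ p : ℕ) : ℝ)
      + K * p * 2 ^ (p - 1) / ((m + 1 : ℕ) : ℝ) with hGdef
  have hG : Tendsto G atTop (nhds 0) := by
    have hb : Tendsto (fun m : ℕ => ((m + 1 : ℕ) : ℝ)) atTop atTop := by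
      simpa only [Function.comp_def] using
        (tendsto_natCast_atTop_atTop (R := ℝ)).comp (tendsto_add_atTop_nat 1)
    have h2 : Tendsto (fun m : ℕ => K * ↑p * 2 ^ (p - 1) / ((m + 1 : ℕ) : ℝ)) atTop (nhds 0) :=
      tendsto_const_nhds.div_atTop hb
    simpa only [add_zero] using hsub.add h2
  have hRt : Tendsto (fun N => Nat.sqrt^[s] N - 1) atTop atTop :=
    (tendsto_sub_atTop_nat 1).comp (R_tendsto s)
  refine squeeze_zero' ?_ ?_ (hG.comp hRt)
  · exact Eventually.of_forall fun n => div_nonneg (hu0 n) (Nat.cast_nonneg n)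
  · filter_upwards [eventually_ge_atTop 1] with N hN1
    set m : ℕ := Nat.sqrt^[s] N with hmdef
    have hmb := R_bounds s N
    rw [← hmdef, ← hpdef] at hmb
    have hm1 : 1 ≤ m := by
      rcases Nat.eq_zero_or_pos m with h0 | h1
      · exfalso; rw [h0] at hmb; simp at hmb; omega
      · exact h1
    have hm0 : (0:ℝ) < ((m ^ p : ℕ) : ℝ) := by
      have : 1 ≤ m ^ p := Nat.one_le_pow _ _ (by omega)
      exact_mod_cast Nat.lt_of_lt_of_le Nat.zero_lt_one this
    have hNpos : (0:ℝ) < (N : ℝ) := by exact_mod_cast Nat.lt_of_lt_of_le Nat.zero_lt_one hN1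
    have hmpN : m ^ p ≤ N := hmb.1
    -- step 1 : u N / N ≤ u N / m^p
    have step1 : u N / (N : ℝ) ≤ u N / ((m ^ p : ℕ) : ℝ) :=
      div_le_div_of_nonneg_left (hu0 N) hm0 (by exact_mod_cast hmpN)
    -- step 2 : u N ≤ u (m^p) + K * (N - m^p)
    have step2 : u N ≤ u (m ^ p) + K * ((N - m ^ p : ℕ) : ℝ) := by
      have := hiter (m ^ p) (N - m ^ p)
      rwa [Nat.add_sub_cancel' hmpN] at this
    -- step 3 : (N - m^p : ℕ) ≤ p * 2^(p-1) * m^(p-1)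
    have step3 : (N - m ^ p : ℕ) ≤ p * 2 ^ (p - 1) * m ^ (p - 1) := by
      have h1 := hmb.2
      have h2 := gap_le p m hp hm1
      omega
    have hKs : K * ((N - m ^ p : ℕ) : ℝ) ≤ K * ((p * 2 ^ (p - 1) * m ^ (p - 1) : ℕ) : ℝ) :=
      mul_le_mul_of_nonneg_left (by exact_mod_cast step3) hK
    have hmp_split : ((m ^ p : ℕ) : ℝ) = ((m ^ (p - 1) : ℕ) : ℝ) * (m : ℝ) := by
      push_cast
      rw [← pow_succ]
      congr 1
      omega
    have hmm1 : m - 1 + 1 = m := by omega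
    have final : u N / ((m ^ p : ℕ) : ℝ) ≤ G (m - 1) := by
      rw [hGdef]
      simp only [hmm1]
      have expand : (u (m ^ p) + K * ((p * 2 ^ (p - 1) * m ^ (p - 1) : ℕ) : ℝ)) / ((m ^ p : ℕ) : ℝ)
          = u (m ^ p) / ((m ^ p : ℕ) : ℝ) + K * p * 2 ^ (p - 1) / (m : ℝ) := by
        rw [add_div]
        congr 1
        rw [hmp_split]
        have hm1' : (0:ℝ) < ((m ^ (p - 1) : ℕ) : ℝ) := by
          have : 1 ≤ m ^ (p - 1) := Nat.one_le_pow _ _ (by omega)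
          exact_mod_cast Nat.lt_of_lt_of_le Nat.zero_lt_one this
        have hmr : (0:ℝ) < (m : ℝ) := by exact_mod_cast hm1
        field_simp
        push_cast
        ring
      calc u N / ((m ^ p : ℕ) : ℝ)
          ≤ (u (m ^ p) + K * ((N - m ^ p : ℕ) : ℝ)) / ((m ^ p : ℕ) : ℝ) := by
            exact (div_le_div_iff_of_pos_right hm0).2 (by linarith)
        _ ≤ (u (m ^ p) + K * ((p * 2 ^ (p - 1) * m ^ (p - 1) : ℕ) : ℝ)) / ((m ^ p : ℕ) : ℝ) :=
            (div_le_div_iff_of_pos_right hm0).2 (by linarith)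
        _ = u (m ^ p) / ((m ^ p : ℕ) : ℝ) + K * p * 2 ^ (p - 1) / (m : ℝ) := expand
    calc u N / (N : ℝ) ≤ u N / ((m ^ p : ℕ) : ℝ) := step1
      _ ≤ G (m - 1) := final
      _ = (G ∘ fun N => Nat.sqrt^[s] N - 1) N := rfl


lemma crx_zero_right (z : ℂ) : crx z 0 = 0 := by simp [crx]

lemma crx_sum (z : ℂ) {ι : Type*} (s : Finset ι) (w : ι → ℂ) :
    crx z (∑ j ∈ s, w j) = ∑ j ∈ s, crx z (w j) := by
  induction s using Finset.cons_induction with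
  | empty => simp [crx]
  | cons a s ha ih => rw [Finset.sum_cons, Finset.sum_cons, crx_add_right, ih]

end UrnAux

set_option maxHeartbeats 1000000 in
/-- Urn model with an irreducible balanced nonnegative replacement matrix `Q₁` as the
only block, with Perron–Frobenius eigenvalue `μ₁ > 0`.  If `ν ≠ μ₁` is another
eigenvalue (so `Re ν < μ₁`) with Jordan chain `ξ_1, …, ξ_t` (`ξ_0 = 0`,
`Q₁ ξ_i = ξ_{i-1} + ν ξ_i`), then `C_N ξ_i / N^{μ₁} → 0` almost surely and in `L²`
for each `i = 1, …, t`. -/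
theorem urn_jordan_directions_vanish
    (D : ℕ) (Q1 : Matrix (Fin D) (Fin D) ℝ)
    (hpos : ∀ i j, 0 ≤ Q1 i j) (hrow : ∀ i, ∑ j, Q1 i j = 1)
    (hirr : ∀ i j : Fin D, ∃ n : ℕ, 0 < n ∧ 0 < (Q1 ^ n) i j)
    (μ1 : ℝ) (hμ1pos : 0 < μ1)
    (hμ1mem : (μ1 : ℂ) ∈ spectrum ℂ (Q1.map (Complex.ofReal ·)))
    (hμ1top : ∀ z ∈ spectrum ℂ (Q1.map (Complex.ofReal ·)), ‖z‖ ≤ μ1)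
    (ν : ℂ) (hνmem : ν ∈ spectrum ℂ (Q1.map (Complex.ofReal ·)))
    (hνne : ν ≠ (μ1 : ℂ)) (hνre : ν.re < μ1)
    (t : ℕ) (ht : 1 ≤ t)
    (ξ : ℕ → Fin D → ℂ) (hξ0 : ξ 0 = 0)
    (hchain : ∀ i : ℕ, 1 ≤ i → i ≤ t →
      (Q1.map (Complex.ofReal ·)).mulVec (ξ i) = ξ (i - 1) + ν • ξ i)
    -- urn dynamics
    {Ω : Type*} {m0 : MeasurableSpace Ω} (μpr : MeasureTheory.Measure Ω)
    [MeasureTheory.IsProbabilityMeasure μpr]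
    (ℱ : MeasureTheory.Filtration ℕ m0)
    (χ : ℕ → Ω → Fin D)
    (hχmeas : ∀ N, Measurable[ℱ N] (χ N))
    (C : ℕ → Ω → Fin D → ℝ) (C0 : Fin D → ℝ)
    (hC0pos : ∀ i, 0 < C0 i) (hC0sum : ∑ i, C0 i = 1)
    (hCinit : ∀ ω, C 0 ω = C0)
    (hCrec : ∀ N ω i, C (N + 1) ω i = C N ω i + Q1 (χ (N + 1) ω) i)
    (hCmeas : ∀ N, Measurable[ℱ N] (C N))
    (hdraw : ∀ N (i : Fin D),
      μpr[(fun ω => if χ (N + 1) ω = i then (1 : ℝ) else 0)|ℱ N]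
        =ᵐ[μpr] fun ω => C N ω i / ((N : ℝ) + 1)) :
    ∀ i : ℕ, 1 ≤ i → i ≤ t →
      (∀ᵐ ω ∂μpr, Tendsto
        (fun N : ℕ => (∑ jj, (C N ω jj : ℂ) * ξ i jj) / (N : ℂ) ^ (μ1 : ℂ))
        atTop (nhds 0)) ∧
      Tendsto (fun N : ℕ =>
          ∫ ω, ‖(∑ jj, (C N ω jj : ℂ) * ξ i jj) / (N : ℂ) ^ (μ1 : ℂ)‖ ^ 2 ∂μpr)
        atTop (nhds 0) := by
  classical
  -- D is positive
  have hD : 0 < D := by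
    rcases Nat.eq_zero_or_pos D with h0 | h
    · exfalso; subst h0; simpa using hC0sum
    · exact h
  -- μ1 = 1
  have hrowC : ∀ i, ∑ j, (Q1.map (Complex.ofReal ·)) i j = 1 := by
    intro i
    simp only [Matrix.map_apply]
    rw [← Complex.ofReal_sum, hrow i, Complex.ofReal_one]
  have habs : ∀ i, ∑ j, ‖(Q1.map (Complex.ofReal ·)) i j‖ ≤ 1 := by
    intro i
    have he : ∀ j, ‖(Q1.map (Complex.ofReal ·)) i j‖ = Q1 i j := by
      intro j
      simp [Matrix.map_apply, Complex.norm_of_nonneg (hpos i j), hpos i j]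
    rw [Finset.sum_congr rfl fun j _ => he j, hrow i]
  have hμ11 : μ1 = 1 := by
    have h1 := UrnAux.spec_abs_le _ habs hμ1mem
    rw [Complex.norm_of_nonneg hμ1pos.le] at h1
    have h2 := hμ1top 1 (UrnAux.one_mem_spec hD _ hrowC)
    rw [norm_one] at h2
    linarith
  subst hμ11
  -- urn composition facts
  have hCnn : ∀ N ω j, 0 ≤ C N ω j := by
    intro N
    induction N with
    | zero => intro ω j; rw [hCinit]; exact (hC0pos j).le
    | succ N ih => intro ω j; rw [hCrec]; exact add_nonneg (ih ω j) (hpos _ j)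
  have hCsum : ∀ N ω, ∑ j, C N ω j = (N : ℝ) + 1 := by
    intro N
    induction N with
    | zero => intro ω; simp [hCinit, hC0sum]
    | succ N ih =>
      intro ω
      simp only [hCrec]
      rw [Finset.sum_add_distrib, ih ω, hrow]
      push_cast; ring
  have hCle : ∀ N ω j, C N ω j ≤ (N : ℝ) + 1 := by
    intro N ω j
    rw [← hCsum N ω]
    exact Finset.single_le_sum (fun k _ => hCnn N ω k) (Finset.mem_univ j)
  -- notation
  set X : ℕ → ℕ → Ω → ℂ := fun i N ω => ∑ jj, (C N ω jj : ℂ) * ξ i jj with hXdef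
  set Kc : ℕ → ℝ := fun i => ∑ j, ‖ξ i j‖ with hKcdef
  set f : ℕ → Fin D → ℂ := fun i j => ξ (i - 1) j + ν * ξ i j with hfdef
  set Kf : ℕ → ℝ := fun i => ∑ j, ‖f i j‖ with hKfdef
  have hKcnn : ∀ i, 0 ≤ Kc i := fun i =>
    Finset.sum_nonneg fun j _ => norm_nonneg _
  have hKfnn : ∀ i, 0 ≤ Kf i := fun i =>
    Finset.sum_nonneg fun j _ => norm_nonneg _
  have hfbd : ∀ i j, ‖f i j‖ ≤ Kf i := fun i j =>
    Finset.single_le_sum (f := fun j => ‖f i j‖)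
      (fun k _ => norm_nonneg _) (Finset.mem_univ j)
  have hX0 : ∀ N ω, X 0 N ω = 0 := by
    intro N ω
    simp [hXdef, hξ0]
  have hXbd : ∀ i N ω, ‖X i N ω‖ ≤ ((N : ℝ) + 1) * Kc i := by
    intro i N ω
    calc ‖X i N ω‖ ≤ ∑ jj, ‖(C N ω jj : ℂ) * ξ i jj‖ :=
          norm_sum_le _ _
      _ = ∑ jj, C N ω jj * ‖ξ i jj‖ := by
          refine Finset.sum_congr rfl fun jj _ => ?_
          rw [norm_mul, Complex.norm_of_nonneg (hCnn N ω jj)]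
      _ ≤ ∑ jj, ((N : ℝ) + 1) * ‖ξ i jj‖ := Finset.sum_le_sum fun jj _ =>
          mul_le_mul_of_nonneg_right (hCle N ω jj) (norm_nonneg _)
      _ = ((N : ℝ) + 1) * Kc i := by rw [← Finset.mul_sum]
  have hXrec : ∀ i, 1 ≤ i → i ≤ t → ∀ N ω,
      X i (N + 1) ω = X i N ω + f i (χ (N + 1) ω) := by
    intro i h1 h2 N ω
    have hch := congrFun (hchain i h1 h2) (χ (N + 1) ω)
    simp only [Matrix.mulVec, dotProduct, Matrix.map_apply, Pi.add_apply,
      Pi.smul_apply, smul_eq_mul] at hch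
    simp only [hXdef, hCrec, Complex.ofReal_add, add_mul, Finset.sum_add_distrib]
    rw [hch]
  -- measurability
  have hXmF : ∀ i N, Measurable[ℱ N] (X i N) := by
    intro i N
    refine Finset.measurable_sum _ fun jj _ => Measurable.mul_const ?_ _
    exact Complex.measurable_ofReal.comp ((measurable_pi_apply jj).comp (hCmeas N))
  have hXm : ∀ i N, Measurable (X i N) := fun i N => (hXmF i N).mono (ℱ.le N) le_rfl
  have hχm : ∀ N, Measurable (χ N) := fun N => (hχmeas N).mono (ℱ.le N) le_rfl
  -- second moments
  set a : ℕ → ℕ → ℝ := fun i N => ∫ ω, Complex.normSq (X i N ω) ∂μpr with hadef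
  have hnsqm : ∀ i N, Measurable fun ω => Complex.normSq (X i N ω) := fun i N =>
    Complex.continuous_normSq.measurable.comp (hXm i N)
  have hnsq_int : ∀ i N, Integrable (fun ω => Complex.normSq (X i N ω)) μpr := by
    intro i N
    refine UrnAux.integrable_of_bdd (hnsqm i N).aestronglyMeasurable
      ((((N : ℝ) + 1) * Kc i) ^ 2) fun ω => ?_
    rw [abs_of_nonneg (Complex.normSq_nonneg _), ← Complex.sq_norm]
    exact pow_le_pow_left₀ (norm_nonneg _) (hXbd i N ω) 2
  have ha_nn : ∀ i N, 0 ≤ a i N := fun i N =>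
    integral_nonneg fun ω => Complex.normSq_nonneg _
  have ha_bd : ∀ i N, a i N ≤ (((N : ℝ) + 1) * Kc i) ^ 2 := by
    intro i N
    have hmono : ∀ ω, Complex.normSq (X i N ω) ≤ (((N : ℝ) + 1) * Kc i) ^ 2 := fun ω => by
      rw [← Complex.sq_norm]
      exact pow_le_pow_left₀ (norm_nonneg _) (hXbd i N ω) 2
    calc a i N ≤ ∫ _, (((N : ℝ) + 1) * Kc i) ^ 2 ∂μpr :=
          integral_mono (hnsq_int i N) (integrable_const _) hmono
      _ = (((N : ℝ) + 1) * Kc i) ^ 2 := by simp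
  -- conditional expectation key identity
  have hEkey : ∀ (N : ℕ) (φ : Ω → ℂ) (g : Fin D → ℂ) (B : ℝ), 0 ≤ B →
      Measurable[ℱ N] φ → (∀ ω, ‖φ ω‖ ≤ B) →
      ∫ ω, UrnAux.crx (φ ω) (g (χ (N + 1) ω)) ∂μpr
        = (∫ ω, UrnAux.crx (φ ω) (∑ j, ((C N ω j : ℝ) : ℂ) * g j) ∂μpr) / ((N : ℝ) + 1) := by
    intro N φ g B hB0 hφm hφb
    have hφm0 : Measurable φ := hφm.mono (ℱ.le N) le_rfl
    have hIm : ∀ j : Fin D, Measurable fun ω => if χ (N + 1) ω = j then (1 : ℝ) else 0 := by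
      intro j
      have hset : MeasurableSet {ω | χ (N + 1) ω = j} :=
        (ℱ.le (N + 1)) _ (hχmeas (N + 1) (measurableSet_singleton j))
      exact Measurable.ite hset measurable_const measurable_const
    have hIle1 : ∀ j (ω : Ω), |if χ (N + 1) ω = j then (1 : ℝ) else 0| ≤ 1 := by
      intro j ω; split <;> norm_num
    have hgmF : ∀ j : Fin D, Measurable[ℱ N] fun ω => UrnAux.crx (φ ω) (g j) := by
      intro j
      exact ((Complex.measurable_re.comp hφm).mul_const _).add
        ((Complex.measurable_im.comp hφm).mul_const _)
    have hgm : ∀ j : Fin D, Measurable fun ω => UrnAux.crx (φ ω) (g j) := fun j =>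
      (hgmF j).mono (ℱ.le N) le_rfl
    have hgb : ∀ j (ω : Ω), |UrnAux.crx (φ ω) (g j)| ≤ B * ‖g j‖ := by
      intro j ω
      exact (UrnAux.abs_crx_le _ _).trans
        (mul_le_mul_of_nonneg_right (hφb ω) (norm_nonneg _))
    have hCm : ∀ j : Fin D, Measurable fun ω => C N ω j := fun j =>
      (measurable_pi_apply j).comp ((hCmeas N).mono (ℱ.le N) le_rfl)
    have hpt : ∀ ω, UrnAux.crx (φ ω) (g (χ (N + 1) ω))
        = ∑ j, UrnAux.crx (φ ω) (g j) * (if χ (N + 1) ω = j then (1 : ℝ) else 0) := by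
      intro ω
      rw [eq_comm]
      simp [mul_ite, mul_one, mul_zero, Finset.sum_ite_eq]
    have hterm_int : ∀ j : Fin D, Integrable
        (fun ω => UrnAux.crx (φ ω) (g j) * (if χ (N + 1) ω = j then (1 : ℝ) else 0)) μpr := by
      intro j
      refine UrnAux.integrable_of_bdd ((hgm j).mul (hIm j)).aestronglyMeasurable
        (B * ‖g j‖) fun ω => ?_
      rw [abs_mul]
      calc |UrnAux.crx (φ ω) (g j)| * |if χ (N + 1) ω = j then (1 : ℝ) else 0|
          ≤ (B * ‖g j‖) * 1 :=
            mul_le_mul (hgb j ω) (hIle1 j ω) (abs_nonneg _)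
              (mul_nonneg hB0 (norm_nonneg _))
        _ = B * ‖g j‖ := mul_one _
    have hterm2_int : ∀ j : Fin D,
        Integrable (fun ω => UrnAux.crx (φ ω) (g j) * C N ω j) μpr := by
      intro j
      refine UrnAux.integrable_of_bdd ((hgm j).mul (hCm j)).aestronglyMeasurable
        (B * ‖g j‖ * ((N : ℝ) + 1)) fun ω => ?_
      rw [abs_mul]
      refine mul_le_mul (hgb j ω) ?_ (abs_nonneg _)
        (mul_nonneg hB0 (norm_nonneg _))
      rw [abs_of_nonneg (hCnn N ω j)]
      exact hCle N ω j
    have step2 : ∀ j : Fin D,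
        ∫ ω, UrnAux.crx (φ ω) (g j) * (if χ (N + 1) ω = j then (1 : ℝ) else 0) ∂μpr
        = (∫ ω, UrnAux.crx (φ ω) (g j) * C N ω j ∂μpr) / ((N : ℝ) + 1) := by
      intro j
      have hI_int : Integrable (fun ω => if χ (N + 1) ω = j then (1 : ℝ) else 0) μpr :=
        UrnAux.integrable_of_bdd (hIm j).aestronglyMeasurable 1 (hIle1 j)
      have hpull := UrnAux.integral_mul_condexp (ℱ.le N)
        (hgmF j).stronglyMeasurable (hterm_int j) hI_int
      rw [hpull]
      rw [← integral_div]
      refine integral_congr_ae ?_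
      filter_upwards [hdraw N j] with ω hω
      rw [hω]
      ring
    calc ∫ ω, UrnAux.crx (φ ω) (g (χ (N + 1) ω)) ∂μpr
        = ∫ ω, ∑ j, UrnAux.crx (φ ω) (g j) * (if χ (N + 1) ω = j then (1 : ℝ) else 0) ∂μpr :=
          integral_congr_ae (Filter.EventuallyEq.of_eq (funext hpt))
      _ = ∑ j, ∫ ω, UrnAux.crx (φ ω) (g j) * (if χ (N + 1) ω = j then (1 : ℝ) else 0) ∂μpr :=
          integral_finset_sum _ fun j _ => hterm_int j
      _ = ∑ j, (∫ ω, UrnAux.crx (φ ω) (g j) * C N ω j ∂μpr) / ((N : ℝ) + 1) :=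
          Finset.sum_congr rfl fun j _ => step2 j
      _ = (∑ j, ∫ ω, UrnAux.crx (φ ω) (g j) * C N ω j ∂μpr) / ((N : ℝ) + 1) :=
          (Finset.sum_div _ _ _).symm
      _ = (∫ ω, ∑ j, UrnAux.crx (φ ω) (g j) * C N ω j ∂μpr) / ((N : ℝ) + 1) := by
          rw [integral_finset_sum _ fun j _ => hterm2_int j]
      _ = (∫ ω, UrnAux.crx (φ ω) (∑ j, ((C N ω j : ℝ) : ℂ) * g j) ∂μpr) / ((N : ℝ) + 1) := by
          congr 1
          refine integral_congr_ae (Filter.EventuallyEq.of_eq (funext fun ω => ?_))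
          rw [UrnAux.crx_sum]
          refine Finset.sum_congr rfl fun j _ => ?_
          rw [UrnAux.crx_mul_real]
          ring
  -- exponents
  have hνre1 : ν.re < 1 := hνre
  set r : ℝ := max ν.re 0 with hrdef
  have hr0 : 0 ≤ r := le_max_right _ _
  have hνler : ν.re ≤ r := le_max_left _ _
  have hr1 : r < 1 := max_lt hνre1 one_pos
  set g0 : ℝ := (r + 1) / 2 with hg0def
  set γ : ℕ → ℝ := fun i => 1 - (1 - g0) / 2 ^ i with hγdef
  have hg0r : r < g0 := by rw [hg0def]; linarith
  have hg0lt1 : g0 < 1 := by rw [hg0def]; linarith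
  have hg0pos : 0 < g0 := by rw [hg0def]; linarith
  have hγmono : ∀ i, g0 ≤ γ i := by
    intro i
    have h2i : (1:ℝ) ≤ 2 ^ i := one_le_pow₀ one_le_two
    have hdd : (1 - g0) / 2 ^ i ≤ 1 - g0 := div_le_self (by linarith) h2i
    simp only [hγdef]
    linarith
  have hγr : ∀ i, r < γ i := fun i => lt_of_lt_of_le hg0r (hγmono i)
  have hγ0 : ∀ i, 0 ≤ γ i := fun i => le_trans hg0pos.le (hγmono i)
  have hγlt1 : ∀ i, γ i < 1 := by
    intro i
    have h2i : (0:ℝ) < 2 ^ i := by positivity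
    have : 0 < (1 - g0) / 2 ^ i := div_pos (by linarith) h2i
    simp only [hγdef]
    linarith
  have hγrec : ∀ i : ℕ, 2 * γ (i + 1) = 1 + γ i := by
    intro i
    simp only [hγdef]
    have h2i : (2:ℝ) ^ i ≠ 0 := by positivity
    rw [pow_succ]
    field_simp
    ring
  -- the L² bound by induction along the Jordan chain
  have hbound : ∀ i, i ≤ t → ∃ Cb : ℝ, 0 ≤ Cb ∧
      ∀ N, a i N ≤ Cb * ((N : ℝ) + 1) ^ (2 * γ i) := by
    intro i
    induction i with
    | zero =>
      intro _
      refine ⟨0, le_rfl, fun N => ?_⟩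
      have hz : a 0 N = 0 := by
        simp only [hadef]
        rw [integral_congr_ae (Filter.EventuallyEq.of_eq (funext fun ω => by
          rw [hX0 N ω, Complex.normSq_zero]))]
        simp
      rw [hz, zero_mul]
    | succ i ih =>
      intro hit
      obtain ⟨C', hC'0, hC'⟩ := ih (le_trans (Nat.le_succ i) hit)
      set c : ℝ := Kc (i+1) * (1 + C') + Kf (i+1) ^ 2 + Kc (i+1) ^ 2 with hcdef
      have hc0 : 0 ≤ c := by
        have h1 := hKcnn (i+1); have h2 := hKfnn (i+1)
        have : 0 ≤ Kc (i+1) * (1 + C') := mul_nonneg h1 (by linarith)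
        nlinarith
      have h1i : 1 ≤ i + 1 := Nat.le_add_left 1 i
      have hbase : a (i+1) 0 ≤ c := by
        have hb := ha_bd (i+1) 0
        simp only [Nat.cast_zero, zero_add, one_mul] at hb
        have h1 := hKcnn (i+1); have h2 := hKfnn (i+1)
        have h3 : 0 ≤ Kc (i+1) * (1 + C') := mul_nonneg h1 (by linarith)
        nlinarith
      have hstepN : ∀ N, a (i+1) (N+1)
          ≤ a (i+1) N * (1 + 2 * r / ((N:ℝ)+1)) + c * ((N:ℝ)+1) ^ (γ i) := by
        intro N
        have hu0 : (0:ℝ) < (N:ℝ) + 1 := by positivity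
        -- measurability / integrability of the pieces
        have hΔm : Measurable fun ω => f (i+1) (χ (N+1) ω) :=
          Measurable.comp' (measurable_of_countable (f (i+1))) (hχm (N+1))
        have hΔbd : ∀ ω, ‖f (i+1) (χ (N+1) ω)‖ ≤ Kf (i+1) := fun ω => hfbd _ _
        have hcrm : Measurable fun ω => UrnAux.crx (X (i+1) N ω) (f (i+1) (χ (N+1) ω)) :=
          ((Complex.measurable_re.comp (hXm (i+1) N)).mul (Complex.measurable_re.comp hΔm)).add
            ((Complex.measurable_im.comp (hXm (i+1) N)).mul (Complex.measurable_im.comp hΔm))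
        have hcr_int : Integrable
            (fun ω => UrnAux.crx (X (i+1) N ω) (f (i+1) (χ (N+1) ω))) μpr := by
          refine UrnAux.integrable_of_bdd hcrm.aestronglyMeasurable
            ((((N:ℝ)+1) * Kc (i+1)) * Kf (i+1)) fun ω => ?_
          exact (UrnAux.abs_crx_le _ _).trans
            (mul_le_mul (hXbd (i+1) N ω) (hΔbd ω) (norm_nonneg _)
              (by positivity))
        have hΔsqm : Measurable fun ω => Complex.normSq (f (i+1) (χ (N+1) ω)) :=
          Complex.continuous_normSq.measurable.comp hΔm
        have hΔsq_int : Integrable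
            (fun ω => Complex.normSq (f (i+1) (χ (N+1) ω))) μpr := by
          refine UrnAux.integrable_of_bdd hΔsqm.aestronglyMeasurable (Kf (i+1) ^ 2) fun ω => ?_
          rw [abs_of_nonneg (Complex.normSq_nonneg _), ← Complex.sq_norm]
          exact pow_le_pow_left₀ (norm_nonneg _) (hΔbd ω) 2
        have hΔsq_le : ∫ ω, Complex.normSq (f (i+1) (χ (N+1) ω)) ∂μpr ≤ Kf (i+1) ^ 2 := by
          calc ∫ ω, Complex.normSq (f (i+1) (χ (N+1) ω)) ∂μpr
              ≤ ∫ _, Kf (i+1) ^ 2 ∂μpr := integral_mono hΔsq_int (integrable_const _)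
                (fun ω => by
                  rw [← Complex.sq_norm]
                  exact pow_le_pow_left₀ (norm_nonneg _) (hΔbd ω) 2)
            _ = Kf (i+1) ^ 2 := by simp
        have hcrXYm : Measurable fun ω => UrnAux.crx (X (i+1) N ω) (X i N ω) :=
          ((Complex.measurable_re.comp (hXm (i+1) N)).mul
            (Complex.measurable_re.comp (hXm i N))).add
            ((Complex.measurable_im.comp (hXm (i+1) N)).mul
              (Complex.measurable_im.comp (hXm i N)))
        have hcrXY_int : Integrable (fun ω => UrnAux.crx (X (i+1) N ω) (X i N ω)) μpr := by
          refine UrnAux.integrable_of_bdd hcrXYm.aestronglyMeasurable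
            ((((N:ℝ)+1) * Kc (i+1)) * (((N:ℝ)+1) * Kc i)) fun ω => ?_
          exact (UrnAux.abs_crx_le _ _).trans
            (mul_le_mul (hXbd (i+1) N ω) (hXbd i N ω) (norm_nonneg _) (by positivity))
        have habsY_m : Measurable fun ω => ‖X i N ω‖ :=
          continuous_norm.measurable.comp (hXm i N)
        have habsY_int : Integrable (fun ω => ‖X i N ω‖) μpr := by
          refine UrnAux.integrable_of_bdd habsY_m.aestronglyMeasurable
            (((N:ℝ)+1) * Kc i) fun ω => ?_
          rw [abs_of_nonneg (norm_nonneg _)]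
          exact hXbd i N ω
        -- expansion of the second moment
        have hexp : a (i+1) (N+1)
            = a (i+1) N + (2 * (∫ ω, UrnAux.crx (X (i+1) N ω) (f (i+1) (χ (N+1) ω)) ∂μpr)
              + ∫ ω, Complex.normSq (f (i+1) (χ (N+1) ω)) ∂μpr) := by
          have hpt : (fun ω => Complex.normSq (X (i+1) (N+1) ω))
              = fun ω => Complex.normSq (X (i+1) N ω)
                + (2 * UrnAux.crx (X (i+1) N ω) (f (i+1) (χ (N+1) ω))
                  + Complex.normSq (f (i+1) (χ (N+1) ω))) := by
            funext ω
            rw [hXrec (i+1) h1i hit N ω, UrnAux.normSq_add']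
            ring
          have hint3 : Integrable
              (fun ω => 2 * UrnAux.crx (X (i+1) N ω) (f (i+1) (χ (N+1) ω))) μpr :=
            hcr_int.const_mul 2
          have hint2 : Integrable
              (fun ω => 2 * UrnAux.crx (X (i+1) N ω) (f (i+1) (χ (N+1) ω))
                + Complex.normSq (f (i+1) (χ (N+1) ω))) μpr := hint3.add hΔsq_int
          simp only [hadef]
          rw [integral_congr_ae (Filter.EventuallyEq.of_eq hpt),
            integral_add (hnsq_int (i+1) N) hint2,
            integral_add hint3 hΔsq_int,
            integral_const_mul (2:ℝ)
              (fun ω => UrnAux.crx (X (i+1) N ω) (f (i+1) (χ (N+1) ω)))]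
        -- conditional expectation identity for the cross term
        have hcrid : ∫ ω, UrnAux.crx (X (i+1) N ω) (f (i+1) (χ (N+1) ω)) ∂μpr
            = ((∫ ω, UrnAux.crx (X (i+1) N ω) (X i N ω) ∂μpr)
               + ν.re * a (i+1) N) / ((N:ℝ)+1) := by
          rw [hEkey N (X (i+1) N) (f (i+1)) (((N:ℝ)+1) * Kc (i+1))
            (by positivity) (hXmF (i+1) N) (hXbd (i+1) N)]
          congr 1
          have hptsum : ∀ ω : Ω, (∑ j, ((C N ω j : ℝ) : ℂ) * f (i+1) j)
              = X i N ω + ν * X (i+1) N ω := by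
            intro ω
            have he : ∀ j : Fin D, ((C N ω j : ℝ) : ℂ) * f (i+1) j
                = (C N ω j : ℂ) * ξ i j + ν * ((C N ω j : ℂ) * ξ (i+1) j) := by
              intro j
              simp only [hfdef, Nat.add_sub_cancel]
              ring
            rw [Finset.sum_congr rfl fun j _ => he j, Finset.sum_add_distrib, ← Finset.mul_sum]
          have hpt2 : ∀ ω : Ω, UrnAux.crx (X (i+1) N ω) (∑ j, ((C N ω j : ℝ) : ℂ) * f (i+1) j)
              = UrnAux.crx (X (i+1) N ω) (X i N ω)
                + ν.re * Complex.normSq (X (i+1) N ω) := by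
            intro ω
            rw [hptsum ω, UrnAux.crx_add_right, UrnAux.crx_mul_self]
          have hint4 : Integrable
              (fun ω => ν.re * Complex.normSq (X (i+1) N ω)) μpr :=
            (hnsq_int (i+1) N).const_mul ν.re
          rw [integral_congr_ae (Filter.EventuallyEq.of_eq (funext hpt2)),
            integral_add hcrXY_int hint4]
          congr 1
          exact integral_const_mul ν.re _
        -- AM-GM bound on ∫ |X i N|
        have hIY : ∫ ω, ‖X i N ω‖ ∂μpr
            ≤ (1 + C') / 2 * ((N:ℝ)+1) ^ (γ i) := by
          set T : ℝ := ((N:ℝ)+1) ^ (γ i) with hTdef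
          have hT0 : 0 < T := Real.rpow_pos_of_pos hu0 _
          have hptAM : ∀ ω : Ω, ‖X i N ω‖
              ≤ (T + Complex.normSq (X i N ω) / T) / 2 := by
            intro ω
            rw [← Complex.sq_norm, le_div_iff₀ (by norm_num : (0:ℝ) < 2), ← sub_nonneg]
            have hexp2 : (T + ‖X i N ω‖ ^ 2 / T) - ‖X i N ω‖ * 2
                = (‖X i N ω‖ - T) ^ 2 / T := by
              field_simp
              ring
            rw [hexp2]
            positivity
          calc ∫ ω, ‖X i N ω‖ ∂μpr
              ≤ ∫ ω, (T + Complex.normSq (X i N ω) / T) / 2 ∂μpr :=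
                integral_mono habsY_int
                  (((integrable_const T).add ((hnsq_int i N).div_const T)).div_const 2)
                  hptAM
            _ = (T + a i N / T) / 2 := by
                rw [integral_div, integral_add (integrable_const T)
                  ((hnsq_int i N).div_const T), integral_const, integral_div]
                simp only [hadef]
                simp
            _ ≤ (T + C' * ((N:ℝ)+1) ^ (2 * γ i) / T) / 2 := by
                have hd := (div_le_div_iff_of_pos_right hT0).2 (hC' N)
                linarith
            _ = (1 + C') / 2 * ((N:ℝ)+1) ^ (γ i) := by
                rw [hTdef, show (2 * γ i) = γ i + γ i by ring, Real.rpow_add hu0]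
                have hne : ((N:ℝ)+1) ^ (γ i) ≠ 0 := (Real.rpow_pos_of_pos hu0 _).ne'
                field_simp
        -- bound on the cross integral
        have hP1 : (1:ℝ) ≤ ((N:ℝ)+1) ^ (γ i) := by
          have h := Real.rpow_le_rpow_of_exponent_le
            (by linarith : (1:ℝ) ≤ (N:ℝ)+1) (hγ0 i)
          rwa [Real.rpow_zero] at h
        have hcrXY_le : ∫ ω, UrnAux.crx (X (i+1) N ω) (X i N ω) ∂μpr
            ≤ (((N:ℝ)+1) * Kc (i+1)) * ((1 + C') / 2 * ((N:ℝ)+1) ^ (γ i)) := by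
          calc ∫ ω, UrnAux.crx (X (i+1) N ω) (X i N ω) ∂μpr
              ≤ ∫ ω, (((N:ℝ)+1) * Kc (i+1)) * ‖X i N ω‖ ∂μpr :=
                integral_mono hcrXY_int (habsY_int.const_mul _) fun ω =>
                  (UrnAux.crx_le _ _).trans
                    (mul_le_mul_of_nonneg_right (hXbd (i+1) N ω) (norm_nonneg _))
            _ = (((N:ℝ)+1) * Kc (i+1)) * ∫ ω, ‖X i N ω‖ ∂μpr :=
                integral_const_mul _ _
            _ ≤ _ := mul_le_mul_of_nonneg_left hIY (by positivity)
        -- final arithmetic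
        rw [hexp, hcrid]
        set u : ℝ := (N:ℝ) + 1 with hudef
        set P : ℝ := ((N:ℝ)+1) ^ (γ i) with hPdef
        set I1 : ℝ := ∫ ω, UrnAux.crx (X (i+1) N ω) (X i N ω) ∂μpr with hI1def
        set I2 : ℝ := ∫ ω, Complex.normSq (f (i+1) (χ (N+1) ω)) ∂μpr with hI2def
        have haN := ha_nn (i+1) N
        have hKc1 := hKcnn (i+1)
        have hq1 : 2 * ((I1 + ν.re * a (i+1) N) / u)
            = 2 * I1 / u + 2 * (ν.re * a (i+1) N) / u := by ring
        have hq2 : 2 * I1 / u ≤ Kc (i+1) * (1 + C') * P := by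
          have hd := (div_le_div_iff_of_pos_right hu0).2 hcrXY_le
          have hcancel : (u * Kc (i+1)) * ((1 + C') / 2 * P) / u
              = Kc (i+1) * (1 + C') * P / 2 := by
            field_simp
          rw [hcancel] at hd
          rw [show 2 * I1 / u = 2 * (I1 / u) by ring]
          linarith [hd]
        have hq3 : 2 * (ν.re * a (i+1) N) / u ≤ 2 * r * a (i+1) N / u := by
          have h : 2 * (ν.re * a (i+1) N) ≤ 2 * r * a (i+1) N := by nlinarith
          exact (div_le_div_iff_of_pos_right hu0).2 h
        have hring : a (i+1) N * (1 + 2 * r / u) = a (i+1) N + 2 * r * a (i+1) N / u := by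
          field_simp
        have hcP : c * P = Kc (i+1) * (1 + C') * P + Kf (i+1) ^ 2 * P + Kc (i+1) ^ 2 * P := by
          rw [hcdef]; ring
        have hKfP : Kf (i+1) ^ 2 ≤ Kf (i+1) ^ 2 * P := by
          nlinarith [sq_nonneg (Kf (i+1))]
        have hKcP : 0 ≤ Kc (i+1) ^ 2 * P := by positivity
        linarith
      have hgr := UrnAux.growth hr0 (hγr (i+1)) (hγrec i) (hγ0 i) hc0 hbase hstepN
      refine ⟨c / (γ (i+1) - r) + c, ?_, hgr⟩
      have : 0 ≤ c / (γ (i+1) - r) := div_nonneg hc0 (by linarith [hγr (i+1)])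
      linarith
  -- conclusions
  intro i h1i h2i
  obtain ⟨Cb, hCb0, hCb⟩ := hbound i h2i
  have hγi1 : γ i < 1 := hγlt1 i
  have hγi0 : 0 ≤ γ i := hγ0 i
  -- uniform ratio bound
  have hratio : ∀ N : ℕ, 1 ≤ N → a i N / (N:ℝ)^2
      ≤ Cb * 2^(2*γ i) * (N:ℝ)^(2*γ i - 2) := by
    intro N hN
    have hN0 : (0:ℝ) < N := by exact_mod_cast hN
    have hN1 : (1:ℝ) ≤ N := by exact_mod_cast hN
    have h3 : ((N:ℝ)+1)^(2*γ i) ≤ (2*(N:ℝ))^(2*γ i) :=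
      Real.rpow_le_rpow (by positivity) (by linarith) (by linarith)
    have h4 : (2*(N:ℝ))^(2*γ i) = 2^(2*γ i) * (N:ℝ)^(2*γ i) :=
      Real.mul_rpow (by norm_num) hN0.le
    have h1 : a i N ≤ Cb * 2^(2*γ i) * (N:ℝ)^(2*γ i) := by
      calc a i N ≤ Cb * ((N:ℝ)+1)^(2*γ i) := hCb N
        _ ≤ Cb * (2^(2*γ i) * (N:ℝ)^(2*γ i)) := by
            rw [← h4]; exact mul_le_mul_of_nonneg_left h3 hCb0
        _ = Cb * 2^(2*γ i) * (N:ℝ)^(2*γ i) := by ring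
    have h5 : (N:ℝ)^(2*γ i) / (N:ℝ)^2 = (N:ℝ)^(2*γ i - 2) := by
      rw [← Real.rpow_natCast (N:ℝ) 2, ← Real.rpow_sub hN0]
      norm_num
    calc a i N / (N:ℝ)^2 ≤ (Cb * 2^(2*γ i) * (N:ℝ)^(2*γ i)) / (N:ℝ)^2 :=
          (div_le_div_iff_of_pos_right (by positivity)).2 h1
      _ = Cb * 2^(2*γ i) * ((N:ℝ)^(2*γ i) / (N:ℝ)^2) := by ring
      _ = Cb * 2^(2*γ i) * (N:ℝ)^(2*γ i - 2) := by rw [h5]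
  -- the integral identity
  have hIeq : ∀ N : ℕ, ∫ ω, ‖X i N ω / (N:ℂ)^(((1:ℝ)):ℂ)‖^2 ∂μpr = a i N / (N:ℝ)^2 := by
    intro N
    have hpt : ∀ ω : Ω, ‖X i N ω / (N:ℂ)^(((1:ℝ)):ℂ)‖^2
        = Complex.normSq (X i N ω) / (N:ℝ)^2 := by
      intro ω
      rw [Complex.ofReal_one, Complex.cpow_one, norm_div, div_pow,
        Complex.sq_norm, Complex.norm_natCast]
    rw [integral_congr_ae (Filter.EventuallyEq.of_eq (funext hpt)), integral_div]
  -- L² convergence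
  have hL2 : Tendsto (fun N : ℕ => ∫ ω, ‖X i N ω / (N:ℂ)^(((1:ℝ)):ℂ)‖^2 ∂μpr)
      atTop (nhds 0) := by
    have hb : Tendsto (fun N : ℕ => Cb * 2^(2*γ i) * (N:ℝ)^(2*γ i - 2)) atTop (nhds 0) := by
      have h1 : Tendsto (fun x : ℝ => x^(-(2 - 2*γ i))) atTop (nhds 0) :=
        tendsto_rpow_neg_atTop (by linarith)
      have h2 := (h1.comp tendsto_natCast_atTop_atTop).const_mul (Cb * 2^(2*γ i))
      simp only [mul_zero] at h2
      refine h2.congr fun N => ?_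
      simp only [Function.comp_apply]
      rw [show -(2 - 2*γ i) = 2*γ i - 2 by ring]
    refine squeeze_zero' ?_ ?_ hb
    · filter_upwards with N
      rw [hIeq N]
      exact div_nonneg (ha_nn i N) (by positivity)
    · filter_upwards [eventually_ge_atTop 1] with N hN
      rw [hIeq N]
      exact hratio N hN
  -- almost sure convergence
  obtain ⟨s, hs⟩ := pow_unbounded_of_one_lt (R := ℝ) (1/(2 - 2*γ i)) one_lt_two
  have hq1 : (1:ℝ) < (2:ℝ)^s * (2 - 2*γ i) := by
    rw [div_lt_iff₀ (by linarith : (0:ℝ) < 2 - 2*γ i)] at hs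
    linarith
  have hsumm : Summable (fun m : ℕ =>
      Cb * 2^(2*γ i) * ((((m+1)^(2^s) : ℕ)):ℝ)^(2*γ i - 2)) := by
    apply Summable.mul_left
    have hform : ∀ m : ℕ, ((((m+1)^(2^s) : ℕ)):ℝ)^(2*γ i - 2)
        = (((m+1 : ℕ)):ℝ)^(-((((2^s : ℕ)):ℝ) * (2 - 2*γ i))) := by
      intro m
      push_cast
      rw [← Real.rpow_natCast ((m:ℝ)+1) (2^s), ← Real.rpow_mul (by positivity)]
      congr 1
      push_cast
      ring
    refine Summable.congr ?_ (fun m => (hform m).symm)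
    have hq : 1 < (((2^s : ℕ)):ℝ) * (2 - 2*γ i) := by push_cast; exact hq1
    have h1 : Summable (fun n : ℕ => 1/(n:ℝ)^((((2^s : ℕ)):ℝ) * (2 - 2*γ i))) :=
      Real.summable_one_div_nat_rpow.2 hq
    have h2 := (summable_nat_add_iff 1).2 h1
    refine h2.congr fun m => ?_
    rw [Real.rpow_neg (Nat.cast_nonneg _), one_div]
  have hterm_meas : ∀ N : ℕ, Measurable fun ω =>
      ENNReal.ofReal (Complex.normSq (X i N ω) / (N:ℝ)^2) := fun N =>
    ENNReal.measurable_ofReal.comp ((hnsqm i N).div_const _)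
  have hterm_int : ∀ N : ℕ,
      Integrable (fun ω => Complex.normSq (X i N ω) / (N:ℝ)^2) μpr :=
    fun N => (hnsq_int i N).div_const _
  have hlint_le : ∀ N : ℕ, 1 ≤ N →
      ∫⁻ ω, ENNReal.ofReal (Complex.normSq (X i N ω) / (N:ℝ)^2) ∂μpr
        ≤ ENNReal.ofReal (Cb * 2^(2*γ i) * (N:ℝ)^(2*γ i - 2)) := by
    intro N hN
    rw [← ofReal_integral_eq_lintegral_ofReal (hterm_int N)
      (Filter.Eventually.of_forall fun ω =>
        div_nonneg (Complex.normSq_nonneg _) (by positivity))]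
    apply ENNReal.ofReal_le_ofReal
    rw [integral_div]
    exact hratio N hN
  have htsum_fin : (∑' m : ℕ, ∫⁻ ω, ENNReal.ofReal
      (Complex.normSq (X i ((m+1)^(2^s)) ω) / ((((m+1)^(2^s) : ℕ)):ℝ)^2) ∂μpr) ≠ ⊤ := by
    refine ne_top_of_le_ne_top ?_ (ENNReal.tsum_le_tsum fun m =>
      hlint_le ((m+1)^(2^s)) (Nat.one_le_pow _ _ (Nat.succ_pos m)))
    rw [← ENNReal.ofReal_tsum_of_nonneg (fun m => by positivity) hsumm]
    exact ENNReal.ofReal_ne_top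
  have hswap : ∫⁻ ω, (∑' m : ℕ, ENNReal.ofReal
      (Complex.normSq (X i ((m+1)^(2^s)) ω) / ((((m+1)^(2^s) : ℕ)):ℝ)^2)) ∂μpr ≠ ⊤ := by
    rw [lintegral_tsum fun m => (hterm_meas _).aemeasurable]
    exact htsum_fin
  have hae := ae_lt_top (Measurable.ennreal_tsum fun m => hterm_meas _) hswap
  have hAS : ∀ᵐ ω ∂μpr, Tendsto
      (fun N : ℕ => X i N ω / (N:ℂ)^(((1:ℝ)):ℂ)) atTop (nhds 0) := by
    filter_upwards [hae] with ω hω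
    have hto := ENNReal.tendsto_atTop_zero_of_tsum_ne_top hω.ne
    have hreal : Tendsto (fun m : ℕ =>
        Complex.normSq (X i ((m+1)^(2^s)) ω) / ((((m+1)^(2^s):ℕ)):ℝ)^2) atTop (nhds 0) := by
      have hcont := (ENNReal.tendsto_toReal ENNReal.zero_ne_top).comp hto
      simp only [ENNReal.toReal_zero] at hcont
      refine hcont.congr fun m => ?_
      simp only [Function.comp_apply]
      exact ENNReal.toReal_ofReal
        (div_nonneg (Complex.normSq_nonneg _) (by positivity))
    have hsq : Tendsto (fun m : ℕ =>
        ‖X i ((m+1)^(2^s)) ω‖ / ((((m+1)^(2^s):ℕ)):ℝ)) atTop (nhds 0) := by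
      have hcs : Tendsto Real.sqrt (nhds 0) (nhds 0) := by
        have h := Real.continuous_sqrt.tendsto 0
        simpa using h
      have hcomp := hcs.comp hreal
      refine hcomp.congr fun m => ?_
      simp only [Function.comp_apply]
      have hid : Complex.normSq (X i ((m+1)^(2^s)) ω) / ((((m+1)^(2^s):ℕ)):ℝ)^2
          = (‖X i ((m+1)^(2^s)) ω‖ / ((((m+1)^(2^s):ℕ)):ℝ))^2 := by
        rw [div_pow, Complex.sq_norm]
      rw [hid, Real.sqrt_sq (by positivity)]
    have hstepu : ∀ n : ℕ, ‖X i (n+1) ω‖ ≤ ‖X i n ω‖ + Kf i := by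
      intro n
      rw [hXrec i h1i h2i n ω]
      calc ‖X i n ω + f i (χ (n+1) ω)‖
          ≤ ‖X i n ω‖ + ‖f i (χ (n+1) ω)‖ :=
            norm_add_le _ _
        _ ≤ _ := by linarith [hfbd i (χ (n+1) ω)]
    have hconv := UrnAux.interp (u := fun n => ‖X i n ω‖) (K := Kf i)
      (fun n => norm_nonneg _) (hKfnn i) hstepu s hsq
    rw [tendsto_zero_iff_norm_tendsto_zero]
    refine hconv.congr fun N => ?_
    rw [Complex.ofReal_one, Complex.cpow_one, norm_div, Complex.norm_natCast]
  exact ⟨hAS, hL2⟩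
end

section
/- Let R be a balanced nonnegative block upper triangular matrix in increasing order satisfying assumption (A). Then no diagonal block other than the last has character 1; equivalently, the only block with Perron–Frobenius eigenvalue 1 is the final block Q_{K+1}, which forms the last cluster by itself. -/
open Matrix Finset

section helpers

lemma pf_pow_entry_nonneg {n : Type*} [Fintype n] [DecidableEq n] (A : Matrix n n ℝ)
    (h : ∀ i j, 0 ≤ A i j) : ∀ m i j, 0 ≤ (A ^ m) i j := by
  intro m
  induction m with
  | zero =>
    intro i j
    rw [pow_zero]
    by_cases hij : i = j <;> simp [Matrix.one_apply, hij]
  | succ m ih =>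
    intro i j
    rw [pow_succ, Matrix.mul_apply]
    exact Finset.sum_nonneg fun l _ => mul_nonneg (ih i l) (h l j)

lemma pf_pow_row_sum_le {n : Type*} [Fintype n] [DecidableEq n] (A : Matrix n n ℝ)
    (h0 : ∀ i j, 0 ≤ A i j) (h1 : ∀ i, ∑ j, A i j ≤ 1) :
    ∀ m i, ∑ j, (A ^ m) i j ≤ 1 := by
  intro m
  induction m with
  | zero =>
    intro i
    simp [pow_zero, Matrix.one_apply]
  | succ m ih =>
    intro i
    have : ∑ j, (A ^ (m+1)) i j = ∑ l, (A ^ m) i l * ∑ j, A l j := by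
      simp_rw [pow_succ, Matrix.mul_apply, Finset.mul_sum]
      exact Finset.sum_comm
    rw [this]
    calc ∑ l, (A ^ m) i l * ∑ j, A l j ≤ ∑ l, (A ^ m) i l * 1 :=
          Finset.sum_le_sum fun l _ =>
            mul_le_mul_of_nonneg_left (h1 l) (pf_pow_entry_nonneg A h0 m i l)
    _ ≤ 1 := by simpa using ih i

lemma pf_exists_eigvec {n : Type*} [Fintype n] [DecidableEq n] (A : Matrix n n ℝ) (z : ℂ)
    (hz : z ∈ spectrum ℂ (A.map (Complex.ofReal ·))) :
    ∃ v : n → ℂ, v ≠ 0 ∧ ∀ p, z * v p = ∑ q, (A p q : ℂ) * v q := by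
  rw [spectrum.mem_iff] at hz
  have hdet : (algebraMap ℂ (Matrix n n ℂ) z - A.map (Complex.ofReal ·)).det = 0 := by
    by_contra h
    exact hz ((Matrix.isUnit_iff_isUnit_det _).2 (isUnit_iff_ne_zero.2 h))
  obtain ⟨v, hv0, hv⟩ := (Matrix.exists_mulVec_eq_zero_iff).2 hdet
  refine ⟨v, hv0, fun p => ?_⟩
  have h2 := congrFun hv p
  rw [Matrix.sub_mulVec, Algebra.algebraMap_eq_smul_one, Matrix.smul_mulVec,
    Matrix.one_mulVec] at h2
  have h3 : z * v p - (A.map (Complex.ofReal ·) *ᵥ v) p = 0 := h2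
  have h4 : (A.map (Complex.ofReal ·) *ᵥ v) p = ∑ q, (A p q : ℂ) * v q := by
    simp [Matrix.mulVec, dotProduct, Matrix.map_apply]
  rw [h4] at h3
  exact sub_eq_zero.mp h3

lemma pf_spectrum_abs_le_one {n : Type*} [Fintype n] [DecidableEq n] (A : Matrix n n ℝ)
    (h0 : ∀ i j, 0 ≤ A i j) (h1 : ∀ i, ∑ j, A i j ≤ 1) (z : ℂ)
    (hz : z ∈ spectrum ℂ (A.map (Complex.ofReal ·))) : ‖z‖ ≤ 1 := by
  obtain ⟨v, hv0, hv⟩ := pf_exists_eigvec A z hz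
  obtain ⟨p₀, hp₀⟩ := Function.ne_iff.1 hv0
  obtain ⟨i, -, hi⟩ := Finset.exists_max_image univ (fun p => ‖v p‖) ⟨p₀, mem_univ _⟩
  have hwi : 0 < ‖v i‖ :=
    lt_of_lt_of_le (norm_pos_iff.mpr hp₀) (hi p₀ (mem_univ _))
  have key : ‖z‖ * ‖v i‖ ≤ 1 * ‖v i‖ := by
    calc ‖z‖ * ‖v i‖ = ‖z * v i‖ := (norm_mul _ _).symm
    _ = ‖∑ q, (A i q : ℂ) * v q‖ := by rw [hv i]
    _ ≤ ∑ q, ‖(A i q : ℂ) * v q‖ := norm_sum_le _ _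
    _ = ∑ q, A i q * ‖v q‖ := by
        refine Finset.sum_congr rfl fun q _ => ?_
        rw [norm_mul, Complex.norm_real, Real.norm_eq_abs, abs_of_nonneg (h0 i q)]
    _ ≤ ∑ q, A i q * ‖v i‖ :=
        Finset.sum_le_sum fun q _ => mul_le_mul_of_nonneg_left (hi q (mem_univ _)) (h0 i q)
    _ = (∑ q, A i q) * ‖v i‖ := (Finset.sum_mul _ _ _).symm
    _ ≤ 1 * ‖v i‖ := mul_le_mul_of_nonneg_right (h1 i) hwi.le
  exact le_of_mul_le_mul_right key hwi

lemma pf_rowsum_eq_one {n : Type*} [Fintype n] [DecidableEq n]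
    (A : Matrix n n ℝ) (h0 : ∀ i j, 0 ≤ A i j) (h1 : ∀ i, ∑ j, A i j ≤ 1)
    (hirr : ∀ x y : n, ∃ m : ℕ, 0 < m ∧ 0 < (A ^ m) x y)
    (hspec : (1:ℂ) ∈ spectrum ℂ (A.map (Complex.ofReal ·))) :
    ∀ p, ∑ j, A p j = 1 := by
  obtain ⟨v, hv0, hv⟩ := pf_exists_eigvec A 1 hspec
  set w : n → ℝ := fun p => ‖v p‖ with hwdef
  have hw0 : ∀ p, 0 ≤ w p := fun p => norm_nonneg _
  have hsub : ∀ p, w p ≤ ∑ q, A p q * w q := by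
    intro p
    calc w p = ‖1 * v p‖ := by rw [one_mul]
    _ = ‖∑ q, (A p q : ℂ) * v q‖ := by rw [hv p]
    _ ≤ ∑ q, ‖(A p q : ℂ) * v q‖ := norm_sum_le _ _
    _ = ∑ q, A p q * w q := by
        refine Finset.sum_congr rfl fun q _ => ?_
        rw [norm_mul, Complex.norm_real, Real.norm_eq_abs, abs_of_nonneg (h0 p q)]
  have hiter : ∀ m p, w p ≤ ∑ q, (A ^ m) p q * w q := by
    intro m
    induction m with
    | zero => intro p; simp [pow_zero, Matrix.one_apply]
    | succ m ih =>
      intro p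
      have hcalc : ∑ q, A p q * (∑ r, (A ^ m) q r * w r)
          = ∑ r, (A ^ (m+1)) p r * w r := by
        simp_rw [Finset.mul_sum, pow_succ', Matrix.mul_apply, Finset.sum_mul, mul_assoc]
        exact Finset.sum_comm
      calc w p ≤ ∑ q, A p q * w q := hsub p
      _ ≤ ∑ q, A p q * (∑ r, (A ^ m) q r * w r) :=
          Finset.sum_le_sum fun q _ => mul_le_mul_of_nonneg_left (ih q) (h0 p q)
      _ = ∑ r, (A ^ (m+1)) p r * w r := hcalc
  obtain ⟨p₀, hp₀⟩ := Function.ne_iff.1 hv0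
  obtain ⟨i, -, hi⟩ := Finset.exists_max_image univ w ⟨p₀, mem_univ _⟩
  have hwi : 0 < w i := lt_of_lt_of_le (norm_pos_iff.mpr hp₀) (hi p₀ (mem_univ _))
  have hall : ∀ j, w i ≤ w j := by
    intro j
    by_contra hj
    push_neg at hj
    obtain ⟨m, -, hmpos⟩ := hirr i j
    have hC0 : ∀ q, 0 ≤ (A ^ m) i q := fun q => pf_pow_entry_nonneg A h0 m i q
    have hCsum : ∑ q, (A ^ m) i q ≤ 1 := pf_pow_row_sum_le A h0 h1 m i
    have hsplit : (A ^ m) i j * w j + ∑ q ∈ univ.erase j, (A ^ m) i q * w q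
        = ∑ q, (A ^ m) i q * w q :=
      Finset.add_sum_erase univ (fun q => (A ^ m) i q * w q) (mem_univ j)
    have hsplitC : (A ^ m) i j + ∑ q ∈ univ.erase j, (A ^ m) i q
        = ∑ q, (A ^ m) i q :=
      Finset.add_sum_erase univ (fun q => (A ^ m) i q) (mem_univ j)
    have herase : ∑ q ∈ univ.erase j, (A ^ m) i q * w q
        ≤ (∑ q ∈ univ.erase j, (A ^ m) i q) * w i := by
      rw [Finset.sum_mul]
      exact Finset.sum_le_sum fun q hq =>
        mul_le_mul_of_nonneg_left (hi q (mem_univ _)) (hC0 q)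
    have hup := hiter m i
    nlinarith [hmpos, hwi, hj]
  have heq : ∀ q, w q = w i := fun q => le_antisymm (hi q (mem_univ _)) (hall q)
  intro p
  refine le_antisymm (h1 p) ?_
  have h2 : w i ≤ (∑ q, A p q) * w i := by
    have := hsub p
    rw [heq p] at this
    calc w i ≤ ∑ q, A p q * w q := this
    _ = ∑ q, A p q * w i := Finset.sum_congr rfl fun q _ => by rw [heq q]
    _ = (∑ q, A p q) * w i := (Finset.sum_mul _ _ _).symm
  nlinarith [hwi]

end helpers

/-- For a balanced nonnegative block upper triangular matrix in increasing order
satisfying assumption (A), the only diagonal block with character (Perron–Frobenius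
eigenvalue) `1` is the final block `Q_{K+1}`, which forms the last cluster by
itself. -/
theorem character_one_only_last_block
    (D K J : ℕ) (R : Matrix (Fin D) (Fin D) ℝ)
    (b : Fin D → Fin (K + 1)) (hb : Monotone b) (hbsurj : Function.Surjective b)
    (hRpos : ∀ i j, 0 ≤ R i j) (hRrow : ∀ i, ∑ j, R i j = 1)
    (hRblock : ∀ i j, b j < b i → R i j = 0)
    (μc : Fin (K + 1) → ℝ)
    -- each diagonal block is either zero (character 0) or irreducible with
    -- Perron-Frobenius eigenvalue `μc k`
    (hchar : ∀ k : Fin (K + 1),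
      ((∀ i j, b i = k → b j = k → R i j = 0) ∧ μc k = 0) ∨
      ((∀ x y : {i // b i = k}, ∃ n : ℕ, 0 < n ∧
          0 < (((fun p q : {i // b i = k} => R p.1 q.1) :
            Matrix {i // b i = k} {i // b i = k} ℝ) ^ n) x y) ∧
        (μc k : ℂ) ∈ spectrum ℂ
          ((Matrix.of fun p q : {i // b i = k} => R p.1 q.1).map (Complex.ofReal ·)) ∧
        ∀ z ∈ spectrum ℂ
          ((Matrix.of fun p q : {i // b i = k} => R p.1 q.1).map (Complex.ofReal ·)),
          ‖z‖ ≤ μc k))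
    -- leading blocks and clusters: indices of running maxima of the characters
    (ι : Fin (J + 1) → Fin (K + 1)) (hι : StrictMono ι)
    (cl : Fin (K + 1) → Fin (J + 1))
    (hcl1 : ∀ k, ι (cl k) ≤ k) (hcl2 : ∀ k j, ι j ≤ k → j ≤ cl k)
    (hmono : Monotone fun j => μc (ι j))
    (hrun : ∀ k, ι (cl k) ≠ k → μc k < μc (ι (cl k)))
    -- increasing order, condition (1): non-leading zero diagonal blocks are scalar
    (hinc1 : ∀ k, ι (cl k) ≠ k → (∀ i j, b i = k → b j = k → R i j = 0) →
      (univ.filter fun i => b i = k).card = 1)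
    -- increasing order, condition (2)
    (hinc2 : ∀ k, ι (cl k) ≠ k →
      ∃ i j, ι (cl k) ≤ b i ∧ b i < k ∧ b j = k ∧ R i j ≠ 0)
    -- increasing order, condition (3)
    (hinc3 : ∀ j : Fin (J + 1), μc (ι j) = 0 →
      0 < ((univ.filter fun j' : Fin (J + 1) =>
        j' < j ∧ μc (ι j') = μc (ι j)).card) →
      ∀ i', b i' = ι j → ∃ m : Fin (K + 1), (m : ℕ) + 1 = (ι j : ℕ) ∧
        ∃ i, b i = m ∧ 0 < R i i')
    -- assumption (A)
    (hA : ∀ j : Fin (J + 1), 0 < μc (ι j) →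
      0 < ((univ.filter fun j' : Fin (J + 1) =>
        j' < j ∧ μc (ι j') = μc (ι j)).card) →
      ∃ jp : Fin (J + 1), (jp : ℕ) + 1 = (j : ℕ) ∧
        ∃ i i', ι jp ≤ b i ∧ b i < ι j ∧ b i' = ι j ∧ R i i' ≠ 0) :
    μc (Fin.last K) = 1 ∧
      (∀ k : Fin (K + 1), μc k = 1 → k = Fin.last K) ∧
      ι (Fin.last J) = Fin.last K := by
  classical
  -- sum over the subtype equals sum over the filtered finset
  have hsum_sub : ∀ (k : Fin (K+1)) (p : Fin D),
      ∑ q : {i // b i = k}, R p q.1 = ∑ j ∈ univ.filter (fun j => b j = k), R p j := by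
    intro k p
    exact (Finset.sum_subtype (univ.filter (fun j => b j = k))
      (fun x => by simp) (fun j => R p j)).symm
  have hfilter_le : ∀ (k : Fin (K+1)) (p : Fin D),
      ∑ j ∈ univ.filter (fun j => b j = k), R p j ≤ 1 := by
    intro k p
    rw [← hRrow p]
    exact Finset.sum_le_sum_of_subset_of_nonneg (filter_subset _ _) (fun j _ _ => hRpos p j)
  have hbrow : ∀ (k : Fin (K+1)) (p : {i // b i = k}),
      ∑ q : {i // b i = k}, R p.1 q.1 ≤ 1 := by
    intro k p
    rw [hsum_sub k p.1]
    exact hfilter_le k p.1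
  -- all characters are at most 1
  have hle : ∀ k, μc k ≤ 1 := by
    intro k
    rcases hchar k with ⟨-, h0⟩ | ⟨-, hmem, -⟩
    · rw [h0]; norm_num
    · have habs := pf_spectrum_abs_le_one
        (Matrix.of fun p q : {i // b i = k} => R p.1 q.1)
        (fun p q => hRpos p.1 q.1) (hbrow k) _ hmem
      calc μc k ≤ |μc k| := le_abs_self _
      _ = ‖((μc k : ℝ) : ℂ)‖ := by rw [Complex.norm_real, Real.norm_eq_abs]
      _ ≤ 1 := habs
  obtain ⟨i₀, hi₀⟩ := hbsurj (Fin.last K)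
  have hlastzero : ∀ i j, b i = Fin.last K → b j ≠ Fin.last K → R i j = 0 :=
    fun i j hi hj => hRblock i j (by rw [hi]; exact lt_of_le_of_ne (Fin.le_last _) hj)
  have hlast_insum : ∀ i, b i = Fin.last K →
      ∑ j ∈ univ.filter (fun j => b j = Fin.last K), R i j = 1 := by
    intro i hi
    have h2 : ∑ j ∈ univ.filter (fun j => ¬ b j = Fin.last K), R i j = 0 :=
      Finset.sum_eq_zero fun j hj => hlastzero i j hi (mem_filter.1 hj).2
    have h3 := Finset.sum_filter_add_sum_filter_not univ
      (fun j => b j = Fin.last K) (fun j => R i j)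
    rw [hRrow i] at h3
    linarith
  -- the final block has character 1
  have hμlast : μc (Fin.last K) = 1 := by
    rcases hchar (Fin.last K) with ⟨hz, -⟩ | ⟨hirrL, hmemL, hmaxL⟩
    · exfalso
      have h1 := hlast_insum i₀ hi₀
      rw [Finset.sum_eq_zero (fun j hj => hz i₀ j hi₀ (mem_filter.1 hj).2)] at h1
      norm_num at h1
    · refine le_antisymm (hle _) ?_
      have hone : (1:ℂ) ∈ spectrum ℂ
          ((Matrix.of fun p q : {i // b i = Fin.last K} => R p.1 q.1).map
            (Complex.ofReal ·)) := by
        rw [spectrum.mem_iff]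
        intro hunit
        rw [Matrix.isUnit_iff_isUnit_det, isUnit_iff_ne_zero] at hunit
        apply hunit
        rw [← Matrix.exists_mulVec_eq_zero_iff]
        refine ⟨fun _ => 1, ?_, ?_⟩
        · intro hcontra
          exact one_ne_zero (congrFun hcontra ⟨i₀, hi₀⟩)
        · funext p
          have hrow : ∑ q : {i // b i = Fin.last K}, R p.1 q.1 = 1 := by
            rw [hsum_sub]
            exact hlast_insum p.1 p.2
          have hmv : (((Matrix.of fun p q : {i // b i = Fin.last K} => R p.1 q.1).map
              (Complex.ofReal ·)) *ᵥ fun _ => 1) p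
              = ∑ q : {i // b i = Fin.last K}, ((R p.1 q.1 : ℝ) : ℂ) := by
            simp [Matrix.mulVec, dotProduct, Matrix.map_apply]
          have hcast : ∑ q : {i // b i = Fin.last K}, ((R p.1 q.1 : ℝ) : ℂ) = 1 := by
            rw [← Complex.ofReal_sum, hrow, Complex.ofReal_one]
          simp only [Matrix.sub_mulVec, Algebra.algebraMap_eq_smul_one,
            Matrix.smul_mulVec, Matrix.one_mulVec, Pi.sub_apply, Pi.smul_apply,
            smul_eq_mul, mul_one, Pi.zero_apply]
          rw [hmv, hcast]
          ring
      have h1 := hmaxL 1 hone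
      simpa using h1
  -- the last leading block is the last block
  have hιlast : ι (Fin.last J) = Fin.last K := by
    have h1 : ι (cl (Fin.last K)) = Fin.last K := by
      by_contra hne
      have h2 := hrun _ hne
      rw [hμlast] at h2
      exact absurd (hle _) (not_le.2 h2)
    have h2 : cl (Fin.last K) = Fin.last J :=
      le_antisymm (Fin.le_last _) (hcl2 _ _ (Fin.le_last _))
    rw [← h2, h1]
  -- a block with character 1 is closed
  have hclosed : ∀ k : Fin (K+1), μc k = 1 → ∀ i j, b i = k → b j ≠ k → R i j = 0 := by
    intro k hk i j hbi hbj
    rcases hchar k with ⟨-, h0⟩ | ⟨hirr, hmem, -⟩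
    · rw [h0] at hk; norm_num at hk
    · rw [hk, Complex.ofReal_one] at hmem
      have hirr' : ∀ x y : {i // b i = k}, ∃ m : ℕ, 0 < m ∧
          0 < ((Matrix.of fun p q : {i // b i = k} => R p.1 q.1) ^ m) x y := by
        intro x y
        obtain ⟨n, hn, hpos⟩ := hirr x y
        have hpos' : 0 < (R x.1 y.1) ^ n := hpos
        have hR : 0 < R x.1 y.1 := by
          rcases lt_or_eq_of_le (hRpos x.1 y.1) with h | h
          · exact h
          · exfalso
            rw [← h, zero_pow hn.ne'] at hpos'
            exact lt_irrefl 0 hpos'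
        exact ⟨1, one_pos, by rw [pow_one]; exact hR⟩
      have hrows := pf_rowsum_eq_one (Matrix.of fun p q : {i // b i = k} => R p.1 q.1)
        (fun p q => hRpos p.1 q.1) (hbrow k) hirr' hmem
      have hfull : ∑ q ∈ univ.filter (fun q => b q = k), R i q = 1 := by
        have h5 := hrows ⟨i, hbi⟩
        rw [show (∑ q : {i // b i = k},
          (Matrix.of fun p q : {i // b i = k} => R p.1 q.1) ⟨i, hbi⟩ q)
          = ∑ q : {i // b i = k}, R i q.1 from rfl] at h5
        rw [hsum_sub k i] at h5
        exact h5
      have h3 := Finset.sum_filter_add_sum_filter_not univ (fun q => b q = k)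
        (fun q => R i q)
      rw [hRrow i, hfull] at h3
      have hzero : ∑ q ∈ univ.filter (fun q => ¬ b q = k), R i q = 0 := by linarith
      exact (Finset.sum_eq_zero_iff_of_nonneg (fun q _ => hRpos i q)).1 hzero j
        (by simp [hbj])
  -- uniqueness
  have huniq : ∀ k : Fin (K+1), μc k = 1 → k = Fin.last K := by
    intro k hk
    by_contra hkne
    by_cases hlead : ι (cl k) = k
    · set j := cl k with hjdef
      have hjne : j ≠ Fin.last J := fun h => hkne (by rw [← hlead, h, hιlast])
      have hjlt : (j:ℕ) < J := by
        have h5 := lt_of_le_of_ne (Fin.le_last j) hjne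
        simpa [Fin.lt_def] using h5
      set j1 : Fin (J+1) := ⟨(j:ℕ)+1, by omega⟩ with hj1def
      have hjj1 : j < j1 := by
        rw [Fin.lt_def]
        simp [hj1def]
      have hμj1 : μc (ι j1) = 1 := by
        have h1 : μc (ι j) ≤ μc (ι j1) := hmono (le_of_lt hjj1)
        have h2 : μc (ι j1) ≤ μc (ι (Fin.last J)) := hmono (Fin.le_last _)
        rw [hιlast, hμlast] at h2
        rw [hlead, hk] at h1
        linarith
      have hcard : 0 < (univ.filter fun j' : Fin (J+1) =>
          j' < j1 ∧ μc (ι j') = μc (ι j1)).card := by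
        refine Finset.card_pos.2 ⟨j, ?_⟩
        simp only [mem_filter, mem_univ, true_and]
        exact ⟨hjj1, by rw [hlead, hk, hμj1]⟩
      obtain ⟨jp, hjp1, i, i', hii1, hii2, hii3, hii4⟩ :=
        hA j1 (by rw [hμj1]; norm_num) hcard
      have hjp : jp = j := by
        have h5 : (j1:ℕ) = (j:ℕ) + 1 := rfl
        apply Fin.ext
        omega
      rw [hjp, hlead] at hii1
      have hkj1 : k < ι j1 := by rw [← hlead]; exact hι hjj1
      rcases eq_or_lt_of_le hii1 with heq | hlt
      · exact hii4 (hclosed k hk i i' heq.symm (by rw [hii3]; exact hkj1.ne'))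
      · set T := univ.filter (fun m : Fin (K+1) => k < m ∧ m < ι j1) with hT
        have hTne : T.Nonempty := ⟨b i, mem_filter.2 ⟨mem_univ _, hlt, hii2⟩⟩
        set m₀ := T.min' hTne with hm0
        have hm0mem := T.min'_mem hTne
        simp only [hT, mem_filter, mem_univ, true_and] at hm0mem
        obtain ⟨hm01, hm02⟩ := hm0mem
        have hclm : ι (cl m₀) = k := by
          have ha : j ≤ cl m₀ := hcl2 m₀ j (by rw [hlead]; exact le_of_lt hm01)
          have hb2 : cl m₀ < j1 := by
            have h4 : ι (cl m₀) < ι j1 := lt_of_le_of_lt (hcl1 m₀) hm02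
            exact hι.lt_iff_lt.1 h4
          have hc : cl m₀ ≤ j := by
            rw [Fin.lt_def] at hb2
            rw [Fin.le_def]
            have h5 : (j1:ℕ) = (j:ℕ) + 1 := rfl
            omega
          rw [le_antisymm hc ha, hlead]
        have hm0ne : ι (cl m₀) ≠ m₀ := by rw [hclm]; exact hm01.ne
        obtain ⟨i₂, j₂, h21, h22, h23, h24⟩ := hinc2 m₀ hm0ne
        rw [hclm] at h21
        rcases eq_or_lt_of_le h21 with he2 | hl2
        · exact h24 (hclosed k hk i₂ j₂ he2.symm (by rw [h23]; exact hm01.ne'))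
        · have hmemT : b i₂ ∈ T := by
            simp only [hT, mem_filter, mem_univ, true_and]
            exact ⟨hl2, lt_trans h22 hm02⟩
          exact absurd h22 (not_lt.2 (T.min'_le _ hmemT))
    · have h2 := hrun k hlead
      rw [hk] at h2
      exact absurd (hle _) (not_le.2 h2)
  exact ⟨hμlast, huniq, hιlast⟩
end
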